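/- arXiv:1304.5044 — 7 statements merged into one kernel-verified Lean document; each statement's English description precedes it below -/
import Mathlib

section
/- The sequence of coefficients $p_0(\ell,m), p_1(\ell,m), \dots, p_{\ell m}(\ell,m)$ of the Gaussian binomial coefficient $\binom{m+\ell}{m}_q$ is unimodal: there exists $k$ such that $p_0 \le p_1 \le \dots \le p_k \ge p_{k+1} \ge \dots \ge p_{\ell m}$. -/
/-- `pCount ℓ m n` is the number of partitions of `n` fitting inside an `ℓ × m` rectangle,
i.e. the coefficient of `q^n` in the Gaussian binomial coefficient `(m+ℓ choose m)_q`. -/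
def pCount (ℓ m n : ℕ) : ℕ :=
  Fintype.card {p : n.Partition // p.parts.card ≤ ℓ ∧ ∀ i ∈ p.parts, i ≤ m}

open Finset

namespace Sylvester

/-- The set of `L`-element subsets of `{0, …, N-1}` with element sum `n`. -/
def lvl (N L n : ℕ) : Finset (Finset ℕ) :=
  ((range N).powerset).filter (fun s => s.card = L ∧ s.sum id = n)

lemma mem_lvl {N L n : ℕ} {s : Finset ℕ} :
    s ∈ lvl N L n ↔ s ⊆ range N ∧ s.card = L ∧ s.sum id = n := by
  simp [lvl]

/-- `T L = 0 + 1 + ⋯ + (L-1)`, the minimum possible sum of `L` distinct naturals. -/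
def T (L : ℕ) : ℕ := ∑ i ∈ range L, i

lemma two_T (L : ℕ) : 2 * T L = L * (L - 1) := by
  rw [T, mul_comm]
  exact Finset.sum_range_id_mul_two L

lemma T_succ (L : ℕ) : T (L + 1) = T L + L := Finset.sum_range_succ _ _

/-- any `Finset ℕ` has sum at least `T card`. -/
lemma T_card_le_sum (s : Finset ℕ) : T s.card ≤ s.sum id := by
  classical
  induction s using Finset.strongInduction with
  | _ s ih =>
    rcases s.eq_empty_or_nonempty with rfl | hne
    · simp [T]
    · obtain ⟨M, hM, hMmax⟩ := s.exists_max_image id hne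
      have hcard : s.card ≤ M + 1 := by
        have : s ⊆ range (M + 1) := fun a ha => by
          simp only [mem_range]; exact Nat.lt_succ_of_le (hMmax a ha)
        simpa using Finset.card_le_card this
      have h1 : T (s.card - 1) ≤ (s.erase M).sum id := by
        have := ih (s.erase M) (Finset.erase_ssubset hM)
        rwa [Finset.card_erase_of_mem hM] at this
      have h2 : s.sum id = M + (s.erase M).sum id := (Finset.add_sum_erase s id hM).symm
      have h3 : T s.card ≤ (s.card - 1) + T (s.card - 1) := by
        have hc : 0 < s.card := Finset.card_pos.mpr hne
        have : T s.card = T (s.card - 1) + (s.card - 1) := by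
          conv_lhs => rw [show s.card = (s.card - 1) + 1 by omega]
          exact T_succ _
        omega
      have : s.card - 1 ≤ M := by omega
      omega


def flip (i : ℕ) (s : Finset ℕ) : Finset ℕ := insert (i+1) (s.erase i)
def unflip (i : ℕ) (s : Finset ℕ) : Finset ℕ := insert i (s.erase (i+1))

/-- `up i s t` : `t` is obtained from `s` by moving element `i` up to `i+1`. -/
def up (i : ℕ) (s t : Finset ℕ) : Prop := i ∈ s ∧ (i+1) ∉ s ∧ t = flip i s

instance (i : ℕ) (s t : Finset ℕ) : Decidable (up i s t) := by unfold up; infer_instance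

lemma up_iff {i : ℕ} {s t : Finset ℕ} :
    up i s t ↔ (i+1) ∈ t ∧ i ∉ t ∧ s = unflip i t := by
  constructor
  · rintro ⟨h1, h2, rfl⟩
    refine ⟨by simp [flip], by simp [flip], ?_⟩
    rw [flip, unflip, Finset.erase_insert (by simp [h2]), Finset.insert_erase h1]
  · rintro ⟨h1, h2, rfl⟩
    refine ⟨by simp [unflip], by simp [unflip], ?_⟩
    rw [flip, unflip, Finset.erase_insert (by simp [h2]), Finset.insert_erase h1]

lemma up_card {i : ℕ} {s t : Finset ℕ} (h : up i s t) : t.card = s.card := by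
  obtain ⟨h1, h2, rfl⟩ := h
  rw [flip, Finset.card_insert_of_notMem (by simp [h2]), Finset.card_erase_of_mem h1]
  have : 0 < s.card := Finset.card_pos.mpr ⟨i, h1⟩
  omega

lemma up_sum {i : ℕ} {s t : Finset ℕ} (h : up i s t) : t.sum id = s.sum id + 1 := by
  obtain ⟨h1, h2, rfl⟩ := h
  rw [flip, Finset.sum_insert (by simp [h2])]
  have := Finset.add_sum_erase s id h1
  simp only [id] at *
  omega

lemma up_subset {N i : ℕ} {s t : Finset ℕ} (hs : s ⊆ range N) (hi : i + 1 < N)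
    (h : up i s t) : t ⊆ range N := by
  obtain ⟨h1, h2, rfl⟩ := h
  intro a ha
  rw [flip, Finset.mem_insert] at ha
  rcases ha with rfl | ha
  · simpa using hi
  · exact hs (Finset.mem_of_mem_erase ha)

lemma down_subset {N i : ℕ} {s r : Finset ℕ} (hs : s ⊆ range N)
    (h : up i r s) : r ⊆ range N := by
  rw [up_iff] at h
  obtain ⟨h1, h2, rfl⟩ := h
  intro a ha
  rw [unflip, Finset.mem_insert] at ha
  rcases ha with rfl | ha
  · have := hs h1; simp only [mem_range] at *; omega
  · exact hs (Finset.mem_of_mem_erase ha)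

/-- Off-diagonal matching: a common upper cover of `s ≠ s'` corresponds to a
common lower cover. -/
lemma offdiag {i j : ℕ} {s s' : Finset ℕ} (hne : s ≠ s') :
    (i ∈ s ∧ i+1 ∉ s ∧ j ∈ s' ∧ j+1 ∉ s' ∧ flip i s = flip j s') ↔
    (j+1 ∈ s ∧ j ∉ s ∧ i+1 ∈ s' ∧ i ∉ s' ∧ unflip j s = unflip i s') := by
  constructor
  · rintro ⟨hi, hi', hj, hj', hE⟩
    have e1 : s = unflip i (flip i s) := by
      rw [flip, unflip, Finset.erase_insert (by simp [hi']), Finset.insert_erase hi]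
    have e2 : s' = unflip j (flip i s) := by
      rw [hE, flip, unflip, Finset.erase_insert (by simp [hj']), Finset.insert_erase hj]
    have hij : i ≠ j := by
      rintro rfl
      exact hne (by rw [e1, e2])
    set t := flip i s with ht
    have hit : i + 1 ∈ t := by rw [ht, flip]; simp
    have hit' : i ∉ t := by rw [ht, flip]; simp
    have hjt : j + 1 ∈ t := by rw [hE, flip]; simp
    have hjt' : j ∉ t := by rw [hE, flip]; simp
    rw [e1, e2]
    refine ⟨?_, ?_, ?_, ?_, ?_⟩
    · simp only [unflip, Finset.mem_insert, Finset.mem_erase]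
      exact Or.inr ⟨by omega, hjt⟩
    · simp only [unflip, Finset.mem_insert, Finset.mem_erase]
      push_neg
      exact ⟨hij.symm, fun _ => hjt'⟩
    · simp only [unflip, Finset.mem_insert, Finset.mem_erase]
      exact Or.inr ⟨by omega, hit⟩
    · simp only [unflip, Finset.mem_insert, Finset.mem_erase]
      push_neg
      exact ⟨hij, fun _ => hit'⟩
    · ext a
      simp only [unflip, Finset.mem_insert, Finset.mem_erase]
      constructor
      · rintro (rfl | ⟨ha1, (rfl | ⟨ha2, hat⟩)⟩)
        · exact Or.inr ⟨fun h => hjt' (by rw [h]; exact hit), Or.inl rfl⟩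
        · exact Or.inl rfl
        · exact Or.inr ⟨ha2, Or.inr ⟨ha1, hat⟩⟩
      · rintro (rfl | ⟨ha1, (rfl | ⟨ha2, hat⟩)⟩)
        · exact Or.inr ⟨fun h => hit' (by rw [h]; exact hjt), Or.inl rfl⟩
        · exact Or.inl rfl
        · exact Or.inr ⟨ha2, Or.inr ⟨ha1, hat⟩⟩
  · rintro ⟨hi, hi', hj, hj', hE⟩
    -- here hi : j+1 ∈ s, hi' : j ∉ s, hj : i+1 ∈ s', hj' : i ∉ s', hE : unflip j s = unflip i s'
    have e1 : s = flip j (unflip j s) := by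
      rw [unflip, flip, Finset.erase_insert (by simp [hi']), Finset.insert_erase hi]
    have e2 : s' = flip i (unflip j s) := by
      rw [hE, unflip, flip, Finset.erase_insert (by simp [hj']), Finset.insert_erase hj]
    have hij : i ≠ j := by
      rintro rfl
      exact hne (by rw [e1, e2])
    set r := unflip j s with hr
    have hjr : j ∈ r := by rw [hr, unflip]; simp
    have hjr' : j + 1 ∉ r := by rw [hr, unflip]; simp
    have hir : i ∈ r := by rw [hE, unflip]; simp
    have hir' : i + 1 ∉ r := by rw [hE, unflip]; simp
    rw [e1, e2]
    refine ⟨?_, ?_, ?_, ?_, ?_⟩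
    · simp only [flip, Finset.mem_insert, Finset.mem_erase]
      exact Or.inr ⟨hij, hir⟩
    · simp only [flip, Finset.mem_insert, Finset.mem_erase]
      push_neg
      exact ⟨by omega, fun _ => hir'⟩
    · simp only [flip, Finset.mem_insert, Finset.mem_erase]
      exact Or.inr ⟨hij.symm, hjr⟩
    · simp only [flip, Finset.mem_insert, Finset.mem_erase]
      push_neg
      exact ⟨by omega, fun _ => hjr'⟩
    · ext a
      simp only [flip, Finset.mem_insert, Finset.mem_erase]
      constructor
      · rintro (rfl | ⟨ha1, (rfl | ⟨ha2, hat⟩)⟩)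
        · exact Or.inr ⟨fun h => hir' (by rw [h]; exact hjr), Or.inl rfl⟩
        · exact Or.inl rfl
        · exact Or.inr ⟨ha2, Or.inr ⟨ha1, hat⟩⟩
      · rintro (rfl | ⟨ha1, (rfl | ⟨ha2, hat⟩)⟩)
        · exact Or.inr ⟨fun h => hjr' (by rw [h]; exact hir), Or.inl rfl⟩
        · exact Or.inl rfl
        · exact Or.inr ⟨ha2, Or.inr ⟨ha1, hat⟩⟩
lemma flip_diag_inj {i j : ℕ} {s : Finset ℕ} (hi' : i + 1 ∉ s)
    (hE : flip i s = flip j s) : i = j := by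
  have : i + 1 ∈ flip j s := by rw [← hE, flip]; simp
  rw [flip, Finset.mem_insert, Finset.mem_erase] at this
  rcases this with h | h
  · omega
  · exact absurd h.2 hi'

lemma unflip_diag_inj {i j : ℕ} {s : Finset ℕ} (hi : i ∉ s)
    (hE : unflip i s = unflip j s) : i = j := by
  have : i ∈ unflip j s := by rw [← hE, unflip]; simp
  rw [unflip, Finset.mem_insert, Finset.mem_erase] at this
  rcases this with h | h
  · exact h
  · exact absurd h.2 hi

noncomputable def w (N i : ℕ) : ℝ := Real.sqrt ((i+1) * ((N:ℝ) - 1 - i))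

lemma w_sq {N i : ℕ} (h : i + 1 < N) : w N i * w N i = ((i:ℝ)+1) * ((N:ℝ) - 1 - i) := by
  apply Real.mul_self_sqrt
  have : (i:ℝ) + 1 ≤ (N:ℝ) - 1 := by
    have : (i:ℝ) + 2 ≤ N := by exact_mod_cast h
    linarith
  nlinarith [this]

noncomputable def A (N : ℕ) (s t : Finset ℕ) : ℝ :=
  ∑ i ∈ range (N-1), if up i s t then w N i else 0

lemma sum_A_upper {N : ℕ} {s s' : Finset ℕ} (hs : s ⊆ range N) :
    ∑ t ∈ (range N).powerset, A N s t * A N s' t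
      = ∑ i ∈ range (N-1), ∑ j ∈ range (N-1),
          (if i ∈ s ∧ i+1 ∉ s ∧ j ∈ s' ∧ j+1 ∉ s' ∧ flip i s = flip j s'
           then w N i * w N j else 0) := by
  unfold A
  have step1 : ∀ t, (∑ i ∈ range (N-1), if up i s t then w N i else 0) *
      (∑ j ∈ range (N-1), if up j s' t then w N j else 0)
      = ∑ i ∈ range (N-1), ∑ j ∈ range (N-1),
          (if up i s t then w N i else 0) * (if up j s' t then w N j else 0) := by
    intro t
    rw [Finset.sum_mul_sum]
  simp_rw [step1]
  rw [Finset.sum_comm]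
  refine Finset.sum_congr rfl fun i hi => ?_
  rw [Finset.sum_comm]
  refine Finset.sum_congr rfl fun j hj => ?_
  simp only [mem_range] at hi hj
  by_cases hc : i ∈ s ∧ i+1 ∉ s ∧ j ∈ s' ∧ j+1 ∉ s' ∧ flip i s = flip j s'
  · rw [if_pos hc]
    obtain ⟨h1, h2, h3, h4, h5⟩ := hc
    have hups : up i s (flip i s) := ⟨h1, h2, rfl⟩
    have hups' : up j s' (flip i s) := ⟨h3, h4, h5⟩
    rw [Finset.sum_eq_single_of_mem (flip i s)
      (by rw [Finset.mem_powerset]; exact up_subset hs (by omega) hups)]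
    · rw [if_pos hups, if_pos hups']
    · intro t ht hne
      by_cases hu : up i s t
      · exact absurd hu.2.2 (by exact fun h => hne (h ▸ rfl))
      · rw [if_neg hu, zero_mul]
  · rw [if_neg hc]
    apply Finset.sum_eq_zero
    intro t ht
    by_cases h1 : up i s t
    · by_cases h2 : up j s' t
      · exact absurd ⟨h1.1, h1.2.1, h2.1, h2.2.1, by rw [← h1.2.2, h2.2.2]⟩ hc
      · rw [if_neg h2, mul_zero]
    · rw [if_neg h1, zero_mul]

lemma sum_A_lower {N : ℕ} {s s' : Finset ℕ} (hs : s ⊆ range N) :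
    ∑ r ∈ (range N).powerset, A N r s * A N r s'
      = ∑ i ∈ range (N-1), ∑ j ∈ range (N-1),
          (if i+1 ∈ s ∧ i ∉ s ∧ j+1 ∈ s' ∧ j ∉ s' ∧ unflip i s = unflip j s'
           then w N i * w N j else 0) := by
  unfold A
  have step1 : ∀ r : Finset ℕ, (∑ i ∈ range (N-1), if up i r s then w N i else 0) *
      (∑ j ∈ range (N-1), if up j r s' then w N j else 0)
      = ∑ i ∈ range (N-1), ∑ j ∈ range (N-1),
          (if up i r s then w N i else 0) * (if up j r s' then w N j else 0) := by
    intro r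
    rw [Finset.sum_mul_sum]
  simp_rw [step1]
  rw [Finset.sum_comm]
  refine Finset.sum_congr rfl fun i hi => ?_
  rw [Finset.sum_comm]
  refine Finset.sum_congr rfl fun j hj => ?_
  simp only [mem_range] at hi hj
  by_cases hc : i+1 ∈ s ∧ i ∉ s ∧ j+1 ∈ s' ∧ j ∉ s' ∧ unflip i s = unflip j s'
  · rw [if_pos hc]
    obtain ⟨h1, h2, h3, h4, h5⟩ := hc
    have hups : up i (unflip i s) s := up_iff.mpr ⟨h1, h2, rfl⟩
    have hups' : up j (unflip i s) s' := up_iff.mpr ⟨h3, h4, h5⟩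
    rw [Finset.sum_eq_single_of_mem (unflip i s)
      (by rw [Finset.mem_powerset]; exact down_subset hs hups)]
    · rw [if_pos hups, if_pos hups']
    · intro r hr hne
      by_cases hu : up i r s
      · rw [up_iff] at hu
        exact absurd hu.2.2.symm (by exact fun h => hne (h ▸ rfl))
      · rw [if_neg hu, zero_mul]
  · rw [if_neg hc]
    apply Finset.sum_eq_zero
    intro r hr
    by_cases h1 : up i r s
    · by_cases h2 : up j r s'
      · rw [up_iff] at h1 h2
        exact absurd ⟨h1.1, h1.2.1, h2.1, h2.2.1, by rw [← h1.2.2, h2.2.2]⟩ hc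
      · rw [if_neg h2, mul_zero]
    · rw [if_neg h1, zero_mul]


lemma telescope {N : ℕ} {s : Finset ℕ} (hs : s ⊆ range N) :
    (∑ i ∈ range (N-1), if i ∈ s ∧ i+1 ∉ s then ((i:ℝ)+1)*((N:ℝ)-1-i) else 0)
      - (∑ i ∈ range (N-1), if i+1 ∈ s ∧ i ∉ s then ((i:ℝ)+1)*((N:ℝ)-1-i) else 0)
    = ∑ a ∈ s, ((N:ℝ) - 1 - 2*(a:ℝ)) := by
  rcases Nat.eq_zero_or_pos N with rfl | hN
  · have : s = ∅ := Finset.subset_empty.mp (by simpa using hs)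
    subst this; simp
  set c : ℕ → ℝ := fun i => ((i:ℝ)+1)*((N:ℝ)-1-i) with hc
  set g : ℕ → ℝ := fun a => if a = 0 then (0:ℝ) else (a:ℝ)*((N:ℝ)-a) with hg
  have stepA : (∑ i ∈ range (N-1), if i ∈ s ∧ i+1 ∉ s then c i else 0)
      - (∑ i ∈ range (N-1), if i+1 ∈ s ∧ i ∉ s then c i else 0)
      = (∑ i ∈ range (N-1), if i ∈ s then c i else 0)
        - (∑ i ∈ range (N-1), if i+1 ∈ s then c i else 0) := by
    rw [← Finset.sum_sub_distrib, ← Finset.sum_sub_distrib]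
    refine Finset.sum_congr rfl fun i _ => ?_
    by_cases h1 : i ∈ s <;> by_cases h2 : i + 1 ∈ s <;> simp [h1, h2]
  have stepB : (∑ i ∈ range (N-1), if i ∈ s then c i else 0) = ∑ a ∈ s, c a := by
    have h1 : (∑ i ∈ range N, if i ∈ s then c i else 0)
        = (∑ i ∈ range (N-1), if i ∈ s then c i else 0)
          + (if N - 1 ∈ s then c (N-1) else 0) := by
      conv_lhs => rw [show N = (N-1) + 1 by omega]
      exact Finset.sum_range_succ _ _
    have h2 : c (N-1) = 0 := by
      have : ((N-1 : ℕ) : ℝ) = (N:ℝ) - 1 := by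
        push_cast [Nat.cast_sub hN]; ring
      simp only [hc, this]; ring
    have h3 : (∑ i ∈ range N, if i ∈ s then c i else 0) = ∑ a ∈ s, c a := by
      rw [Finset.sum_ite_mem, Finset.inter_eq_right.mpr hs]
    rw [h2] at h1; simp only [ite_self] at h1
    rw [← h3, h1, add_zero]
  have stepC : (∑ i ∈ range (N-1), if i + 1 ∈ s then c i else 0) = ∑ a ∈ s, g a := by
    have hcg : ∀ i : ℕ, (if i + 1 ∈ s then c i else 0)
        = (if i + 1 ∈ s then g (i+1) else 0) := by
      intro i
      have : g (i+1) = c i := by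
        simp only [hg, hc]
        rw [if_neg (Nat.succ_ne_zero i)]
        push_cast
        ring
      rw [this]
    simp_rw [hcg]
    have h0 : (∑ i ∈ range N, if i ∈ s then g i else 0)
        = (∑ i ∈ range (N-1), if i + 1 ∈ s then g (i+1) else 0)
          + (if 0 ∈ s then g 0 else 0) := by
      conv_lhs => rw [show N = (N-1) + 1 by omega]
      exact Finset.sum_range_succ' _ _
    have hg0 : g 0 = 0 := by simp [hg]
    have h3 : (∑ i ∈ range N, if i ∈ s then g i else 0) = ∑ a ∈ s, g a := by
      rw [Finset.sum_ite_mem, Finset.inter_eq_right.mpr hs]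
    rw [hg0] at h0; simp only [ite_self] at h0
    rw [← h3, h0, add_zero]
  calc (∑ i ∈ range (N-1), if i ∈ s ∧ i+1 ∉ s then c i else 0)
      - (∑ i ∈ range (N-1), if i+1 ∈ s ∧ i ∉ s then c i else 0)
      = (∑ a ∈ s, c a) - (∑ a ∈ s, g a) := by rw [stepA, stepB, stepC]
    _ = ∑ a ∈ s, ((N:ℝ) - 1 - 2*(a:ℝ)) := by
        rw [← Finset.sum_sub_distrib]
        refine Finset.sum_congr rfl fun a ha => ?_
        have haN : a < N := by simpa using hs ha
        rcases Nat.eq_zero_or_pos a with rfl | hapos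
        · simp [hc, hg]
        · have : g a = (a:ℝ)*((N:ℝ)-a) := by simp [hg, Nat.pos_iff_ne_zero.mp hapos]
          rw [this, hc]; ring

/-- The key commutator identity `DU - UD = (ℓ(N-1) - 2n)·id` in matrix-entry form. -/
lemma key {N : ℕ} {s s' : Finset ℕ} (hs : s ⊆ range N) (hs' : s' ⊆ range N) :
    (∑ t ∈ (range N).powerset, A N s t * A N s' t)
      - (∑ r ∈ (range N).powerset, A N r s * A N r s')
    = if s = s' then (∑ a ∈ s, ((N:ℝ) - 1 - 2*(a:ℝ))) else 0 := by
  rw [sum_A_upper hs, sum_A_lower hs]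
  by_cases hss : s = s'
  · subst hss
    rw [if_pos rfl]
    have hu : ∀ i ∈ range (N-1),
        (∑ j ∈ range (N-1), if i ∈ s ∧ i+1 ∉ s ∧ j ∈ s ∧ j+1 ∉ s ∧ flip i s = flip j s
          then w N i * w N j else 0)
        = (if i ∈ s ∧ i+1 ∉ s then ((i:ℝ)+1)*((N:ℝ)-1-i) else 0) := by
      intro i hi
      rw [Finset.sum_eq_single_of_mem i hi]
      · by_cases hcond : i ∈ s ∧ i + 1 ∉ s
        · rw [if_pos ⟨hcond.1, hcond.2, hcond.1, hcond.2, rfl⟩, if_pos hcond,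
            w_sq (by have := mem_range.mp hi; omega)]
        · rw [if_neg (by tauto), if_neg hcond]
      · intro j _ hne
        rw [if_neg]
        rintro ⟨h1, h2, h3, h4, h5⟩
        exact hne (flip_diag_inj h2 h5).symm
    have hl : ∀ i ∈ range (N-1),
        (∑ j ∈ range (N-1), if i+1 ∈ s ∧ i ∉ s ∧ j+1 ∈ s ∧ j ∉ s ∧ unflip i s = unflip j s
          then w N i * w N j else 0)
        = (if i+1 ∈ s ∧ i ∉ s then ((i:ℝ)+1)*((N:ℝ)-1-i) else 0) := by
      intro i hi
      rw [Finset.sum_eq_single_of_mem i hi]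
      · by_cases hcond : i + 1 ∈ s ∧ i ∉ s
        · rw [if_pos ⟨hcond.1, hcond.2, hcond.1, hcond.2, rfl⟩, if_pos hcond,
            w_sq (by have := mem_range.mp hi; omega)]
        · rw [if_neg (by tauto), if_neg hcond]
      · intro j _ hne
        rw [if_neg]
        rintro ⟨h1, h2, h3, h4, h5⟩
        exact hne (unflip_diag_inj h2 h5).symm
    rw [Finset.sum_congr rfl hu, Finset.sum_congr rfl hl]
    exact telescope hs
  · rw [if_neg hss, sub_eq_zero]
    rw [Finset.sum_comm]
    refine Finset.sum_congr rfl fun i _ => Finset.sum_congr rfl fun j _ => ?_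
    rw [mul_comm (w N i) (w N j)]
    exact if_congr (offdiag hss) rfl rfl

lemma norm_identity {N : ℕ} (x : Finset ℕ → ℝ) :
    (∑ t ∈ (range N).powerset, (∑ s ∈ (range N).powerset, A N s t * x s)^2)
      - (∑ r ∈ (range N).powerset, (∑ t ∈ (range N).powerset, A N r t * x t)^2)
    = ∑ s ∈ (range N).powerset, (∑ a ∈ s, ((N:ℝ) - 1 - 2*(a:ℝ))) * (x s)^2 := by
  have hU : (∑ t ∈ (range N).powerset, (∑ s ∈ (range N).powerset, A N s t * x s)^2)
      = ∑ s ∈ (range N).powerset, ∑ s' ∈ (range N).powerset,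
          (x s * x s') * (∑ t ∈ (range N).powerset, A N s t * A N s' t) := by
    simp_rw [sq, Finset.sum_mul_sum]
    rw [Finset.sum_comm]
    refine Finset.sum_congr rfl fun s _ => ?_
    rw [Finset.sum_comm]
    refine Finset.sum_congr rfl fun s' _ => ?_
    rw [Finset.mul_sum]
    exact Finset.sum_congr rfl fun t _ => by ring
  have hD : (∑ r ∈ (range N).powerset, (∑ t ∈ (range N).powerset, A N r t * x t)^2)
      = ∑ s ∈ (range N).powerset, ∑ s' ∈ (range N).powerset,
          (x s * x s') * (∑ r ∈ (range N).powerset, A N r s * A N r s') := by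
    simp_rw [sq, Finset.sum_mul_sum]
    rw [Finset.sum_comm]
    refine Finset.sum_congr rfl fun s _ => ?_
    rw [Finset.sum_comm]
    refine Finset.sum_congr rfl fun s' _ => ?_
    rw [Finset.mul_sum]
    exact Finset.sum_congr rfl fun t _ => by ring
  rw [hU, hD, ← Finset.sum_sub_distrib]
  refine Finset.sum_congr rfl fun s hs => ?_
  rw [← Finset.sum_sub_distrib]
  have hstep : ∀ s' ∈ (range N).powerset,
      (x s * x s') * (∑ t ∈ (range N).powerset, A N s t * A N s' t)
        - (x s * x s') * (∑ r ∈ (range N).powerset, A N r s * A N r s')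
      = if s = s' then (∑ a ∈ s, ((N:ℝ) - 1 - 2*(a:ℝ))) * (x s)^2 else 0 := by
    intro s' hs'
    rw [← mul_sub, key (Finset.mem_powerset.mp hs) (Finset.mem_powerset.mp hs')]
    by_cases h : s = s'
    · subst h; rw [if_pos rfl, if_pos rfl]; ring
    · rw [if_neg h, if_neg h, mul_zero]
  rw [Finset.sum_congr rfl hstep, Finset.sum_ite_eq ((range N).powerset) s
    (fun _ => (∑ a ∈ s, ((N:ℝ) - 1 - 2*(a:ℝ))) * (x s)^2), if_pos hs]

lemma A_ne_zero {N : ℕ} {s t : Finset ℕ} (h : A N s t ≠ 0) :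
    ∃ i ∈ range (N-1), up i s t := by
  by_contra hc
  push_neg at hc
  exact h (Finset.sum_eq_zero fun i hi => if_neg (hc i hi))

lemma lvl_subset {N L n : ℕ} : lvl N L n ⊆ (range N).powerset := Finset.filter_subset _ _

lemma d_lvl {N L n : ℕ} {s : Finset ℕ} (h : s ∈ lvl N L n) :
    (∑ a ∈ s, ((N:ℝ) - 1 - 2*(a:ℝ))) = L*((N:ℝ)-1) - 2*n := by
  obtain ⟨hsub, hcard, hsum⟩ := mem_lvl.mp h
  rw [Finset.sum_sub_distrib, Finset.sum_const, hcard, nsmul_eq_mul]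
  have : ∑ a ∈ s, 2*(a:ℝ) = 2*((s.sum id : ℕ) : ℝ) := by
    rw [← Finset.mul_sum, Nat.cast_sum]
    rfl
  rw [this, hsum]

lemma card_lvl_le {N L n : ℕ} (hn : 2*n + 1 ≤ L * (N-1)) :
    (lvl N L n).card ≤ (lvl N L (n+1)).card := by
  classical
  have hN : 1 ≤ N := by
    by_contra h
    push_neg at h
    interval_cases N <;> simp at hn
  have hlin : IsLinearMap ℝ (fun (x : ↥(lvl N L n) → ℝ) =>
      (fun t : ↥(lvl N L (n+1)) => ∑ s ∈ (lvl N L n).attach, A N s.1 t.1 * x s)) := by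
    constructor
    · intro x y
      funext t
      simp [mul_add, Finset.sum_add_distrib]
    · intro c x
      funext t
      simp only [smul_eq_mul, Pi.smul_apply]
      rw [Finset.mul_sum]
      exact Finset.sum_congr rfl fun s _ => by ring
  set E := hlin.mk' _ with hEdef
  have hE : ∀ (x : ↥(lvl N L n) → ℝ) (t : ↥(lvl N L (n+1))),
      E x t = ∑ s ∈ (lvl N L n).attach, A N s.1 t.1 * x s := fun _ _ => rfl
  have hinj : Function.Injective E := by
    rw [injective_iff_map_eq_zero]
    intro x hx0
    set xt : Finset ℕ → ℝ := fun s => if h : s ∈ lvl N L n then x ⟨s, h⟩ else 0 with hxt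
    have hxt_zero : ∀ s, s ∉ lvl N L n → xt s = 0 := fun s h => dif_neg h
    have hU0 : ∀ t ∈ (range N).powerset, (∑ s ∈ (range N).powerset, A N s t * xt s) = 0 := by
      intro t ht
      have hre : (∑ s ∈ (range N).powerset, A N s t * xt s)
          = ∑ s ∈ lvl N L n, A N s t * xt s :=
        (Finset.sum_subset lvl_subset (fun s _ hns => by rw [hxt_zero s hns, mul_zero])).symm
      by_cases htl : t ∈ lvl N L (n+1)
      · rw [hre]
        have hconv : (∑ s ∈ lvl N L n, A N s t * xt s)
            = ∑ s ∈ (lvl N L n).attach, A N s.1 t * x s := by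
          rw [← Finset.sum_attach (lvl N L n) (fun s => A N s t * xt s)]
          refine Finset.sum_congr rfl fun s _ => ?_
          have : xt s.1 = x s := by rw [hxt]; simp [s.2]
          rw [this]
        rw [hconv]
        have := congrFun hx0 ⟨t, htl⟩
        simpa [hE] using this
      · rw [hre]
        apply Finset.sum_eq_zero
        intro s hsl
        by_cases hA : A N s t = 0
        · rw [hA, zero_mul]
        · obtain ⟨i, _, hup⟩ := A_ne_zero hA
          exfalso
          apply htl
          have hmem := mem_lvl.mp hsl
          exact mem_lvl.mpr ⟨Finset.mem_powerset.mp ht,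
            by rw [up_card hup]; exact hmem.2.1,
            by rw [up_sum hup, hmem.2.2]⟩
    have hni := norm_identity (N := N) xt
    have h1 : (∑ t ∈ (range N).powerset,
        (∑ s ∈ (range N).powerset, A N s t * xt s)^2) = 0 :=
      Finset.sum_eq_zero fun t ht => by rw [hU0 t ht]; simp
    rw [h1] at hni
    have h2 : (∑ s ∈ (range N).powerset, (∑ a ∈ s, ((N:ℝ) - 1 - 2*(a:ℝ))) * (xt s)^2) ≤ 0 := by
      rw [← hni]
      have : (0:ℝ) ≤ ∑ r ∈ (range N).powerset,
          (∑ t ∈ (range N).powerset, A N r t * xt t)^2 :=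
        Finset.sum_nonneg fun r _ => sq_nonneg _
      linarith
    have hdpos : ∀ s ∈ lvl N L n, (0:ℝ) < (∑ a ∈ s, ((N:ℝ) - 1 - 2*(a:ℝ))) := by
      intro s hs
      rw [d_lvl hs]
      have hcast : ((2*n+1 : ℕ) : ℝ) ≤ ((L * (N-1) : ℕ) : ℝ) := Nat.cast_le.mpr hn
      have hN1 : ((N-1 : ℕ) : ℝ) = (N:ℝ) - 1 := by
        push_cast [Nat.cast_sub hN]; ring
      push_cast at hcast
      rw [hN1] at hcast
      linarith
    have hnonneg : ∀ s ∈ (range N).powerset,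
        (0:ℝ) ≤ (∑ a ∈ s, ((N:ℝ) - 1 - 2*(a:ℝ))) * (xt s)^2 := by
      intro s _
      by_cases hsl : s ∈ lvl N L n
      · exact mul_nonneg (le_of_lt (hdpos s hsl)) (sq_nonneg _)
      · rw [hxt_zero s hsl]; simp
    have hall0 : ∀ s ∈ (range N).powerset,
        (∑ a ∈ s, ((N:ℝ) - 1 - 2*(a:ℝ))) * (xt s)^2 = 0 := by
      have h0 : (∑ s ∈ (range N).powerset, (∑ a ∈ s, ((N:ℝ) - 1 - 2*(a:ℝ))) * (xt s)^2) = 0 :=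
        le_antisymm h2 (Finset.sum_nonneg hnonneg)
      exact (Finset.sum_eq_zero_iff_of_nonneg hnonneg).mp h0
    funext s
    have hsl := s.2
    have := hall0 s.1 (lvl_subset hsl)
    have hxts : xt s.1 = x s := by rw [hxt]; simp [s.2]
    rcases mul_eq_zero.mp this with h | h
    · exact absurd h (ne_of_gt (hdpos s.1 hsl))
    · rw [← hxts]
      exact (pow_eq_zero_iff (by norm_num)).mp h
  have hrank := LinearMap.finrank_le_finrank_of_injective hinj
  rw [Module.finrank_fintype_fun_eq_card, Module.finrank_fintype_fun_eq_card,
    Fintype.card_coe, Fintype.card_coe] at hrank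
  exact hrank
lemma refl_sum {N L n : ℕ} {s : Finset ℕ} (h : s ∈ lvl N L n) :
    (s.image (fun a => N - 1 - a)).card = L ∧
    (s.image (fun a => N - 1 - a)).sum id = L * (N-1) - n ∧ n ≤ L * (N-1) ∧
    s.image (fun a => N - 1 - a) ∈ lvl N L (L*(N-1) - n) := by
  obtain ⟨hsub, hcard, hsum⟩ := mem_lvl.mp h
  have hle : ∀ a ∈ s, a ≤ N - 1 := by
    intro a ha
    have := hsub ha
    simp only [mem_range] at this
    omega
  have hinj : Set.InjOn (fun a => N - 1 - a) s := by
    intro a ha b hb hab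
    have := hle a ha; have := hle b hb
    simp only at hab
    omega
  have hcard' : (s.image (fun a => N - 1 - a)).card = L := by
    rw [Finset.card_image_of_injOn hinj, hcard]
  have hsum1 : (s.image (fun a => N - 1 - a)).sum id = ∑ a ∈ s, (N - 1 - a) :=
    Finset.sum_image fun a ha b hb => hinj ha hb
  have hsplit : (∑ a ∈ s, (N - 1 - a)) + s.sum id = L * (N - 1) := by
    have : ∀ a ∈ s, (N - 1 - a) + a = N - 1 := fun a ha => by have := hle a ha; omega
    calc (∑ a ∈ s, (N - 1 - a)) + s.sum id = ∑ a ∈ s, ((N - 1 - a) + a) :=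
          Finset.sum_add_distrib.symm
      _ = ∑ _a ∈ s, (N - 1) := Finset.sum_congr rfl this
      _ = L * (N - 1) := by rw [Finset.sum_const, hcard, smul_eq_mul]
  have hnle : n ≤ L * (N-1) := by omega
  have hsum' : (s.image (fun a => N - 1 - a)).sum id = L * (N-1) - n := by
    rw [hsum1]; omega
  refine ⟨hcard', hsum', hnle, mem_lvl.mpr ⟨?_, hcard', hsum'⟩⟩
  intro b hb
  simp only [Finset.mem_image] at hb
  obtain ⟨a, ha, rfl⟩ := hb
  have haN := hsub ha
  simp only [mem_range] at *
  omega

lemma image_refl_refl {N : ℕ} {s : Finset ℕ} (hsub : s ⊆ range N) :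
    (s.image (fun a => N - 1 - a)).image (fun a => N - 1 - a) = s := by
  rw [Finset.image_image]
  have : Finset.image (fun a => N - 1 - (N - 1 - a)) s = Finset.image id s := by
    apply Finset.image_congr
    intro a ha
    have := hsub ha
    simp only [mem_range] at this
    simp only [id]
    omega
  simpa [Function.comp_def] using this

lemma card_lvl_refl {N L n : ℕ} (hn : n ≤ L * (N-1)) :
    (lvl N L n).card = (lvl N L (L*(N-1) - n)).card := by
  refine Finset.card_bij' (fun s _ => s.image (fun a => N - 1 - a))
    (fun s _ => s.image (fun a => N - 1 - a)) ?hi ?hj ?left ?right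
  case hi =>
    intro s hs
    exact (refl_sum hs).2.2.2
  case hj =>
    intro s hs
    have h := (refl_sum hs).2.2.2
    rwa [show L*(N-1) - (L*(N-1) - n) = n by omega] at h
  case left =>
    intro s hs
    exact image_refl_refl (mem_lvl.mp hs).1
  case right =>
    intro s hs
    exact image_refl_refl (mem_lvl.mp hs).1

lemma card_subtype_split {α : Type*} [Fintype α] (P Q : α → Prop)
    [DecidablePred P] [DecidablePred Q] :
    Fintype.card {x // P x} = Fintype.card {x : α // P x ∧ Q x}
      + Fintype.card {x : α // P x ∧ ¬ Q x} := by
  classical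
  simp only [Fintype.card_subtype]
  rw [← Finset.filter_filter, ← Finset.filter_filter,
    Finset.card_filter_add_card_filter_not]

lemma parts_eq_zero_of_partition_zero (p : Nat.Partition 0) : p.parts = 0 := by
  rw [Multiset.eq_zero_iff_forall_notMem]
  intro i hi
  have h1 := p.parts_pos hi
  have h2 := p.parts_sum
  have h3 : i ≤ p.parts.sum := Multiset.single_le_sum (fun x _ => Nat.zero_le x) i hi
  omega

lemma pCount_m0 (ℓ k : ℕ) : pCount ℓ 0 k = if k = 0 then 1 else 0 := by
  rw [pCount]
  split_ifs with hk
  · subst hk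
    rw [Fintype.card_eq_one_iff]
    refine ⟨⟨default, by simp [parts_eq_zero_of_partition_zero default]⟩, ?_⟩
    rintro ⟨q, hq⟩
    exact Subtype.ext (Nat.Partition.ext
      (by rw [parts_eq_zero_of_partition_zero, parts_eq_zero_of_partition_zero]))
  · rw [Fintype.card_eq_zero_iff]
    constructor
    rintro ⟨p, h1, h2⟩
    have hne : p.parts ≠ 0 := fun h => hk (by rw [← p.parts_sum, h]; rfl)
    obtain ⟨i, hi⟩ := Multiset.exists_mem_of_ne_zero hne
    have := p.parts_pos hi
    have := h2 i hi
    omega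

lemma pCount_l0 (m k : ℕ) : pCount 0 m k = if k = 0 then 1 else 0 := by
  rw [pCount]
  split_ifs with hk
  · subst hk
    rw [Fintype.card_eq_one_iff]
    refine ⟨⟨default, by simp [parts_eq_zero_of_partition_zero default]⟩, ?_⟩
    rintro ⟨q, hq⟩
    exact Subtype.ext (Nat.Partition.ext
      (by rw [parts_eq_zero_of_partition_zero, parts_eq_zero_of_partition_zero]))
  · rw [Fintype.card_eq_zero_iff]
    constructor
    rintro ⟨p, h1, h2⟩
    have hz : p.parts = 0 := Multiset.card_eq_zero.mp (Nat.le_zero.mp h1)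
    exact hk (by rw [← p.parts_sum, hz]; rfl)

lemma pCount_rec (ℓ m k : ℕ) :
    pCount (ℓ+1) (m+1) k
      = pCount (ℓ+1) m k + (if m+1 ≤ k then pCount ℓ (m+1) (k-(m+1)) else 0) := by
  classical
  rw [pCount, card_subtype_split _ (fun p => (m+1) ∈ p.parts), add_comm]
  congr 1
  · -- not-mem part equals pCount (ℓ+1) m k
    rw [pCount]
    apply Fintype.card_congr
    apply Equiv.subtypeEquivRight
    intro p
    constructor
    · rintro ⟨⟨hc, hb⟩, hnm⟩
      refine ⟨hc, fun i hi => ?_⟩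
      have := hb i hi
      have : i ≠ m+1 := fun e => hnm (e ▸ hi)
      omega
    · rintro ⟨hc, hb⟩
      refine ⟨⟨hc, fun i hi => by have := hb i hi; omega⟩, fun hm => ?_⟩
      have := hb _ hm
      omega
  · -- mem part
    by_cases hk : m+1 ≤ k
    · rw [if_pos hk, pCount]
      apply Fintype.card_congr
      refine
        { toFun := fun p => ⟨⟨p.1.parts.erase (m+1),
            fun {i} hi => p.1.parts_pos (Multiset.mem_of_mem_erase hi), ?_⟩, ?_, ?_⟩
          invFun := fun q => ⟨⟨(m+1) ::ₘ q.1.parts,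
            fun {i} hi => ?_, ?_⟩, ⟨?_, ?_⟩, Multiset.mem_cons_self _ _⟩
          left_inv := fun p => Subtype.ext (Nat.Partition.ext (Multiset.cons_erase p.2.2))
          right_inv := fun q => Subtype.ext (Nat.Partition.ext (Multiset.erase_cons_head _ _)) }
      · -- sum of erase
        have hc := Multiset.cons_erase p.2.2
        have hs := p.1.parts_sum
        have : ((m+1) ::ₘ p.1.parts.erase (m+1)).sum = (m+1) + (p.1.parts.erase (m+1)).sum :=
          Multiset.sum_cons _ _
        rw [hc] at this
        omega
      · -- card of erase ≤ ℓ
        have h1 := Multiset.card_erase_of_mem p.2.2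
        have h2 := p.2.1.1
        have hmem := p.2.2
        have h3 : 0 < Multiset.card p.1.parts := Multiset.card_pos.mpr
          (fun h => by rw [h] at hmem; simp at hmem)
        simp only [h1, Nat.pred_eq_sub_one]
        omega
      · exact fun i hi => p.2.1.2 i (Multiset.mem_of_mem_erase hi)
      · -- positivity for cons
        rcases Multiset.mem_cons.mp hi with rfl | h
        · omega
        · exact q.1.parts_pos h
      · rw [Multiset.sum_cons, q.1.parts_sum]
        omega
      · rw [Multiset.card_cons]
        have := q.2.1
        omega
      · intro i hi
        rcases Multiset.mem_cons.mp hi with rfl | h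
        · exact le_refl _
        · exact q.2.2 i h
    · rw [if_neg hk]
      rw [Fintype.card_eq_zero_iff]
      constructor
      rintro ⟨p, hcond, hmem⟩
      have h1 : m+1 ≤ p.parts.sum :=
        Multiset.single_le_sum (fun x _ => Nat.zero_le x) _ hmem
      rw [p.parts_sum] at h1
      omega

/-- number of `ℓ`-subsets of `range (ℓ+m)` of sum `k + T ℓ`. -/
def gc (ℓ m k : ℕ) : ℕ := (lvl (ℓ+m) ℓ (k + T ℓ)).card

lemma gc_m0 (ℓ k : ℕ) : gc ℓ 0 k = if k = 0 then 1 else 0 := by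
  have hrange : Finset.range ℓ ∈ lvl ℓ ℓ (T ℓ) :=
    mem_lvl.mpr ⟨subset_refl _, Finset.card_range ℓ, by simp [T]⟩
  have hmem : ∀ s, s ∈ lvl ℓ ℓ (k + T ℓ) → s = range ℓ ∧ k = 0 := by
    intro s hs
    obtain ⟨hsub, hc, hsum⟩ := mem_lvl.mp hs
    have hseq : s = range ℓ := Finset.eq_of_subset_of_card_le hsub
      (by rw [Finset.card_range, hc])
    have : s.sum id = T ℓ := by rw [hseq]; simp [T]
    exact ⟨hseq, by omega⟩
  rw [gc]
  split_ifs with hk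
  · subst hk
    rw [Finset.card_eq_one]
    exact ⟨range ℓ, Finset.eq_singleton_iff_unique_mem.mpr
      ⟨by simpa using hrange, fun s hs => (hmem s (by simpa using hs)).1⟩⟩
  · rw [Finset.card_eq_zero]
    apply Finset.eq_empty_of_forall_notMem
    intro s hs
    exact hk (hmem s (by simpa using hs)).2

lemma gc_l0 (m k : ℕ) : gc 0 m k = if k = 0 then 1 else 0 := by
  have hT0 : T 0 = 0 := rfl
  have hmem : ∀ s, s ∈ lvl m 0 (k + T 0) → s = ∅ ∧ k = 0 := by
    intro s hs
    obtain ⟨hsub, hc, hsum⟩ := mem_lvl.mp hs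
    have hseq : s = ∅ := Finset.card_eq_zero.mp hc
    rw [hseq] at hsum
    simp only [Finset.sum_empty] at hsum
    exact ⟨hseq, by omega⟩
  rw [gc]
  split_ifs with hk
  · subst hk
    rw [Finset.card_eq_one]
    refine ⟨∅, Finset.eq_singleton_iff_unique_mem.mpr
      ⟨mem_lvl.mpr ⟨Finset.empty_subset _, rfl, by simp [hT0]⟩,
       fun s hs => (hmem s (by simpa using hs)).1⟩⟩
  · rw [Finset.card_eq_zero]
    apply Finset.eq_empty_of_forall_notMem
    intro s hs
    exact hk (hmem s (by simpa using hs)).2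

lemma gc_rec (ℓ m k : ℕ) :
    gc (ℓ+1) (m+1) k = gc (ℓ+1) m k + (if m+1 ≤ k then gc ℓ (m+1) (k-(m+1)) else 0) := by
  classical
  have hN : (ℓ+1)+(m+1) = (ℓ+m+1)+1 := by omega
  have hN2 : (ℓ+1)+m = ℓ+m+1 := by omega
  have hN3 : ℓ+(m+1) = ℓ+m+1 := by omega
  rw [gc, gc, gc, hN, hN2, hN3]
  set M := ℓ+m+1 with hM
  set n := k + T (ℓ+1) with hn
  have hsplit := Finset.card_filter_add_card_filter_not
    (s := lvl (M+1) (ℓ+1) n) (p := fun s => M ∈ s)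
  have h1 : ((lvl (M+1) (ℓ+1) n).filter (fun s => ¬ M ∈ s)).card
      = (lvl M (ℓ+1) n).card := by
    congr 1
    ext s
    simp only [Finset.mem_filter, mem_lvl]
    constructor
    · rintro ⟨⟨hsub, hc, hs⟩, hnm⟩
      refine ⟨fun a ha => ?_, hc, hs⟩
      have h3 := hsub ha
      have h4 : a ≠ M := fun e => hnm (e ▸ ha)
      simp only [mem_range] at *
      omega
    · rintro ⟨hsub, hc, hs⟩
      refine ⟨⟨fun a ha => ?_, hc, hs⟩, fun hm => ?_⟩
      · have := hsub ha; simp only [mem_range] at *; omega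
      · have := hsub hm; simp only [mem_range] at this; omega
  have hker : ∀ s ∈ (lvl (M+1) (ℓ+1) n).filter (fun s => M ∈ s), m+1 ≤ k := by
    intro s hs
    rw [Finset.mem_filter] at hs
    obtain ⟨hlv, hMs⟩ := hs
    obtain ⟨hsub, hc, hsum⟩ := mem_lvl.mp hlv
    have hadd : M + (s.erase M).sum id = s.sum id := Finset.add_sum_erase s id hMs
    have hcard : (s.erase M).card = ℓ := by rw [Finset.card_erase_of_mem hMs, hc]; omega
    have hmin := T_card_le_sum (s.erase M)
    rw [hcard] at hmin
    have hTs : T (ℓ+1) = T ℓ + ℓ := T_succ ℓ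
    omega
  have h2 : ((lvl (M+1) (ℓ+1) n).filter (fun s => M ∈ s)).card
      = if m+1 ≤ k then (lvl M ℓ ((k-(m+1)) + T ℓ)).card else 0 := by
    by_cases hk : m+1 ≤ k
    · rw [if_pos hk]
      refine Finset.card_bij' (fun s _ => s.erase M) (fun t _ => insert M t) ?hi ?hj ?li ?ri
      case hi =>
        intro s hs
        show s.erase M ∈ lvl M ℓ ((k-(m+1)) + T ℓ)
        rw [Finset.mem_filter] at hs
        obtain ⟨hlv, hMs⟩ := hs
        obtain ⟨hsub, hc, hsum⟩ := mem_lvl.mp hlv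
        refine mem_lvl.mpr ⟨fun a ha => ?_, ?_, ?_⟩
        · have h3 := hsub (Finset.mem_of_mem_erase ha)
          have h4 := Finset.ne_of_mem_erase ha
          simp only [mem_range] at *
          omega
        · rw [Finset.card_erase_of_mem hMs, hc]
          omega
        · have hadd : M + (s.erase M).sum id = s.sum id := Finset.add_sum_erase s id hMs
          have hTs : T (ℓ+1) = T ℓ + ℓ := T_succ ℓ
          omega
      case hj =>
        intro t ht
        show insert M t ∈ filter (fun s => M ∈ s) (lvl (M+1) (ℓ+1) n)
        obtain ⟨hsub, hc, hsum⟩ := mem_lvl.mp ht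
        have hMt : M ∉ t := fun hm => by have := hsub hm; simp only [mem_range] at this; omega
        rw [Finset.mem_filter]
        refine ⟨mem_lvl.mpr ⟨fun a ha => ?_, ?_, ?_⟩, by simp⟩
        · rcases Finset.mem_insert.mp ha with rfl | h
          · simp only [mem_range]; omega
          · have := hsub h; simp only [mem_range] at *; omega
        · rw [Finset.card_insert_of_notMem hMt, hc]
        · rw [Finset.sum_insert hMt]
          have hTs : T (ℓ+1) = T ℓ + ℓ := T_succ ℓ
          simp only [id] at *
          omega
      case li =>
        intro s hs
        exact Finset.insert_erase (Finset.mem_filter.mp hs).2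
      case ri =>
        intro t ht
        obtain ⟨hsub, _, _⟩ := mem_lvl.mp ht
        have hMt : M ∉ t := fun hm => by have := hsub hm; simp only [mem_range] at this; omega
        exact Finset.erase_insert hMt
    · rw [if_neg hk, Finset.card_eq_zero]
      apply Finset.eq_empty_of_forall_notMem
      intro s hs
      exact hk (hker s hs)
  rw [← hsplit, h1, h2, add_comm]


lemma pCount_eq_gc : ∀ m ℓ k, pCount ℓ m k = gc ℓ m k := by
  intro m
  induction m with
  | zero => intro ℓ k; rw [pCount_m0, gc_m0]
  | succ m ihm =>
    intro ℓ
    induction ℓ with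
    | zero => intro k; rw [pCount_l0, gc_l0]
    | succ ℓ ihl =>
      intro k
      rw [pCount_rec, gc_rec, ihm (ℓ+1) k]
      congr 1
      split_ifs with h
      · exact ihl (k - (m+1))
      · rfl

lemma mul_pred_add (ℓ m : ℕ) : ℓ * ((ℓ+m) - 1) = ℓ*(ℓ-1) + ℓ*m := by
  rcases Nat.eq_zero_or_pos ℓ with rfl | hl
  · simp
  · have h' : (ℓ+m) - 1 = (ℓ-1) + m := by omega
    rw [h', Nat.mul_add]

lemma gc_step (ℓ m k : ℕ) (hk : 2*k + 1 ≤ ℓ*m) : gc ℓ m k ≤ gc ℓ m (k+1) := by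
  have h2T := two_T ℓ
  have hl : 1 ≤ ℓ := by
    rcases Nat.eq_zero_or_pos ℓ with rfl | h
    · simp at hk
    · exact h
  rw [gc, gc, show (k+1) + T ℓ = (k + T ℓ) + 1 by omega]
  apply card_lvl_le
  have hd := mul_pred_add ℓ m
  omega

lemma gc_symm (ℓ m k : ℕ) (hk : k ≤ ℓ*m) : gc ℓ m k = gc ℓ m (ℓ*m - k) := by
  rw [gc, gc]
  have h2T := two_T ℓ
  have hd := mul_pred_add ℓ m
  have hle : k + T ℓ ≤ ℓ * ((ℓ+m)-1) := by omega
  rw [card_lvl_refl hle,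
    show ℓ*((ℓ+m)-1) - (k + T ℓ) = (ℓ*m - k) + T ℓ by omega]

lemma gc_mono (ℓ m : ℕ) : ∀ j, j ≤ (ℓ*m+1)/2 → ∀ i, i ≤ j → gc ℓ m i ≤ gc ℓ m j := by
  intro j
  induction j with
  | zero =>
    intro _ i hi
    rw [Nat.le_zero.mp hi]
  | succ j ih =>
    intro hj i hi
    rcases Nat.lt_or_ge i (j+1) with h | h
    · refine le_trans (ih (by omega) i (by omega)) ?_
      apply gc_step
      omega
    · rw [show i = j + 1 by omega]

end Sylvester

/-- Sylvester's theorem: the sequence `p_0(ℓ,m), …, p_{ℓm}(ℓ,m)` of coefficients of the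
Gaussian binomial coefficient is unimodal. -/
theorem pCount_unimodal (ℓ m : ℕ) :
    ∃ k ≤ ℓ * m,
      (∀ i j, i ≤ j → j ≤ k → pCount ℓ m i ≤ pCount ℓ m j) ∧
      (∀ i j, k ≤ i → i ≤ j → j ≤ ℓ * m → pCount ℓ m j ≤ pCount ℓ m i) := by
  refine ⟨(ℓ*m+1)/2, by omega, ?_, ?_⟩
  · intro i j hij hjk
    rw [Sylvester.pCount_eq_gc, Sylvester.pCount_eq_gc]
    exact Sylvester.gc_mono ℓ m j hjk i hij
  · intro i j hki hij hjm
    rw [Sylvester.pCount_eq_gc, Sylvester.pCount_eq_gc]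
    rw [Sylvester.gc_symm ℓ m j hjm, Sylvester.gc_symm ℓ m i (le_trans hij hjm)]
    exact Sylvester.gc_mono ℓ m (ℓ*m - i) (by omega) (ℓ*m - j) (by omega)
end

section
/- The number of partitions of $n$ into odd distinct parts is weakly increasing from $n$ to $n+1$ for all $n \ge 3$: $q(n+1) \ge q(n)$, where $q(n)$ is the number of partitions of $n$ into distinct odd parts. -/
/-- `qOdd n` is the number of partitions of `n` into distinct odd parts. -/
def qOdd (n : ℕ) : ℕ :=
  Fintype.card {p : n.Partition // p.parts.Nodup ∧ ∀ i ∈ p.parts, Odd i}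

open Multiset

namespace QOddAux

variable {n : ℕ}

noncomputable def maxPart (p : n.Partition) (hn : n ≠ 0) : ℕ :=
  p.parts.toFinset.max' (by
    rw [Multiset.toFinset_nonempty]
    intro h
    exact hn (by rw [← p.parts_sum, h]; rfl))

lemma maxPart_mem (p : n.Partition) (hn : n ≠ 0) : maxPart p hn ∈ p.parts := by
  have := p.parts.toFinset.max'_mem (by
    rw [Multiset.toFinset_nonempty]
    intro h
    exact hn (by rw [← p.parts_sum, h]; rfl))
  simpa [maxPart] using this

lemma le_maxPart (p : n.Partition) (hn : n ≠ 0) {x : ℕ} (hx : x ∈ p.parts) :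
    x ≤ maxPart p hn :=
  p.parts.toFinset.le_max' x (by simpa using hx)

lemma maxPart_ne_one (p : n.Partition) (hn : n ≠ 0) (hn3 : 3 ≤ n)
    (hnd : p.parts.Nodup) : maxPart p hn ≠ 1 := by
  intro h
  have h1 : 1 ∈ p.parts := by
    have := maxPart_mem p hn; rwa [h] at this
  have he : p.parts.erase 1 = 0 := by
    by_contra hne
    obtain ⟨x, hx⟩ := Multiset.exists_mem_of_ne_zero hne
    obtain ⟨hx1, hx2⟩ := (hnd.mem_erase_iff).mp hx
    have := le_maxPart p hn hx2
    have := p.parts_pos hx2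
    omega
  have hs := p.parts_sum
  rw [← Multiset.cons_erase h1, he] at hs
  simp at hs
  omega

lemma key (p : n.Partition) (hn : n ≠ 0) (hn3 : 3 ≤ n) (h1 : 1 ∈ p.parts)
    (hnd : p.parts.Nodup) :
    p.parts = 1 ::ₘ (maxPart p hn) ::ₘ ((p.parts.erase 1).erase (maxPart p hn)) := by
  have hm : maxPart p hn ∈ p.parts.erase 1 :=
    (Multiset.mem_erase_of_ne (maxPart_ne_one p hn hn3 hnd)).mpr (maxPart_mem p hn)
  rw [Multiset.cons_erase hm, Multiset.cons_erase h1]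

noncomputable def fB (p : n.Partition) (hn : n ≠ 0) (hn3 : 3 ≤ n) (h1 : 1 ∈ p.parts)
    (hnd : p.parts.Nodup) : (n + 1).Partition where
  parts := (maxPart p hn + 2) ::ₘ ((p.parts.erase 1).erase (maxPart p hn))
  parts_pos := by
    intro x hx
    rcases Multiset.mem_cons.mp hx with h | h
    · omega
    · exact p.parts_pos (Multiset.mem_of_mem_erase (Multiset.mem_of_mem_erase h))
  parts_sum := by
    have hk := key p hn hn3 h1 hnd
    have hs := p.parts_sum
    rw [hk] at hs
    simp only [Multiset.sum_cons] at hs ⊢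
    omega

def fA (p : n.Partition) : (n + 1).Partition where
  parts := 1 ::ₘ p.parts
  parts_pos := by
    intro x hx
    rcases Multiset.mem_cons.mp hx with h | h
    · omega
    · exact p.parts_pos h
  parts_sum := by
    simp [Multiset.sum_cons, p.parts_sum, Nat.add_comm]

lemma fB_nodup (p : n.Partition) (hn : n ≠ 0) (hn3 : 3 ≤ n) (h1 : 1 ∈ p.parts)
    (hnd : p.parts.Nodup) : (fB p hn hn3 h1 hnd).parts.Nodup := by
  show ((maxPart p hn + 2) ::ₘ ((p.parts.erase 1).erase (maxPart p hn))).Nodup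
  rw [Multiset.nodup_cons]
  constructor
  · intro h
    have := le_maxPart p hn (Multiset.mem_of_mem_erase (Multiset.mem_of_mem_erase h))
    omega
  · exact (hnd.erase 1).erase _

lemma fB_odd (p : n.Partition) (hn : n ≠ 0) (hn3 : 3 ≤ n) (h1 : 1 ∈ p.parts)
    (hnd : p.parts.Nodup) (ho : ∀ i ∈ p.parts, Odd i) :
    ∀ i ∈ (fB p hn hn3 h1 hnd).parts, Odd i := by
  intro i hi
  rcases Multiset.mem_cons.mp hi with h | h
  · subst h
    have := ho _ (maxPart_mem p hn)
    rcases this with ⟨k, hk⟩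
    exact ⟨k + 1, by omega⟩
  · exact ho _ (Multiset.mem_of_mem_erase (Multiset.mem_of_mem_erase h))

lemma one_not_mem_fB (p : n.Partition) (hn : n ≠ 0) (hn3 : 3 ≤ n) (h1 : 1 ∈ p.parts)
    (hnd : p.parts.Nodup) : 1 ∉ (fB p hn hn3 h1 hnd).parts := by
  intro h
  rcases Multiset.mem_cons.mp h with h | h
  · omega
  · have h' := Multiset.mem_of_mem_erase h
    have := (hnd.mem_erase_iff).mp h'
    exact this.1 rfl

end QOddAux

open QOddAux in
theorem qOdd_mono' (n : ℕ) (hn : 3 ≤ n) :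
    Fintype.card {p : n.Partition // p.parts.Nodup ∧ ∀ i ∈ p.parts, Odd i} ≤
    Fintype.card {p : (n+1).Partition // p.parts.Nodup ∧ ∀ i ∈ p.parts, Odd i} := by
  classical
  have hn0 : n ≠ 0 := by omega
  apply Fintype.card_le_of_injective
    (fun x =>
      if h : 1 ∈ x.1.parts then
        ⟨fB x.1 hn0 hn h x.2.1, fB_nodup _ _ _ _ _, fB_odd _ _ _ _ _ x.2.2⟩
      else
        ⟨fA x.1, by
          constructor
          · exact (Multiset.nodup_cons).mpr ⟨h, x.2.1⟩
          · intro i hi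
            rcases Multiset.mem_cons.mp hi with h' | h'
            · exact h' ▸ odd_one
            · exact x.2.2 i h'⟩)
  rintro ⟨p, hpd, hpo⟩ ⟨q, hqd, hqo⟩ h
  simp only at h
  split_ifs at h with h1 h2 h2
  · -- BB
    have hparts : (fB p hn0 hn h1 hpd).parts = (fB q hn0 hn h2 hqd).parts := by
      rw [Subtype.mk.injEq] at h
      rw [h]
    have hparts' : (maxPart p hn0 + 2) ::ₘ ((p.parts.erase 1).erase (maxPart p hn0))
        = (maxPart q hn0 + 2) ::ₘ ((q.parts.erase 1).erase (maxPart q hn0)) := hparts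
    set mp := maxPart p hn0 with hmp
    set mq := maxPart q hn0 with hmq
    have hmeq : mp = mq := by
      by_contra hne
      have h1' : mp + 2 ∈ (mq + 2) ::ₘ ((q.parts.erase 1).erase mq) := by
        rw [← hparts']; exact Multiset.mem_cons_self _ _
      have h2' : mq + 2 ∈ (mp + 2) ::ₘ ((p.parts.erase 1).erase mp) := by
        rw [hparts']; exact Multiset.mem_cons_self _ _
      rcases Multiset.mem_cons.mp h1' with h | h
      · omega
      · have hle1 : mp + 2 ≤ mq :=
          le_maxPart q hn0 (Multiset.mem_of_mem_erase (Multiset.mem_of_mem_erase h))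
        rcases Multiset.mem_cons.mp h2' with h' | h'
        · omega
        · have hle2 : mq + 2 ≤ mp :=
            le_maxPart p hn0 (Multiset.mem_of_mem_erase (Multiset.mem_of_mem_erase h'))
          omega
    rw [hmeq] at hparts'
    have hs := (Multiset.cons_inj_right (mq + 2)).mp hparts'
    have : p.parts = q.parts := by
      rw [key p hn0 hn h1 hpd, key q hn0 hn h2 hqd, ← hmp, ← hmq, hmeq, hs]
    exact Subtype.ext (Nat.Partition.ext this)
  · -- B vs A : contradiction
    exfalso
    rw [Subtype.mk.injEq] at h
    have h1' : 1 ∈ (fA q).parts := Multiset.mem_cons_self 1 _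
    rw [← h] at h1'
    exact one_not_mem_fB p hn0 hn h1 hpd h1'
  · exfalso
    rw [Subtype.mk.injEq] at h
    have h1' : 1 ∈ (fA p).parts := Multiset.mem_cons_self 1 _
    rw [h] at h1'
    exact one_not_mem_fB q hn0 hn h2 hqd h1'
  · -- AA
    rw [Subtype.mk.injEq] at h
    have : (1 : ℕ) ::ₘ p.parts = 1 ::ₘ q.parts := congrArg Nat.Partition.parts h
    exact Subtype.ext (Nat.Partition.ext ((Multiset.cons_inj_right 1).mp this))


/-- The number of partitions into distinct odd parts is weakly increasing:
`q(n+1) ≥ q(n)` for all `n ≥ 3`. -/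
theorem qOdd_mono (n : ℕ) (hn : 3 ≤ n) : qOdd n ≤ qOdd (n + 1) :=
  qOdd_mono' n hn
end

section
/- The map $\varphi$ defined on partitions $\nu = (\nu_1,\dots,\nu_\ell)$ of $n \ge 3$ into distinct odd parts by $\varphi(\nu) = (\nu_1,\dots,\nu_\ell,1)$ if $\nu_\ell > 1$, and $\varphi(\nu) = (\nu_1+2,\nu_2,\dots,\nu_{\ell-1})$ if $\nu_\ell = 1$, is a well-defined injection from the set of partitions of $n$ into distinct odd parts to the set of partitions of $n+1$ into distinct odd parts. -/
/-- Partitions of `n` into distinct odd parts, as a subtype of `Nat.Partition n`. -/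
def DistinctOdd (n : ℕ) :=
  {p : n.Partition // p.parts.Nodup ∧ ∀ i ∈ p.parts, Odd i}

/-- The multiset of parts of `φ(ν)`: if the smallest part `ν_ℓ` is `> 1` (i.e. `1` is not a
part), append a part `1`; if `ν_ℓ = 1`, delete it and add `2` to the largest part `ν₁`
(here `ν.sup` is the largest part). -/
def phiParts (s : Multiset ℕ) : Multiset ℕ :=
  if 1 ∈ s then (s.sup + 2) ::ₘ ((s.erase 1).erase s.sup) else 1 ::ₘ s

lemma multiset_sup_mem {s : Multiset ℕ} (h : s ≠ 0) : s.sup ∈ s := by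
  induction s using Multiset.induction with
  | empty => simp at h
  | cons a t ih =>
    rw [Multiset.sup_cons]
    rcases eq_or_ne t 0 with rfl | ht
    · simp
    · rcases le_total t.sup a with hle | hle
      · rw [sup_eq_left.mpr hle]; exact Multiset.mem_cons_self a t
      · rw [sup_eq_right.mpr hle]; exact Multiset.mem_cons_of_mem (ih ht)

section helpers

variable {n : ℕ} (hn : 3 ≤ n) {s : Multiset ℕ} (hsum : s.sum = n)
  (hnd : s.Nodup) (hodd : ∀ i ∈ s, Odd i)

include hn hsum hnd hodd

lemma sup_big (h1 : (1:ℕ) ∈ s) : 3 ≤ s.sup := by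
  -- there is an element ≠ 1
  have hne : s.erase 1 ≠ 0 := by
    intro h
    have := Multiset.cons_erase h1
    rw [h] at this
    rw [← this] at hsum
    simp at hsum; omega
  obtain ⟨a, ha⟩ := Multiset.exists_mem_of_ne_zero hne
  have has : a ∈ s := Multiset.mem_of_mem_erase ha
  have ha1 : a ≠ 1 := (hnd.mem_erase_iff.1 ha).1
  have : Odd a := hodd a has
  have h3 : 3 ≤ a := by rcases this with ⟨k, rfl⟩; omega
  exact le_trans h3 (Multiset.le_sup has)

lemma phi_sum : (phiParts s).sum = n + 1 := by
  unfold phiParts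
  split_ifs with h1
  · have hsup3 := sup_big hn hsum hnd hodd h1
    have hsups : s.sup ∈ s := multiset_sup_mem (by rintro rfl; simp at h1)
    have hsupe : s.sup ∈ s.erase 1 :=
      hnd.mem_erase_iff.2 ⟨by omega, hsups⟩
    have e1 : (1:ℕ) ::ₘ s.erase 1 = s := Multiset.cons_erase h1
    have e2 : s.sup ::ₘ (s.erase 1).erase s.sup = s.erase 1 := Multiset.cons_erase hsupe
    have : (1:ℕ) + (s.sup + ((s.erase 1).erase s.sup).sum) = n := by
      rw [← Multiset.sum_cons, e2, ← Multiset.sum_cons, e1, hsum]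
    rw [Multiset.sum_cons]; omega
  · rw [Multiset.sum_cons, hsum]; omega

lemma phi_nodup : (phiParts s).Nodup := by
  unfold phiParts
  split_ifs with h1
  · refine Multiset.nodup_cons.2 ⟨?_, (hnd.erase 1).erase _⟩
    intro hmem
    have : s.sup + 2 ∈ s :=
      Multiset.mem_of_mem_erase (Multiset.mem_of_mem_erase hmem)
    have := Multiset.le_sup this
    omega
  · exact Multiset.nodup_cons.2 ⟨h1, hnd⟩

lemma phi_odd : ∀ i ∈ phiParts s, Odd i := by
  unfold phiParts
  intro i hi
  split_ifs at hi with h1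
  · rcases Multiset.mem_cons.1 hi with rfl | hi
    · have hsups : s.sup ∈ s := multiset_sup_mem (by rintro rfl; simp at h1)
      rcases hodd _ hsups with ⟨k, hk⟩
      exact ⟨k + 1, by omega⟩
    · exact hodd _ (Multiset.mem_of_mem_erase (Multiset.mem_of_mem_erase hi))
  · rcases Multiset.mem_cons.1 hi with rfl | hi
    · exact ⟨0, rfl⟩
    · exact hodd _ hi

lemma one_mem_phi_iff : (1 ∈ phiParts s) ↔ (1 ∉ s) := by
  unfold phiParts
  split_ifs with h1
  · simp only [h1, not_true, iff_false]
    intro hmem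
    rcases Multiset.mem_cons.1 hmem with h | h
    · have := sup_big hn hsum hnd hodd h1; omega
    · have h' : (1:ℕ) ∈ s.erase 1 := Multiset.mem_of_mem_erase h
      exact (hnd.mem_erase_iff.1 h').1 rfl
  · simp [h1]

lemma phi_sup (h1 : (1:ℕ) ∈ s) : (phiParts s).sup = s.sup + 2 := by
  unfold phiParts
  rw [if_pos h1, Multiset.sup_cons]
  have hle : ((s.erase 1).erase s.sup).sup ≤ s.sup := by
    apply Multiset.sup_le.2
    intro b hb
    exact Multiset.le_sup (Multiset.mem_of_mem_erase (Multiset.mem_of_mem_erase hb))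
  exact sup_eq_left.mpr (by omega)

end helpers

lemma phi_inj {n : ℕ} (hn : 3 ≤ n) {s t : Multiset ℕ}
    (hsum : s.sum = n) (hnd : s.Nodup) (hodd : ∀ i ∈ s, Odd i)
    (hsum' : t.sum = n) (hnd' : t.Nodup) (hodd' : ∀ i ∈ t, Odd i)
    (h : phiParts s = phiParts t) : s = t := by
  by_cases h1s : (1:ℕ) ∈ s <;> by_cases h1t : (1:ℕ) ∈ t
  · -- both contain 1
    have hsup : s.sup = t.sup := by
      have := phi_sup hn hsum hnd hodd h1s
      have := phi_sup hn hsum' hnd' hodd' h1t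
      have : (phiParts s).sup = (phiParts t).sup := by rw [h]
      omega
    unfold phiParts at h
    rw [if_pos h1s, if_pos h1t, hsup, Multiset.cons_inj_right] at h
    have hsups : s.sup ∈ s := multiset_sup_mem (by rintro rfl; simp at h1s)
    have hsupt : t.sup ∈ t := multiset_sup_mem (by rintro rfl; simp at h1t)
    have hs3 := sup_big hn hsum hnd hodd h1s
    have ht3 := sup_big hn hsum' hnd' hodd' h1t
    have hsupes : s.sup ∈ s.erase 1 := hnd.mem_erase_iff.2 ⟨by omega, hsups⟩
    have hsupet : t.sup ∈ t.erase 1 := hnd'.mem_erase_iff.2 ⟨by omega, hsupt⟩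
    have e1 : s.erase 1 = t.erase 1 := by
      rw [← Multiset.cons_erase hsupes, ← Multiset.cons_erase hsupet, hsup, h]
    rw [← Multiset.cons_erase h1s, ← Multiset.cons_erase h1t, e1]
  · -- 1 ∈ s, 1 ∉ t: impossible
    exfalso
    have hm : (1:ℕ) ∉ phiParts s := by
      rw [one_mem_phi_iff hn hsum hnd hodd]; simp [h1s]
    rw [h, one_mem_phi_iff hn hsum' hnd' hodd'] at hm
    exact hm h1t
  · exfalso
    have hm : (1:ℕ) ∈ phiParts s := (one_mem_phi_iff hn hsum hnd hodd).2 h1s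
    rw [h, one_mem_phi_iff hn hsum' hnd' hodd'] at hm
    exact hm h1t
  · unfold phiParts at h
    rw [if_neg h1s, if_neg h1t, Multiset.cons_inj_right] at h
    exact h

/-- The map `φ(ν) = (ν₁,…,ν_ℓ,1)` if `ν_ℓ > 1`, and `φ(ν) = (ν₁+2,ν₂,…,ν_{ℓ-1})` if
`ν_ℓ = 1`, is a well-defined injection from partitions of `n` into distinct odd parts to
partitions of `n+1` into distinct odd parts, for `n ≥ 3`. -/
theorem phi_well_defined_injection (n : ℕ) (hn : 3 ≤ n) :
    ∃ φ : DistinctOdd n → DistinctOdd (n + 1),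
      Function.Injective φ ∧
      ∀ ν : DistinctOdd n, (φ ν).1.parts = phiParts ν.1.parts := by
  refine ⟨fun ν => ⟨⟨phiParts ν.1.parts, ?_, ?_⟩, ?_, ?_⟩, ?_, fun ν => rfl⟩
  · intro i hi
    have := phi_odd hn ν.1.parts_sum ν.2.1 ν.2.2 i hi
    rcases this with ⟨k, rfl⟩; omega
  · exact phi_sum hn ν.1.parts_sum ν.2.1 ν.2.2
  · exact phi_nodup hn ν.1.parts_sum ν.2.1 ν.2.2
  · exact phi_odd hn ν.1.parts_sum ν.2.1 ν.2.2
  · intro a b hab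
    have h : phiParts a.1.parts = phiParts b.1.parts := by
      have := congrArg (fun x => x.1.parts) hab
      exact this
    have := phi_inj hn a.1.parts_sum a.2.1 a.2.2 b.1.parts_sum b.2.1 b.2.2 h
    apply Subtype.ext
    exact Nat.Partition.ext this
end

section
/- Let $w_n(m)$ be the number of pairs $(i, \alpha)$ where $i \ge 0$ and $\alpha$ is a self-conjugate partition of $n - 2i$ fitting inside the $m \times m$ square. Then the sequence $w_0(m), w_1(m), \dots, w_{m^2}(m)$ is weakly increasing. -/
open Finset

private lemma aux_sum (a n : ℕ) (h : a ≤ n) :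
    (∑ i ∈ Finset.range n, if i + 1 ≤ a then (1 : ℕ) else 0) = a := by
  induction n with
  | zero => simp; omega
  | succ n ih =>
    rw [Finset.sum_range_succ]
    by_cases hc : a ≤ n
    · rw [ih hc, if_neg (by omega)]
      omega
    · have ha : a = n + 1 := by omega
      subst ha
      rw [if_pos (by omega)]
      have : (∑ i ∈ Finset.range n, if i + 1 ≤ n + 1 then (1 : ℕ) else 0)
          = ∑ _i ∈ Finset.range n, 1 := by
        apply Finset.sum_congr rfl
        intro i hi
        rw [if_pos (by simp at hi; omega)]
      rw [this, Finset.sum_const, Finset.card_range]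
      simp

private lemma multiset_range_sum (f : ℕ → ℕ) (n : ℕ) :
    ((Multiset.range n).map f).sum = ∑ i ∈ Finset.range n, f i := rfl

private lemma sum_countP (s : Multiset ℕ) (n : ℕ) (h : ∀ a ∈ s, a ≤ n) :
    ((Multiset.range n).map fun i => s.countP (i + 1 ≤ ·)).sum = s.sum := by
  induction s using Multiset.induction with
  | empty => simp
  | cons a s ih =>
    have hs : ∀ b ∈ s, b ≤ n := fun b hb => h b (Multiset.mem_cons_of_mem hb)
    have ha : a ≤ n := h a (Multiset.mem_cons_self a s)
    simp only [Multiset.countP_cons]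
    rw [show (fun i => Multiset.countP (i + 1 ≤ ·) s + if i + 1 ≤ a then 1 else 0)
        = fun i => (fun i => Multiset.countP (i + 1 ≤ ·) s) i
            + (fun i => if i + 1 ≤ a then 1 else 0) i from rfl]
    rw [Multiset.sum_map_add, ih hs, Multiset.sum_cons,
      multiset_range_sum (fun i => if i + 1 ≤ a then (1:ℕ) else 0) n, aux_sum a n ha]
    omega

/-- The conjugate (transpose) of a partition: the `i`-th part of `conj p` is the number of
parts of `p` that are `≥ i+1`. -/
def Nat.Partition.conj {n : ℕ} (p : n.Partition) : n.Partition :=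
  Nat.Partition.ofSums n ((Multiset.range n).map fun i => p.parts.countP (i + 1 ≤ ·))
    (by
      rw [sum_countP _ n fun a ha =>
        le_trans (Multiset.single_le_sum (fun x _ => Nat.zero_le x) a ha) (le_of_eq p.parts_sum)]
      exact p.parts_sum)

/-- `wCount m n` is the number of pairs `(i, α)` with `i ≥ 0` and `α` a self-conjugate
partition of `n - 2i` fitting inside the `m × m` square. -/
def wCount (m n : ℕ) : ℕ :=
  ∑ i ∈ Finset.range (n / 2 + 1),
    Fintype.card {α : (n - 2 * i).Partition //
      α.conj = α ∧ α.parts.card ≤ m ∧ ∀ j ∈ α.parts, j ≤ m}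

namespace WAux
open Multiset

/-- `C s j` = number of parts of `s` that are `≥ j` (the `j`-th column length). -/
def C (s : Multiset ℕ) (j : ℕ) : ℕ := s.countP (j ≤ ·)

lemma countP_imp (s : Multiset ℕ) {p q : ℕ → Prop} [DecidablePred p] [DecidablePred q]
    (h : ∀ x ∈ s, p x → q x) : s.countP p ≤ s.countP q := by
  induction s using Multiset.induction with
  | empty => simp
  | cons a t ih =>
    simp only [countP_cons]
    have hih := ih fun x hx => h x (mem_cons_of_mem hx)
    by_cases hp : p a
    · rw [if_pos hp, if_pos (h a (mem_cons_self a t) hp)]; omega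
    · rw [if_neg hp]; split <;> omega

lemma C_anti (s : Multiset ℕ) {i j : ℕ} (h : i ≤ j) : C s j ≤ C s i :=
  countP_imp s fun x _ hx => le_trans h hx

lemma C_le_card (s : Multiset ℕ) (j : ℕ) : C s j ≤ Multiset.card s :=
  countP_le_card _ s

lemma card_le_sum (s : Multiset ℕ) (h : ∀ x ∈ s, 0 < x) : Multiset.card s ≤ s.sum := by
  have h1 : Multiset.card s • (1 : ℕ) ≤ s.sum :=
    Multiset.card_nsmul_le_sum fun x hx => h x hx
  simpa using h1

lemma C_cons (a : ℕ) (s : Multiset ℕ) (t : ℕ) :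
    C (a ::ₘ s) t = C s t + if t ≤ a then 1 else 0 := countP_cons _ _ _

lemma C_erase {s : Multiset ℕ} {a : ℕ} (h : a ∈ s) (t : ℕ) :
    C s t = C (s.erase a) t + if t ≤ a then 1 else 0 := by
  conv_lhs => rw [← Multiset.cons_erase h]
  exact C_cons _ _ _

lemma mem_of_C_lt {s : Multiset ℕ} {t : ℕ} (h : C s (t + 1) < C s t) : t ∈ s := by
  by_contra hm
  have : C s t ≤ C s (t + 1) := by
    apply countP_imp
    intro x hx hle
    rcases Nat.eq_or_lt_of_le hle with h' | h'
    · exact absurd (h' ▸ hx) hm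
    · omega
  omega

lemma sum_pos_of_C {s : Multiset ℕ} (h : 1 ≤ C s 1) : 1 ≤ s.sum := by
  rw [C] at h
  obtain ⟨x, hx, hx1⟩ := Multiset.countP_pos.1 (show 0 < s.countP (1 ≤ ·) by omega)
  exact le_trans hx1 (Multiset.single_le_sum (fun y _ => Nat.zero_le y) x hx)

lemma sq_le_sum {s : Multiset ℕ} {j : ℕ} (h : j ≤ C s j) : j * j ≤ s.sum := by
  have h1 : Multiset.card (s.filter (j ≤ ·)) • j ≤ (s.filter (j ≤ ·)).sum :=
    Multiset.card_nsmul_le_sum fun x hx => (Multiset.of_mem_filter hx)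
  have h2 : (s.filter (j ≤ ·)).sum ≤ s.sum := by
    conv_rhs => rw [← Multiset.filter_add_not (j ≤ ·) s]
    rw [Multiset.sum_add]; omega
  have h3 : C s j = Multiset.card (s.filter (j ≤ ·)) := countP_eq_card_filter _ _
  have := Nat.mul_le_mul_right j h
  simp only [smul_eq_mul] at h1
  calc j * j ≤ C s j * j := Nat.mul_le_mul_right j h
    _ = Multiset.card (s.filter (j ≤ ·)) * j := by rw [h3]
    _ ≤ s.sum := le_trans h1 h2

lemma sum_filter_ne_zero (s : Multiset ℕ) : (s.filter (· ≠ 0)).sum = s.sum := by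
  conv_rhs => rw [← Multiset.filter_add_not (· ≠ 0) s]
  rw [Multiset.sum_add]
  have : (s.filter (fun x => ¬ x ≠ 0)).sum = 0 := by
    rw [Multiset.sum_eq_zero_iff]
    intro x hx
    have := Multiset.of_mem_filter hx
    omega
  omega

/-- Durfee number: largest `j` with `C s j ≥ j`. -/
def dur (s : Multiset ℕ) : ℕ := Nat.findGreatest (fun j => j ≤ C s j) (Multiset.card s)

lemma dur_spec (s : Multiset ℕ) : dur s ≤ C s (dur s) := by
  unfold dur
  exact Nat.findGreatest_spec (P := fun j => j ≤ C s j) (m := 0)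
    (Nat.zero_le _) (Nat.zero_le _)

lemma dur_succ (s : Multiset ℕ) : C s (dur s + 1) ≤ dur s := by
  by_cases h : dur s + 1 ≤ Multiset.card s
  · have h2 := Nat.findGreatest_is_greatest (P := fun j => j ≤ C s j)
      (n := Multiset.card s) (k := dur s + 1) (by unfold dur; omega) h
    simp only [not_le] at h2
    omega
  · have := C_le_card s (dur s + 1); omega

lemma dur_eq {s : Multiset ℕ} {j : ℕ} (h1 : j ≤ C s j) (h2 : C s (j + 1) ≤ j) :
    dur s = j := by
  rcases lt_trichotomy (dur s) j with h | h | h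
  · have ha := C_anti s (show dur s + 1 ≤ j from h)
    have := dur_succ s
    omega
  · exact h
  · have ha := C_anti s (show j + 1 ≤ dur s from h)
    have := dur_spec s
    omega

lemma dur_zero_empty {s : Multiset ℕ} (hpos : ∀ x ∈ s, 0 < x) (h : dur s = 0) : s = 0 := by
  have h1 : C s 1 = 0 := by
    have h2 := dur_succ s
    rw [h] at h2
    simpa using h2
  apply Multiset.eq_zero_of_forall_notMem
  intro x hx
  have hx1 : 1 ≤ x := hpos x hx
  have : 0 < C s 1 := Multiset.countP_pos.2 ⟨x, hx, hx1⟩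
  omega

/-- Symmetric characterization of self-conjugate partitions via column counts. -/
def SC (s : Multiset ℕ) : Prop :=
  ∀ v j : ℕ, 1 ≤ v → 1 ≤ j → j ≤ C s v → v ≤ C s j

lemma countP_range_imp {g : ℕ → ℕ} (anti : ∀ {i j : ℕ}, i ≤ j → g j ≤ g i) (v n j : ℕ)
    (h : j < (Multiset.range n).countP (fun i => v ≤ g i)) : v ≤ g j := by
  by_contra hc
  push_neg at hc
  have hcc : (Multiset.range n).countP (fun i => v ≤ g i) ≤ Multiset.card (Multiset.range n) :=
    countP_le_card _ _
  rw [Multiset.card_range] at hcc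
  obtain ⟨r, rfl⟩ : ∃ r, n = j + r := ⟨n - j, by omega⟩
  rw [Multiset.range_add, Multiset.countP_add] at h
  have h1 : (Multiset.range j).countP (fun i => v ≤ g i) ≤ j := by
    have := countP_le_card (fun i => v ≤ g i) (Multiset.range j)
    rwa [Multiset.card_range] at this
  have h2 : ((Multiset.range r).map (j + ·)).countP (fun i => v ≤ g i) = 0 := by
    rw [Multiset.countP_eq_zero]
    intro a ha
    obtain ⟨i, _, rfl⟩ := Multiset.mem_map.1 ha
    intro hv
    exact absurd (le_trans hv (anti (Nat.le_add_right j i))) (by omega)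
  omega

lemma le_countP_range {g : ℕ → ℕ} (v n j : ℕ) (hjn : j < n) (h : ∀ i, i ≤ j → v ≤ g i) :
    j + 1 ≤ (Multiset.range n).countP (fun i => v ≤ g i) := by
  obtain ⟨r, rfl⟩ : ∃ r, n = (j + 1) + r := ⟨n - (j + 1), by omega⟩
  rw [Multiset.range_add, Multiset.countP_add]
  have h1 : (Multiset.range (j + 1)).countP (fun i => v ≤ g i) = j + 1 := by
    rw [Multiset.countP_eq_card.2
      (fun a ha => h a (by have := Multiset.mem_range.1 ha; omega)), Multiset.card_range]
  omega

lemma countP_range_lt (M n : ℕ) (hM : M ≤ n) :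
    (Multiset.range n).countP (fun i => i + 1 ≤ M) = M := by
  induction n with
  | zero =>
    have : M = 0 := by omega
    simp [this]
  | succ k ih =>
    rw [Multiset.range_succ, Multiset.countP_cons]
    by_cases h : M ≤ k
    · rw [ih h, if_neg (by omega)]
      omega
    · have hM' : M = k + 1 := by omega
      subst hM'
      rw [if_pos (by omega)]
      have : (Multiset.range k).countP (fun i => i + 1 ≤ k + 1) = k := by
        rw [Multiset.countP_eq_card.2
          (fun a ha => by have := Multiset.mem_range.1 ha; omega), Multiset.card_range]
      omega

lemma count_add_C (s : Multiset ℕ) (a : ℕ) : C s a = C s (a + 1) + s.count a := by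
  induction s using Multiset.induction with
  | empty => simp [C]
  | cons b t ih =>
    simp only [C, countP_cons, Multiset.count_cons] at ih ⊢
    split_ifs <;> omega

lemma eq_of_C_eq {s t : Multiset ℕ} (hs : ∀ x ∈ s, 0 < x) (ht : ∀ x ∈ t, 0 < x)
    (h : ∀ v, 1 ≤ v → C s v = C t v) : s = t := by
  ext a
  cases a with
  | zero =>
    rw [Multiset.count_eq_zero_of_notMem (fun hh => absurd (hs 0 hh) (by omega)),
      Multiset.count_eq_zero_of_notMem (fun hh => absurd (ht 0 hh) (by omega))]
  | succ b =>
    have h1 := count_add_C s (b + 1)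
    have h2 := count_add_C t (b + 1)
    rw [show b + 1 + 1 = b + 2 by rfl] at h1 h2
    have h3 := h (b + 1) (by omega)
    have h4 := h (b + 2) (by omega)
    omega

lemma conj_parts (n : ℕ) (p : n.Partition) :
    p.conj.parts = ((Multiset.range n).map fun i => p.parts.countP (i + 1 ≤ ·)).filter (· ≠ 0) :=
  rfl

lemma C_conj (n : ℕ) (p : n.Partition) (v : ℕ) (hv : 1 ≤ v) :
    C p.conj.parts v = (Multiset.range n).countP (fun i => v ≤ C p.parts (i + 1)) := by
  rw [C, conj_parts, Multiset.countP_filter, Multiset.countP_map,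
    ← Multiset.countP_eq_card_filter]
  apply Multiset.countP_congr rfl
  intro x _
  apply propext
  constructor
  · intro hh; exact hh.1
  · intro hh
    have hh' : v ≤ p.parts.countP (x + 1 ≤ ·) := hh
    exact ⟨hh', by omega⟩

lemma SC_of_selfConj {n : ℕ} (p : n.Partition) (h : p.conj = p) : SC p.parts := by
  intro v j hv hj hjv
  have hC : C p.parts v = (Multiset.range n).countP (fun i => v ≤ C p.parts (i + 1)) := by
    conv_lhs => rw [← h]
    exact C_conj n p v hv
  have hkey : j - 1 < (Multiset.range n).countP (fun i => v ≤ C p.parts (i + 1)) := by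
    omega
  have h2 := countP_range_imp (g := fun i => C p.parts (i + 1))
    (fun {i j} hij => C_anti _ (by omega)) v n (j - 1) (by simpa using hkey)
  have h3 : v ≤ C p.parts (j - 1 + 1) := h2
  have hj1 : j - 1 + 1 = j := by omega
  rw [hj1] at h3
  exact h3

lemma selfConj_of_SC {n : ℕ} (p : n.Partition) (h : SC p.parts) : p.conj = p := by
  apply Nat.Partition.ext
  apply eq_of_C_eq (fun x hx => p.conj.parts_pos hx) (fun x hx => p.parts_pos hx)
  intro v hv
  rw [C_conj n p v hv]
  have hcount : ∀ x ∈ Multiset.range n,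
      ((fun i => v ≤ C p.parts (i + 1)) x = (fun i => i + 1 ≤ C p.parts v) x) := by
    intro i _
    apply propext
    constructor
    · intro hh; exact h (i + 1) v (by omega) hv hh
    · intro hh; exact h v (i + 1) hv (by omega) hh
  rw [Multiset.countP_congr rfl hcount]
  apply countP_range_lt
  calc C p.parts v ≤ Multiset.card p.parts := C_le_card _ _
    _ ≤ p.parts.sum := card_le_sum _ (fun x hx => p.parts_pos hx)
    _ = n := p.parts_sum

/-- The case distinguisher: the smallest diagonal hook has length 1. -/
def Q (s : Multiset ℕ) : Prop := 1 ≤ dur s ∧ C s (dur s + 1) + 1 ≤ dur s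

instance : DecidablePred Q := fun s => by unfold Q; infer_instance

/-- Case A surgery: add a diagonal cell (replace a part `d` by `d+1`). -/
def sA (s : Multiset ℕ) : Multiset ℕ := (dur s + 1) ::ₘ s.erase (dur s)

/-- Case B surgery: remove the diagonal corner (replace the part `d` by `d-1`). -/
def sB (s : Multiset ℕ) : Multiset ℕ := ((dur s - 1) ::ₘ s.erase (dur s)).filter (· ≠ 0)

section CaseA

variable {s : Multiset ℕ} (hpos : ∀ x ∈ s, 0 < x) (hsc : SC s) (hA : ¬ Q s)

lemma CA (hA : ¬ Q s) : C s (dur s + 1) = dur s := by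
  unfold Q at hA
  push_neg at hA
  have h1 := dur_succ s
  by_cases h : 1 ≤ dur s
  · have := hA h; omega
  · have h0 : dur s = 0 := by omega
    rw [h0] at h1 ⊢
    omega

lemma memA (hsc : SC s) (hA : ¬ Q s) (hd : 1 ≤ dur s) : dur s ∈ s := by
  have h1 : C s (dur s + 1) = dur s := CA hA
  have h2 : dur s + 1 ≤ C s (dur s) := hsc (dur s + 1) (dur s) (by omega) hd (by omega)
  exact mem_of_C_lt (by omega)

lemma C_sA (hpos : ∀ x ∈ s, 0 < x) (hsc : SC s) (hA : ¬ Q s) (t : ℕ) (ht : 1 ≤ t) :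
    C (sA s) t = C s t + if t = dur s + 1 then 1 else 0 := by
  unfold sA
  rw [C_cons]
  by_cases hd : 1 ≤ dur s
  · have hm := memA hsc hA hd
    have he := C_erase hm t
    split_ifs at he ⊢ <;> omega
  · have h0 : dur s = 0 := by omega
    have hni : dur s ∉ s := by rw [h0]; intro hh; exact absurd (hpos 0 hh) (by omega)
    rw [Multiset.erase_of_notMem hni, h0]
    split_ifs <;> omega

lemma sum_sA (hpos : ∀ x ∈ s, 0 < x) (hsc : SC s) (hA : ¬ Q s) : (sA s).sum = s.sum + 1 := by
  unfold sA
  rw [Multiset.sum_cons]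
  by_cases hd : 1 ≤ dur s
  · have hm := memA hsc hA hd
    have : s.sum = dur s + (s.erase (dur s)).sum := by
      conv_lhs => rw [← Multiset.cons_erase hm]
      rw [Multiset.sum_cons]
    omega
  · have h0 : dur s = 0 := by omega
    have hs0 : s = 0 := dur_zero_empty hpos h0
    subst hs0
    simp [h0]

lemma pos_sA (hpos : ∀ x ∈ s, 0 < x) : ∀ x ∈ sA s, 0 < x := by
  intro x hx
  rcases Multiset.mem_cons.1 hx with h | h
  · omega
  · exact hpos x (Multiset.mem_of_mem_erase h)

lemma card_sA (hpos : ∀ x ∈ s, 0 < x) (hsc : SC s) (hA : ¬ Q s) :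
    Multiset.card (sA s) ≤ Multiset.card s + 1 := by
  unfold sA
  rw [Multiset.card_cons]
  have := Multiset.card_le_card (Multiset.erase_le (dur s) s)
  omega

lemma card_sA_of_dur (hsc : SC s) (hA : ¬ Q s) (hd : 1 ≤ dur s) :
    Multiset.card (sA s) = Multiset.card s := by
  have hm := memA hsc hA hd
  have hc : 0 < Multiset.card s := Multiset.card_pos_iff_exists_mem.2 ⟨_, hm⟩
  unfold sA
  rw [Multiset.card_cons, Multiset.card_erase_of_mem hm]
  exact Nat.succ_pred_eq_of_pos hc

lemma mem_sA (hd : dur s + 1 ≤ 0 ∨ True) : ∀ x ∈ sA s, x = dur s + 1 ∨ x ∈ s := by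
  intro x hx
  rcases Multiset.mem_cons.1 hx with h | h
  · exact Or.inl h
  · exact Or.inr (Multiset.mem_of_mem_erase h)

lemma SC_sA (hpos : ∀ x ∈ s, 0 < x) (hsc : SC s) (hA : ¬ Q s) : SC (sA s) := by
  have hCA : C s (dur s + 1) = dur s := CA hA
  intro v j hv hj hjv
  rw [C_sA hpos hsc hA v hv] at hjv
  rw [C_sA hpos hsc hA j hj]
  by_cases hvd : v = dur s + 1 <;> by_cases hjd : j = dur s + 1
  · subst hvd; subst hjd
    rw [if_pos rfl] at hjv ⊢
    omega
  · -- v = d+1, j ≠ d+1 : hyp j ≤ d+1 so j ≤ d; want d+1 ≤ C s j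
    subst hvd
    rw [if_pos rfl] at hjv
    rw [if_neg hjd]
    have hjle : j ≤ dur s := by omega
    have := hsc (dur s + 1) j (by omega) hj (by omega)
    omega
  · -- v ≠ d+1, j = d+1 : hyp d+1 ≤ C s v ; want v ≤ d+1
    subst hjd
    rw [if_neg hvd] at hjv
    rw [if_pos rfl]
    have := hsc v (dur s + 1) hv (by omega) (by omega)
    omega
  · rw [if_neg hvd] at hjv
    rw [if_neg hjd]
    have := hsc v j hv hj (by omega)
    omega

lemma dur_sA (hpos : ∀ x ∈ s, 0 < x) (hsc : SC s) (hA : ¬ Q s) :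
    dur (sA s) = dur s + 1 := by
  have hCA : C s (dur s + 1) = dur s := CA hA
  apply dur_eq
  · rw [C_sA hpos hsc hA _ (by omega), if_pos rfl]; omega
  · rw [C_sA hpos hsc hA _ (by omega), if_neg (by omega)]
    have := C_anti s (show dur s + 1 ≤ dur s + 1 + 1 by omega)
    omega

lemma Q_sA (hpos : ∀ x ∈ s, 0 < x) (hsc : SC s) (hA : ¬ Q s) : Q (sA s) := by
  have hCA : C s (dur s + 1) = dur s := CA hA
  constructor
  · rw [dur_sA hpos hsc hA]; omega
  · rw [dur_sA hpos hsc hA, C_sA hpos hsc hA _ (by omega), if_neg (by omega)]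
    have := C_anti s (show dur s + 1 ≤ dur s + 1 + 1 by omega)
    omega

lemma recA (hpos : ∀ x ∈ s, 0 < x) (hsc : SC s) (hA : ¬ Q s) :
    s = (dur s ::ₘ (sA s).erase (dur s + 1)).filter (· ≠ 0) := by
  unfold sA
  rw [Multiset.erase_cons_head]
  by_cases hd : 1 ≤ dur s
  · have hm := memA hsc hA hd
    rw [Multiset.cons_erase hm]
    rw [Multiset.filter_eq_self.2 (fun a ha => by have := hpos a ha; omega)]
  · have h0 : dur s = 0 := by omega
    have hs0 : s = 0 := dur_zero_empty hpos h0
    subst hs0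
    rw [h0]
    simp

end CaseA

section CaseB

variable {s : Multiset ℕ}

lemma CB (hsc : SC s) (hB : Q s) : C s (dur s) = dur s := by
  have hd := hB.1
  have h1 := hB.2
  have h2 := dur_spec s
  by_contra hne
  have h3 : dur s + 1 ≤ C s (dur s) := by omega
  have := hsc (dur s) (dur s + 1) (by omega) (by omega) h3
  omega

lemma memB (hsc : SC s) (hB : Q s) : dur s ∈ s := by
  have h1 := CB hsc hB
  have h2 := hB.2
  exact mem_of_C_lt (by omega)

lemma C_sB (hpos : ∀ x ∈ s, 0 < x) (hsc : SC s) (hB : Q s) (t : ℕ) (ht : 1 ≤ t) :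
    C (sB s) t + (if t = dur s then 1 else 0) = C s t := by
  have hd := hB.1
  have hm := memB hsc hB
  have he := C_erase hm t
  unfold sB
  have hfil : C (((dur s - 1) ::ₘ s.erase (dur s)).filter (· ≠ 0)) t
      = C ((dur s - 1) ::ₘ s.erase (dur s)) t := by
    rw [C, Multiset.countP_filter]
    apply Multiset.countP_congr rfl
    intro x _
    apply propext
    constructor
    · intro hh; exact hh.1
    · intro hh; exact ⟨hh, by omega⟩
  rw [hfil, C_cons]
  split_ifs at he ⊢ <;> omega

lemma sum_sB (hpos : ∀ x ∈ s, 0 < x) (hsc : SC s) (hB : Q s) : (sB s).sum + 1 = s.sum := by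
  have hd := hB.1
  have hm := memB hsc hB
  unfold sB
  rw [sum_filter_ne_zero, Multiset.sum_cons]
  have : s.sum = dur s + (s.erase (dur s)).sum := by
    conv_lhs => rw [← Multiset.cons_erase hm]
    rw [Multiset.sum_cons]
  omega

lemma pos_sB : ∀ x ∈ sB s, 0 < x := by
  intro x hx
  have := Multiset.of_mem_filter hx
  omega

lemma card_sB (hsc : SC s) (hB : Q s) : Multiset.card (sB s) ≤ Multiset.card s := by
  have hm := memB hsc hB
  unfold sB
  have h1 := Multiset.card_le_card (Multiset.filter_le (· ≠ 0) ((dur s - 1) ::ₘ s.erase (dur s)))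
  rw [Multiset.card_cons, Multiset.card_erase_of_mem hm, Nat.pred_eq_sub_one] at h1
  have : 0 < Multiset.card s := Multiset.card_pos_iff_exists_mem.2 ⟨_, hm⟩
  omega

lemma mem_sB : ∀ x ∈ sB s, x = dur s - 1 ∨ x ∈ s := by
  intro x hx
  have hx' := Multiset.mem_of_mem_filter hx
  rcases Multiset.mem_cons.1 hx' with h | h
  · exact Or.inl h
  · exact Or.inr (Multiset.mem_of_mem_erase h)

lemma SC_sB (hpos : ∀ x ∈ s, 0 < x) (hsc : SC s) (hB : Q s) : SC (sB s) := by
  have hd := hB.1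
  have hCB := CB hsc hB
  have hB2 := hB.2
  intro v j hv hj hjv
  have hcv := C_sB hpos hsc hB v hv
  have hcj := C_sB hpos hsc hB j hj
  by_cases hvj : v = j
  · subst hvj; omega
  by_cases hvd : v = dur s <;> by_cases hjd : j = dur s
  · omega
  · -- v = d, j ≠ d : hyp j ≤ C sB d = d - 1 ; want d ≤ C sB j = C s j
    subst hvd
    rw [if_pos rfl] at hcv
    rw [if_neg hjd] at hcj
    have := hsc (dur s) j hd hj (by omega)
    omega
  · -- v ≠ d, j = d : hyp d ≤ C sB v = C s v ⇒ v ≤ C s d = d ⇒ v ≤ d - 1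
    subst hjd
    rw [if_neg hvd] at hcv
    rw [if_pos rfl] at hcj
    have := hsc v (dur s) hv hd (by omega)
    omega
  · rw [if_neg hvd] at hcv
    rw [if_neg hjd] at hcj
    have := hsc v j hv hj (by omega)
    omega

lemma dur_sB (hpos : ∀ x ∈ s, 0 < x) (hsc : SC s) (hB : Q s) :
    dur (sB s) = dur s - 1 := by
  have hd := hB.1
  have hCB := CB hsc hB
  apply dur_eq
  · by_cases hd2 : 2 ≤ dur s
    · have h1 := C_sB hpos hsc hB (dur s - 1) (by omega)
      rw [if_neg (by omega)] at h1
      have h2 := C_anti s (show dur s - 1 ≤ dur s by omega) (i := dur s - 1) (j := dur s)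
      omega
    · have h1 : dur s = 1 := by omega
      rw [h1]
      simp [C]
  · rw [show dur s - 1 + 1 = dur s by omega]
    have h1 := C_sB hpos hsc hB (dur s) (by omega)
    rw [if_pos rfl] at h1
    omega

lemma notQ_sB (hpos : ∀ x ∈ s, 0 < x) (hsc : SC s) (hB : Q s) : ¬ Q (sB s) := by
  have hd := hB.1
  have hCB := CB hsc hB
  intro hq
  have hq1 := hq.1
  have hq2 := hq.2
  rw [dur_sB hpos hsc hB] at hq1 hq2
  rw [show dur s - 1 + 1 = dur s by omega] at hq2
  have h1 := C_sB hpos hsc hB (dur s) (by omega)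
  rw [if_pos rfl] at h1
  omega

lemma recB (hpos : ∀ x ∈ s, 0 < x) (hsc : SC s) (hB : Q s) :
    s = dur s ::ₘ (sB s).erase (dur s - 1) := by
  have hd := hB.1
  have hm := memB hsc hB
  unfold sB
  by_cases hd2 : 2 ≤ dur s
  · rw [Multiset.filter_eq_self.2 (fun a ha => by
      rcases Multiset.mem_cons.1 ha with h | h
      · omega
      · have := hpos a (Multiset.mem_of_mem_erase h); omega)]
    rw [Multiset.erase_cons_head]
    exact (Multiset.cons_erase hm).symm
  · have h1 : dur s = 1 := by omega
    rw [h1]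
    rw [Multiset.filter_cons_of_neg _ (by simp)]
    rw [Multiset.filter_eq_self.2 (fun a ha => by
      have := hpos a (Multiset.mem_of_mem_erase ha); omega)]
    have : (s.erase 1).erase 0 = s.erase 1 := by
      apply Multiset.erase_of_notMem
      intro hh
      have := hpos 0 (Multiset.mem_of_mem_erase hh)
      omega
    rw [this]
    rw [h1] at hm
    exact (Multiset.cons_erase hm).symm

end CaseB

end WAux

namespace WAux

lemma dur_succ_le {s : Multiset ℕ} {m N : ℕ} (hs : s.sum ≤ N) (hN : N < m * m) :
    dur s + 1 ≤ m := by
  have h1 := sq_le_sum (dur_spec s)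
  by_contra hc
  push_neg at hc
  have := Nat.mul_le_mul (show m ≤ dur s by omega) (show m ≤ dur s by omega)
  omega

lemma mem_sA' {s : Multiset ℕ} : ∀ x ∈ sA s, x = dur s + 1 ∨ x ∈ s := by
  intro x hx
  rcases Multiset.mem_cons.1 hx with h | h
  · exact Or.inl h
  · exact Or.inr (Multiset.mem_of_mem_erase h)

lemma card_sA_le {s : Multiset ℕ} {m : ℕ} (hpos : ∀ x ∈ s, 0 < x) (hsc : SC s) (hA : ¬ Q s)
    (hm : 1 ≤ m) (hcard : Multiset.card s ≤ m) : Multiset.card (sA s) ≤ m := by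
  by_cases hd : 1 ≤ dur s
  · rw [card_sA_of_dur hsc hA hd]; exact hcard
  · have hs0 : s = 0 := dur_zero_empty hpos (by omega)
    subst hs0
    unfold sA
    simp only [Multiset.erase_zero, Multiset.card_cons, Multiset.card_zero]
    omega

/-- The boxed self-conjugate partition type appearing in `wCount`. -/
abbrev box (m N i : ℕ) :=
  {α : (N - 2 * i).Partition // α.conj = α ∧ α.parts.card ≤ m ∧ ∀ j ∈ α.parts, j ≤ m}

lemma wCount_eq (m N : ℕ) : wCount m N = Fintype.card (Σ i : Fin (N / 2 + 1), box m N i) := by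
  rw [wCount, Fintype.card_sigma, ← Fin.sum_univ_eq_sum_range]

/-- Construct a partition from a multiset. -/
def mkPart (k : ℕ) (s : Multiset ℕ) (h1 : ∀ x ∈ s, 0 < x) (h2 : s.sum = k) : k.Partition :=
  ⟨s, fun hi => h1 _ hi, h2⟩

/-- The injection: adds/removes a diagonal cell. -/
def step (m n : ℕ) (hn : n + 1 ≤ m ^ 2) :
    (Σ i : Fin (n / 2 + 1), box m n i) → Σ i : Fin ((n + 1) / 2 + 1), box m (n + 1) i
  | ⟨⟨i, hi⟩, ⟨α, hc, hcard, hbd⟩⟩ =>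
    if hQ : Q α.parts then
      ⟨⟨i + 1, by
          have hsc := SC_of_selfConj _ hc
          have hk1 : 1 ≤ α.parts.sum :=
            sum_pos_of_C (le_trans hQ.1 (le_trans (dur_spec _) (C_anti _ hQ.1)))
          have h2 : α.parts.sum = n - 2 * i := α.parts_sum
          omega⟩,
       ⟨mkPart (n + 1 - 2 * (i + 1)) (sB α.parts) pos_sB (by
          have hpos : ∀ y ∈ α.parts, 0 < y := fun y hy => α.parts_pos hy
          have hsc := SC_of_selfConj _ hc
          have hk1 : 1 ≤ α.parts.sum :=
            sum_pos_of_C (le_trans hQ.1 (le_trans (dur_spec _) (C_anti _ hQ.1)))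
          have h1 := sum_sB hpos hsc hQ
          have h2 : α.parts.sum = n - 2 * i := α.parts_sum
          omega),
        by
          have hpos : ∀ y ∈ α.parts, 0 < y := fun y hy => α.parts_pos hy
          have hsc := SC_of_selfConj _ hc
          refine ⟨selfConj_of_SC _ (SC_sB hpos hsc hQ), le_trans (card_sB hsc hQ) hcard, ?_⟩
          intro j hj
          rcases mem_sB j hj with h | h
          · have := hbd (dur α.parts) (memB hsc hQ)
            omega
          · exact hbd j h⟩⟩
    else
      ⟨⟨i, by omega⟩,
       ⟨mkPart (n + 1 - 2 * i) (sA α.parts) (pos_sA (fun y hy => α.parts_pos hy)) (by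
          have hpos : ∀ y ∈ α.parts, 0 < y := fun y hy => α.parts_pos hy
          have hsc := SC_of_selfConj _ hc
          have h1 := sum_sA hpos hsc hQ
          have h2 : α.parts.sum = n - 2 * i := α.parts_sum
          omega),
        by
          have hpos : ∀ y ∈ α.parts, 0 < y := fun y hy => α.parts_pos hy
          have hsc := SC_of_selfConj _ hc
          have hm1 : 1 ≤ m := by
            rcases Nat.eq_zero_or_pos m with h | h
            · subst h; simp at hn
            · exact h
          have hdm : dur α.parts + 1 ≤ m := by
            have h2 : α.parts.sum = n - 2 * i := α.parts_sum
            refine dur_succ_le (N := n) (by omega) ?_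
            have : m ^ 2 = m * m := sq m
            omega
          refine ⟨selfConj_of_SC _ (SC_sA hpos hsc hQ), card_sA_le hpos hsc hQ hm1 hcard, ?_⟩
          intro j hj
          rcases mem_sA' j hj with h | h
          · omega
          · exact hbd j h⟩⟩

lemma step_inj (m n : ℕ) (hn : n + 1 ≤ m ^ 2) : Function.Injective (step m n hn) := by
  rintro ⟨⟨i, hi⟩, ⟨α, hcα, hcardα, hbdα⟩⟩ ⟨⟨j, hj⟩, ⟨β, hcβ, hcardβ, hbdβ⟩⟩ hxy
  have hposα : ∀ y ∈ α.parts, 0 < y := fun y hy => α.parts_pos hy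
  have hposβ : ∀ y ∈ β.parts, 0 < y := fun y hy => β.parts_pos hy
  have hscα := SC_of_selfConj _ hcα
  have hscβ := SC_of_selfConj _ hcβ
  by_cases hQα : Q α.parts <;> by_cases hQβ : Q β.parts <;>
    simp only [step] at hxy
  · rw [dif_pos hQα, dif_pos hQβ] at hxy
    obtain ⟨h1, h2⟩ := Sigma.ext_iff.1 hxy
    have h1' : i + 1 = j + 1 := congrArg Fin.val h1
    have hij : i = j := by omega
    subst hij
    have h2' := eq_of_heq h2
    have hparts : sB α.parts = sB β.parts := congrArg (fun q => q.1.parts) h2'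
    have e1 := dur_sB hposα hscα hQα
    have e2 := dur_sB hposβ hscβ hQβ
    rw [hparts] at e1
    have hd : dur α.parts = dur β.parts := by
      have := hQα.1; have := hQβ.1; omega
    have hab : α.parts = β.parts := by
      rw [recB hposα hscα hQα, recB hposβ hscβ hQβ, hparts, hd]
    have heq : α = β := Nat.Partition.ext hab
    subst heq
    rfl
  · -- x is B, y is A : contradiction
    rw [dif_pos hQα, dif_neg hQβ] at hxy
    obtain ⟨h1, h2⟩ := Sigma.ext_iff.1 hxy
    have h1' : i + 1 = j := congrArg Fin.val h1
    subst h1'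
    have h2' := eq_of_heq h2
    have hparts : sB α.parts = sA β.parts := congrArg (fun q => q.1.parts) h2'
    have hqa := Q_sA hposβ hscβ hQβ
    rw [← hparts] at hqa
    exact absurd hqa (notQ_sB hposα hscα hQα)
  · -- x is A, y is B : contradiction
    rw [dif_neg hQα, dif_pos hQβ] at hxy
    obtain ⟨h1, h2⟩ := Sigma.ext_iff.1 hxy
    have h1' : i = j + 1 := congrArg Fin.val h1
    subst h1'
    have h2' := eq_of_heq h2
    have hparts : sA α.parts = sB β.parts := congrArg (fun q => q.1.parts) h2'
    have hqa := Q_sA hposα hscα hQα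
    rw [hparts] at hqa
    exact absurd hqa (notQ_sB hposβ hscβ hQβ)
  · rw [dif_neg hQα, dif_neg hQβ] at hxy
    obtain ⟨h1, h2⟩ := Sigma.ext_iff.1 hxy
    have h1' : i = j := congrArg Fin.val h1
    subst h1'
    have h2' := eq_of_heq h2
    have hparts : sA α.parts = sA β.parts := congrArg (fun q => q.1.parts) h2'
    have e1 := dur_sA hposα hscα hQα
    have e2 := dur_sA hposβ hscβ hQβ
    rw [hparts] at e1
    have hd : dur α.parts = dur β.parts := by omega
    have hab : α.parts = β.parts := by
      rw [recA hposα hscα hQα, recA hposβ hscβ hQβ, hparts, hd]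
    have heq : α = β := Nat.Partition.ext hab
    subst heq
    rfl

end WAux

/-- The sequence `w_0(m), w_1(m), …, w_{m²}(m)` is weakly increasing. -/
theorem wCount_mono (m n : ℕ) (hn : n + 1 ≤ m ^ 2) : wCount m n ≤ wCount m (n + 1) := by
  rw [WAux.wCount_eq m n, WAux.wCount_eq m (n + 1)]
  exact Fintype.card_le_of_injective (WAux.step m n hn) (WAux.step_inj m n hn)
end

section
/- The coefficients of the polynomial $\mathcal{B}_m(q) = (1 + q^2 + q^4 + \dots + q^N)\prod_{i=1}^m(1+q^{2i-1})$, where $N = m^2-1$ if $m$ is odd and $N = m^2$ if $m$ is even, form a symmetric and unimodal sequence. -/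
open Polynomial Finset

/-- `ℬ_m(q) = (1 + q² + q⁴ + ⋯ + q^N) · ∏_{i=1}^m (1 + q^{2i-1})`, where `N = m²-1` for
odd `m` and `N = m²` for even `m`. -/
noncomputable def Bpoly (m : ℕ) : Polynomial ℕ :=
  (∑ i ∈ Finset.range ((if Odd m then m ^ 2 - 1 else m ^ 2) / 2 + 1), X ^ (2 * i)) *
    ∏ i ∈ Finset.range m, (1 + X ^ (2 * i + 1))

/-! ### Auxiliary lemmas -/

lemma ones_coeff (M a : ℕ) : (∑ j ∈ range M, (X:ℕ[X])^j).coeff a = if a < M then 1 else 0 := by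
  rw [finset_sum_coeff]
  simp only [coeff_X_pow]
  rw [Finset.sum_ite_eq (range M) a (fun _ => 1)]
  simp [Finset.mem_range]

lemma evens_mul_one_add_X (t : ℕ) :
    (∑ i ∈ range (t+1), (X:ℕ[X])^(2*i)) * (1 + X) = ∑ j ∈ range (2*t+2), X^j := by
  induction t with
  | zero => norm_num [Finset.sum_range_succ]
  | succ t ih =>
    rw [Finset.sum_range_succ, add_mul, ih,
      show 2*(t+1)+2 = (2*t+2+1)+1 from by ring,
      Finset.sum_range_succ _ (2*t+2+1), Finset.sum_range_succ _ (2*t+2)]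
    ring

lemma coeff_ones_mul (H : ℕ[X]) (M n : ℕ) (h : n < M) :
    ((∑ j ∈ range M, (X:ℕ[X])^j) * H).coeff n = ∑ k ∈ range (n+1), H.coeff k := by
  rw [coeff_mul,
    Finset.Nat.sum_antidiagonal_eq_sum_range_succ
      (fun x y => (∑ j ∈ range M, (X:ℕ[X])^j).coeff x * H.coeff y)]
  rw [Finset.sum_congr rfl (fun k hk => by
    rw [ones_coeff, if_pos (by rw [Finset.mem_range] at hk; omega), one_mul])]
  exact Finset.sum_range_reflect (fun k => H.coeff k) (n+1)

lemma N_even (m : ℕ) :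
    2 * ((if Odd m then m ^ 2 - 1 else m ^ 2) / 2) = (if Odd m then m ^ 2 - 1 else m ^ 2) := by
  rcases Nat.even_or_odd m with he | ho
  · rw [if_neg (by simp [Nat.not_odd_iff_even.mpr he])]
    exact Nat.two_mul_div_two_of_even (Nat.even_pow.mpr ⟨he, by norm_num⟩)
  · rw [if_pos ho]
    have : Odd (m^2) := ho.pow
    exact Nat.two_mul_div_two_of_even (Nat.Odd.sub_odd this odd_one)

lemma Bpoly_factor (m : ℕ) (hm : 1 ≤ m) :
    Bpoly m = (∑ j ∈ range ((if Odd m then m ^ 2 - 1 else m ^ 2) + 2), (X:ℕ[X])^j) *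
      ∏ i ∈ range (m-1), (1 + X^(2*i+3)) := by
  obtain ⟨m', rfl⟩ : ∃ m', m = m' + 1 := ⟨m - 1, by omega⟩
  unfold Bpoly
  rw [Finset.prod_range_succ']
  have h0 : (1:ℕ[X]) + X ^ (2*0+1) = 1 + X := by norm_num
  rw [h0]
  have h1 : ∀ i, (1:ℕ[X]) + X ^ (2*(i+1)+1) = 1 + X^(2*i+3) := by intro i; ring_nf
  simp only [h1]
  rw [show (∑ i ∈ Finset.range ((if Odd (m'+1) then (m'+1) ^ 2 - 1 else (m'+1) ^ 2) / 2 + 1),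
        (X:ℕ[X]) ^ (2 * i)) * ((∏ i ∈ range m', (1 + X^(2*i+3))) * (1+X))
      = ((∑ i ∈ Finset.range ((if Odd (m'+1) then (m'+1) ^ 2 - 1 else (m'+1) ^ 2) / 2 + 1),
        (X:ℕ[X]) ^ (2 * i)) * (1+X)) * ∏ i ∈ range m', (1 + X^(2*i+3)) from by ring]
  rw [evens_mul_one_add_X]
  have hN := N_even (m'+1)
  congr 2
  rw [hN]

lemma reflect_sum {α : Type*} (s : Finset α) (f : α → ℕ[X]) (N : ℕ) :
    reflect N (∑ i ∈ s, f i) = ∑ i ∈ s, reflect N (f i) := by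
  classical
  induction s using Finset.induction with
  | empty => simp [reflect_zero]
  | insert _ _ h ih => rw [Finset.sum_insert h, Finset.sum_insert h, reflect_add, ih]

lemma sum_odds (m : ℕ) : ∑ i ∈ range m, (2*i+1) = m^2 := by
  induction m with
  | zero => simp
  | succ m ih => rw [Finset.sum_range_succ, ih]; ring

lemma reflect_evens (t : ℕ) :
    reflect (2*t) (∑ i ∈ range (t+1), (X:ℕ[X])^(2*i)) = ∑ i ∈ range (t+1), (X:ℕ[X])^(2*i) := by
  rw [reflect_sum]
  have h : ∀ i ∈ range (t+1), reflect (2*t) ((X:ℕ[X])^(2*i)) = X^(2*(t-i)) := by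
    intro i hi
    rw [Finset.mem_range] at hi
    rw [reflect_monomial, revAt_le (by omega)]
    congr 1
    omega
  rw [Finset.sum_congr rfl h]
  exact Finset.sum_range_reflect (fun i => (X:ℕ[X])^(2*i)) (t+1)

lemma natDegree_prod_odds_le (m : ℕ) :
    (∏ i ∈ range m, ((1:ℕ[X]) + X^(2*i+1))).natDegree ≤ m^2 := by
  refine le_trans (natDegree_prod_le _ _) ?_
  rw [← sum_odds m]
  refine Finset.sum_le_sum (fun i _ => ?_)
  refine le_trans (natDegree_add_le _ _) ?_
  simp [natDegree_X_pow]

lemma reflect_prod_odds (m : ℕ) :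
    reflect (m^2) (∏ i ∈ range m, ((1:ℕ[X]) + X^(2*i+1))) =
      ∏ i ∈ range m, ((1:ℕ[X]) + X^(2*i+1)) := by
  induction m with
  | zero => simpa using reflect_one 0
  | succ m ih =>
    rw [Finset.prod_range_succ, show (m+1)^2 = m^2 + (2*m+1) from by ring,
      reflect_mul _ _ (natDegree_prod_odds_le m)
        (le_trans (natDegree_add_le _ _) (by simp [natDegree_X_pow])),
      ih, reflect_add, reflect_one, reflect_monomial, revAt_le (le_refl _)]
    simp [add_comm]

lemma natDegree_evens_le (t : ℕ) :
    (∑ i ∈ range (t+1), (X:ℕ[X])^(2*i)).natDegree ≤ 2*t := by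
  refine natDegree_sum_le_of_forall_le _ _ (fun i hi => ?_)
  rw [Finset.mem_range] at hi
  rw [natDegree_X_pow]
  omega

lemma Bpoly_reflect (m : ℕ) :
    reflect ((if Odd m then m ^ 2 - 1 else m ^ 2) + m^2) (Bpoly m) = Bpoly m := by
  have hN := N_even m
  unfold Bpoly
  rw [reflect_mul _ _ (F := (if Odd m then m ^ 2 - 1 else m ^ 2)) (G := m^2)
      (le_trans (natDegree_evens_le _) (by omega)) (natDegree_prod_odds_le m),
    reflect_prod_odds]
  congr 1
  have h2 := reflect_evens ((if Odd m then m ^ 2 - 1 else m ^ 2) / 2)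
  rw [hN] at h2
  exact h2

/-! ### Main theorem -/

/-- The coefficients of `ℬ_m(q)` are symmetric and unimodal.  Here
`d = N + m²` is the degree of `ℬ_m(q)`. -/
theorem Bpoly_symmetric_unimodal (m : ℕ) :
    ∀ d : ℕ, d = (if Odd m then m ^ 2 - 1 else m ^ 2) + m ^ 2 →
      (∀ j ≤ d, (Bpoly m).coeff j = (Bpoly m).coeff (d - j)) ∧
      ∃ k ≤ d, (∀ i j, i ≤ j → j ≤ k → (Bpoly m).coeff i ≤ (Bpoly m).coeff j) ∧
        (∀ i j, k ≤ i → i ≤ j → j ≤ d → (Bpoly m).coeff j ≤ (Bpoly m).coeff i) := by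
  intro d hd
  set N := (if Odd m then m ^ 2 - 1 else m ^ 2) with hNd
  -- Symmetry
  have hsymm : ∀ j ≤ d, (Bpoly m).coeff j = (Bpoly m).coeff (d - j) := by
    intro j hj
    have h := Bpoly_reflect m
    rw [← hd] at h
    conv_lhs => rw [← h]
    rw [coeff_reflect, revAt_le hj]
  refine ⟨hsymm, ?_⟩
  rcases Nat.eq_zero_or_pos m with hm0 | hm1
  · -- m = 0 : d = 0, trivial
    have hd0 : d = 0 := by subst hm0; simpa [hNd] using hd
    refine ⟨0, by omega, ?_, ?_⟩
    · intro i j hij hj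
      have : i = j := by omega
      subst this; exact le_refl _
    · intro i j hi hij hj
      have : i = j := by omega
      subst this; exact le_refl _
  · -- m ≥ 1
    have hmono : ∀ i j : ℕ, i ≤ j → j ≤ N + 1 → (Bpoly m).coeff i ≤ (Bpoly m).coeff j := by
      intro i j hij hj
      rw [Bpoly_factor m hm1, ← hNd]
      rw [coeff_ones_mul _ _ i (by omega), coeff_ones_mul _ _ j (by omega)]
      exact Finset.sum_le_sum_of_subset (Finset.range_subset_range.mpr (by omega))
    have hkN : m^2 ≤ N + 1 := by
      rcases Nat.even_or_odd m with he | ho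
      · have : N = m^2 := by rw [hNd, if_neg (by simp [Nat.not_odd_iff_even.mpr he])]
        omega
      · have h1 : 1 ≤ m^2 := Nat.one_le_pow _ _ (by omega)
        have : N = m^2 - 1 := by rw [hNd, if_pos ho]
        omega
    refine ⟨m^2, by omega, ?_, ?_⟩
    · intro i j hij hj
      exact hmono i j hij (by omega)
    · intro i j hi hij hj
      rw [hsymm i (by omega), hsymm j hj]
      exact hmono (d - j) (d - i) (by omega) (by omega)
end

section
/- For $r \ge 0$, the quantity $p_n(\ell,m,r) = \sum_{\lambda} \binom{v(\lambda)}{r}$, summed over partitions $\lambda$ of $n$ fitting in the $\ell \times m$ rectangle, where $v(\lambda)$ is the number of distinct part sizes of $\lambda$, satisfies the symmetry $p_n(\ell,m,r) = p_{\ell m - n + r}(\ell,m,r)$. -/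
namespace PrAux

/-! ### Sequences in a box with marked descents -/

/-- extended row values: value of `α` padded with zeros. -/
def aext (m ℓ : ℕ) (α : Fin m → Fin (ℓ+1)) (k : ℕ) : ℕ :=
  if h : k < m then (α ⟨k, h⟩ : ℕ) else 0

lemma aext_le (m ℓ α k) : aext m ℓ α k ≤ ℓ := by
  unfold aext; split
  · exact Nat.lt_succ_iff.mp (Fin.is_lt _)
  · exact Nat.zero_le _

lemma aext_val (m ℓ : ℕ) (α : Fin m → Fin (ℓ+1)) (j : Fin m) :
    aext m ℓ α (j : ℕ) = α j := by
  unfold aext; rw [dif_pos j.isLt]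

lemma aext_top (m ℓ : ℕ) (α : Fin m → Fin (ℓ+1)) (k : ℕ) (h : ¬ k < m) :
    aext m ℓ α k = 0 := by
  unfold aext; rw [dif_neg h]

/-- The set of pairs (antitone sequence in a box, marked descents). -/
def Fset (ℓ m r n : ℕ) : Finset ((Fin m → Fin (ℓ+1)) × (Fin m → Bool)) :=
  Finset.univ.filter fun x =>
    (∀ j : Fin m, aext m ℓ x.1 ((j:ℕ)+1) ≤ aext m ℓ x.1 (j:ℕ)) ∧
    (∑ j ∈ Finset.range m, aext m ℓ x.1 j) = n ∧
    (∑ j : Fin m, (if x.2 j then 1 else 0)) = r ∧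
    ∀ j : Fin m, x.2 j = true → aext m ℓ x.1 ((j:ℕ)+1) < aext m ℓ x.1 (j:ℕ)

lemma mem_Fset {ℓ m r n : ℕ} {x} : x ∈ Fset ℓ m r n ↔
    (∀ j : Fin m, aext m ℓ x.1 ((j:ℕ)+1) ≤ aext m ℓ x.1 (j:ℕ)) ∧
    (∑ j ∈ Finset.range m, aext m ℓ x.1 j) = n ∧
    (∑ j : Fin m, (if x.2 j then 1 else 0)) = r ∧
    ∀ j : Fin m, x.2 j = true → aext m ℓ x.1 ((j:ℕ)+1) < aext m ℓ x.1 (j:ℕ) := by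
  simp [Fset]

lemma aext_step {ℓ m : ℕ} {α : Fin m → Fin (ℓ+1)}
    (h : ∀ j : Fin m, aext m ℓ α ((j:ℕ)+1) ≤ aext m ℓ α (j:ℕ)) (k : ℕ) :
    aext m ℓ α (k+1) ≤ aext m ℓ α k := by
  by_cases hk : k < m
  · exact h ⟨k, hk⟩
  · have : ¬ (k+1 < m) := by omega
    simp [aext, hk, this]

lemma tele_Ico (f : ℕ → ℕ) (hf : ∀ k, f (k+1) ≤ f k) (j : ℕ) :
    ∀ M, j ≤ M → (∑ s ∈ Finset.Ico j M, (f s - f (s+1))) + f M = f j := by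
  intro M
  induction M with
  | zero => intro h; simp [Nat.le_zero.mp h]
  | succ M ih =>
    intro h
    rcases Nat.lt_or_ge j (M+1) with h' | h'
    · have hjM : j ≤ M := by omega
      rw [Finset.sum_Ico_succ_top hjM]
      have h1 := ih hjM
      have h2 := hf M
      omega
    · have : j = M + 1 := by omega
      simp [this]

/-! ### The complementation involution -/

/-- marked indicator, extended by zero -/
def eext (m ℓ : ℕ) (x : (Fin m → Fin (ℓ+1)) × (Fin m → Bool)) (k : ℕ) : ℕ :=
  if h : k < m then (if x.2 ⟨k, h⟩ then 1 else 0) else 0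

/-- complementation involution -/
def Tmap (ℓ m : ℕ) (x : (Fin m → Fin (ℓ+1)) × (Fin m → Bool)) :
    (Fin m → Fin (ℓ+1)) × (Fin m → Bool) :=
  (fun i => ⟨ℓ - ((x.1 i.rev : ℕ) - (if x.2 i.rev then 1 else 0)),
     Nat.lt_succ_of_le (Nat.sub_le _ _)⟩,
   fun i => x.2 i.rev)

lemma aext_Tmap (ℓ m : ℕ) (x) (k : ℕ) (h : k < m) :
    aext m ℓ (Tmap ℓ m x).1 k
      = ℓ - (aext m ℓ x.1 (m-(k+1)) - eext m ℓ x (m-(k+1))) := by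
  have hm : m-(k+1) < m := by omega
  have hrv : (⟨k, h⟩ : Fin m).rev = ⟨m-(k+1), hm⟩ := by
    ext; exact Fin.val_rev _
  unfold aext Tmap eext
  rw [dif_pos h, dif_pos hm, dif_pos hm]
  simp [hrv]

lemma eext_le_one (m ℓ x k) : eext m ℓ x k ≤ 1 := by
  unfold eext; split
  · split <;> omega
  · omega

lemma Tmap_mem {ℓ m r n : ℕ} {x} (hx : x ∈ Fset ℓ m r n) :
    Tmap ℓ m x ∈ Fset ℓ m r (ℓ*m - (n - r)) ∧ r ≤ n := by
  obtain ⟨hmono, hsum, hre, hdesc⟩ := mem_Fset.mp hx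
  have hstep : ∀ k, aext m ℓ x.1 (k+1) ≤ aext m ℓ x.1 k := aext_step hmono
  have hale : ∀ k, aext m ℓ x.1 k ≤ ℓ := aext_le m ℓ x.1
  have hdesc' : ∀ k, eext m ℓ x k = 1 → aext m ℓ x.1 (k+1) < aext m ℓ x.1 k := by
    intro k hk
    unfold eext at hk
    split at hk
    · next h =>
      split at hk
      · exact hdesc ⟨k, h⟩ ‹_›
      · exact absurd hk (by omega)
    · exact absurd hk (by omega)
  have he01 : ∀ k, eext m ℓ x k ≤ 1 := eext_le_one m ℓ x
  have hea : ∀ k, eext m ℓ x k ≤ aext m ℓ x.1 k := by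
    intro k
    rcases Nat.eq_zero_or_pos (eext m ℓ x k) with h | h
    · omega
    · have h1 : eext m ℓ x k = 1 := by have := he01 k; omega
      have := hdesc' k h1; omega
  have hpstep : ∀ k, aext m ℓ x.1 (k+1) - eext m ℓ x (k+1)
      ≤ aext m ℓ x.1 k - eext m ℓ x k := by
    intro k
    have h1 := hstep k
    have h2 := he01 k
    have h3 := hea k
    have h4 := he01 (k+1)
    rcases Nat.eq_zero_or_pos (eext m ℓ x k) with h | h
    · omega
    · have := hdesc' k (by omega); omega
  have hesum : (∑ k ∈ Finset.range m, eext m ℓ x k) = r := by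
    rw [← hre, ← Fin.sum_univ_eq_sum_range]
    refine Finset.sum_congr rfl fun j _ => ?_
    unfold eext
    rw [dif_pos j.isLt]
  have hrn : r ≤ n := by
    rw [← hsum, ← hesum]
    exact Finset.sum_le_sum fun k _ => hea k
  have hpsum : (∑ k ∈ Finset.range m, (aext m ℓ x.1 k - eext m ℓ x k)) = n - r := by
    rw [Finset.sum_tsub_distrib _ (fun k _ => hea k), hsum, hesum]
  refine ⟨mem_Fset.mpr ⟨?_, ?_, ?_, ?_⟩, hrn⟩
  · -- antitone
    intro j
    by_cases h1 : (j:ℕ)+1 < m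
    · rw [aext_Tmap ℓ m x _ h1, aext_Tmap ℓ m x _ j.isLt]
      have h2 : m - ((j:ℕ)+1+1) + 1 = m - ((j:ℕ)+1) := by omega
      have := hpstep (m - ((j:ℕ)+1+1))
      rw [h2] at this
      omega
    · have h0 : aext m ℓ (Tmap ℓ m x).1 ((j:ℕ)+1) = 0 := by
        unfold aext; rw [dif_neg h1]
      omega
  · -- sum
    have hM : ∀ k ∈ Finset.range m,
        aext m ℓ (Tmap ℓ m x).1 k
          = ℓ - (aext m ℓ x.1 (m-1-k) - eext m ℓ x (m-1-k)) := by
      intro k hk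
      rw [aext_Tmap ℓ m x k (Finset.mem_range.mp hk),
        show m - (k+1) = m-1-k from by omega]
    rw [Finset.sum_congr rfl hM]
    rw [Finset.sum_range_reflect (fun k => ℓ - (aext m ℓ x.1 k - eext m ℓ x k)) m]
    rw [Finset.sum_tsub_distrib _ (fun k _ => by have := hale k; omega),
      Finset.sum_const, Finset.card_range, smul_eq_mul, hpsum, mul_comm]
  · -- marks count
    rw [← hre]
    exact Fintype.sum_bijective Fin.rev Fin.rev_bijective _ _
      (fun j => by simp [Tmap, Fin.rev_rev]; congr)
  · -- descents
    intro j hj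
    have hjrev : eext m ℓ x (m - ((j:ℕ)+1)) = 1 := by
      have h1 : m - ((j:ℕ)+1) < m := by omega
      unfold eext
      rw [dif_pos h1]
      have h2 : (⟨m - ((j:ℕ)+1), h1⟩ : Fin m) = j.rev := by
        ext; exact (Fin.val_rev _).symm
      rw [h2]
      simpa [Tmap] using hj
    have hd := hdesc' _ hjrev
    by_cases h1 : (j:ℕ)+1 < m
    · rw [aext_Tmap ℓ m x _ h1, aext_Tmap ℓ m x _ j.isLt]
      have h2 : m - ((j:ℕ)+1+1) + 1 = m - ((j:ℕ)+1) := by omega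
      have h3 := hstep (m - ((j:ℕ)+1+1))
      rw [h2] at h3
      have h4 := he01 (m - ((j:ℕ)+1+1))
      have h5 := hea (m - ((j:ℕ)+1+1))
      have h6 := hdesc' (m - ((j:ℕ)+1+1))
      rw [h2] at h6
      have h7 := hale (m - ((j:ℕ)+1))
      have h8 := hale (m - ((j:ℕ)+1+1))
      rcases Nat.eq_zero_or_pos (eext m ℓ x (m - ((j:ℕ)+1+1))) with h | h
      · omega
      · have := h6 (by omega); omega
    · have ht0 : m - ((j:ℕ)+1) = 0 := by omega
      rw [ht0] at hjrev hd
      have h0 : aext m ℓ (Tmap ℓ m x).1 ((j:ℕ)+1) = 0 := by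
        unfold aext; rw [dif_neg h1]
      rw [h0, aext_Tmap ℓ m x _ j.isLt, ht0, hjrev]
      have := hale 0
      omega

lemma Tmap_invol {ℓ m r n : ℕ} {x} (hx : x ∈ Fset ℓ m r n) :
    Tmap ℓ m (Tmap ℓ m x) = x := by
  obtain ⟨hmono, hsum, hre, hdesc⟩ := mem_Fset.mp hx
  have hdesc' : ∀ j : Fin m, x.2 j = true → 1 ≤ (x.1 j : ℕ) := by
    intro j hj
    have h1 := hdesc j hj
    have h2 := aext_val m ℓ x.1 j
    have h3 : (0:ℕ) ≤ aext m ℓ x.1 ((j:ℕ)+1) := Nat.zero_le _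
    omega
  unfold Tmap
  ext i
  · simp only [Fin.rev_rev]
    have h1 : (x.1 i : ℕ) ≤ ℓ := Nat.lt_succ_iff.mp (x.1 i).isLt
    have h2 : (if x.2 i then 1 else 0) ≤ (x.1 i : ℕ) := by
      split
      · exact hdesc' i (by assumption)
      · omega
    have h3 : (if x.2 i then (1:ℕ) else 0) ≤ 1 := by split <;> omega
    omega
  · simp [Fin.rev_rev]

lemma Fset_card_symm {ℓ m r n : ℕ} (hr : r ≤ n) (hn : n ≤ ℓ * m) :
    (Fset ℓ m r n).card = (Fset ℓ m r (ℓ*m - n + r)).card := by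
  refine Finset.card_bij' (fun x _ => Tmap ℓ m x) (fun x _ => Tmap ℓ m x)
    ?_ ?_ (fun x hx => Tmap_invol hx) (fun x hx => Tmap_invol hx)
  · intro x hx
    have h := (Tmap_mem hx).1
    rwa [show ℓ*m - (n - r) = ℓ*m - n + r from by omega] at h
  · intro x hx
    have h := (Tmap_mem hx).1
    rwa [show ℓ*m - ((ℓ*m - n + r) - r) = n from by omega] at h

/-! ### counting facts -/

lemma countP_replicate (p : ℕ → Prop) [DecidablePred p] (c a : ℕ) :
    Multiset.countP p (Multiset.replicate c a) = if p a then c else 0 := by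
  induction c with
  | zero => simp
  | succ c ih =>
    rw [Multiset.replicate_succ, Multiset.countP_cons, ih]
    split <;> omega

lemma countP_split (P : Multiset ℕ) (k : ℕ) :
    Multiset.countP (fun a => k+1 ≤ a) P
      = Multiset.countP (fun a => k+1+1 ≤ a) P + P.count (k+1) := by
  induction P using Multiset.induction_on with
  | empty => simp
  | cons a s ih =>
    rw [Multiset.countP_cons, Multiset.countP_cons, Multiset.count_cons, ih]
    split_ifs <;> omega

lemma sum_countP (m : ℕ) (P : Multiset ℕ) (hle : ∀ a ∈ P, a ≤ m) :
    (∑ j ∈ Finset.range m, Multiset.countP (fun a => j+1 ≤ a) P) = P.sum := by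
  induction P using Multiset.induction_on with
  | empty => simp
  | cons a s ih =>
    simp only [Multiset.countP_cons, Multiset.sum_cons]
    rw [Finset.sum_add_distrib,
      ih (fun b hb => hle b (Multiset.mem_cons_of_mem hb)), Finset.sum_boole]
    have ha : a ≤ m := hle a (Multiset.mem_cons_self a s)
    have hfil : (Finset.range m).filter (fun j => a ≥ j+1) = Finset.range a := by
      ext z
      simp only [Finset.mem_filter, Finset.mem_range, ge_iff_le]
      omega
    have hfil' : (Finset.range m).filter (fun j => j+1 ≤ a) = Finset.range a := by
      ext z
      simp only [Finset.mem_filter, Finset.mem_range]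
      omega
    rw [hfil', Finset.card_range]
    push_cast
    omega

/-! ### the correspondence partition+subset ↔ sequence+marks -/

/-- forward map -/
def toF (ℓ m : ℕ) (P : Multiset ℕ) (S : Finset ℕ) :
    (Fin m → Fin (ℓ+1)) × (Fin m → Bool) :=
  (fun j => ⟨min (Multiset.countP (fun a => (j:ℕ)+1 ≤ a) P) ℓ,
    Nat.lt_succ_of_le (min_le_right _ _)⟩,
   fun j => decide ((j:ℕ)+1 ∈ S))

/-- backward maps -/
def toP (ℓ m : ℕ) (x : (Fin m → Fin (ℓ+1)) × (Fin m → Bool)) : Multiset ℕ :=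
  ∑ s ∈ Finset.range m,
    Multiset.replicate (aext m ℓ x.1 s - aext m ℓ x.1 (s+1)) (s+1)

def toS (ℓ m : ℕ) (x : (Fin m → Fin (ℓ+1)) × (Fin m → Bool)) : Finset ℕ :=
  Finset.image (fun i : Fin m => (i:ℕ)+1) (Finset.univ.filter (fun i => x.2 i = true))

lemma aext_toF {ℓ m : ℕ} (P : Multiset ℕ) (S : Finset ℕ)
    (hcard : Multiset.card P ≤ ℓ) (hle : ∀ a ∈ P, a ≤ m) (k : ℕ) :
    aext m ℓ (toF ℓ m P S).1 k = Multiset.countP (fun a => k+1 ≤ a) P := by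
  unfold aext toF
  by_cases h : k < m
  · rw [dif_pos h]
    exact min_eq_left ((Multiset.countP_le_card _ _).trans hcard)
  · rw [dif_neg h]
    symm
    rw [Multiset.countP_eq_zero]
    intro a ha
    have := hle a ha
    omega

lemma mem_toP {ℓ m : ℕ} {x} {c : ℕ} (hc : c ∈ toP ℓ m x) : 1 ≤ c ∧ c ≤ m := by
  unfold toP at hc
  rw [Multiset.mem_sum] at hc
  obtain ⟨s, hs, hcs⟩ := hc
  rw [Multiset.eq_of_mem_replicate hcs]
  have := Finset.mem_range.mp hs
  omega

lemma countP_toP {ℓ m : ℕ} {x : (Fin m → Fin (ℓ+1)) × (Fin m → Bool)}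
    (hmono : ∀ j : Fin m, aext m ℓ x.1 ((j:ℕ)+1) ≤ aext m ℓ x.1 (j:ℕ)) (k : ℕ) :
    Multiset.countP (fun a => k+1 ≤ a) (toP ℓ m x) = aext m ℓ x.1 k := by
  unfold toP
  have hms := map_sum (Multiset.countPAddMonoidHom (fun a => k+1 ≤ a))
    (fun s => Multiset.replicate (aext m ℓ x.1 s - aext m ℓ x.1 (s+1)) (s+1))
    (Finset.range m)
  simp only [Multiset.coe_countPAddMonoidHom] at hms
  rw [hms]
  simp only [countP_replicate]
  have hcongr : ∀ s ∈ Finset.range m,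
      (if k+1 ≤ s+1 then (aext m ℓ x.1 s - aext m ℓ x.1 (s+1)) else 0)
        = (if k ≤ s then (aext m ℓ x.1 s - aext m ℓ x.1 (s+1)) else 0) := by
    intro s _
    congr 1
    simp only [eq_iff_iff]
    omega
  rw [Finset.sum_congr rfl hcongr, ← Finset.sum_filter]
  have hfil : (Finset.range m).filter (fun s => k ≤ s) = Finset.Ico k m := by
    ext z
    simp only [Finset.mem_filter, Finset.mem_range, Finset.mem_Ico]
    omega
  rw [hfil]
  by_cases hk : k ≤ m
  · have h0 : aext m ℓ x.1 m = 0 := aext_top m ℓ x.1 m (lt_irrefl m)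
    have := tele_Ico (aext m ℓ x.1) (aext_step hmono) k m hk
    omega
  · rw [Finset.Ico_eq_empty (by omega), Finset.sum_empty,
      aext_top m ℓ x.1 k (by omega)]

lemma toF_mem {ℓ m r n : ℕ} (p : n.Partition) (hcard : p.parts.card ≤ ℓ)
    (hle : ∀ i ∈ p.parts, i ≤ m) (S : Finset ℕ) (hS : S ⊆ p.parts.toFinset)
    (hSr : S.card = r) : toF ℓ m p.parts S ∈ Fset ℓ m r n := by
  have hS' : ∀ a ∈ S, 1 ≤ a ∧ a ≤ m := by
    intro a ha
    have hmem : a ∈ p.parts := Multiset.mem_toFinset.mp (hS ha)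
    exact ⟨p.parts_pos hmem, hle a hmem⟩
  refine mem_Fset.mpr ⟨?_, ?_, ?_, ?_⟩
  · intro j
    rw [aext_toF p.parts S hcard hle, aext_toF p.parts S hcard hle]
    have := countP_split p.parts (j:ℕ)
    omega
  · rw [Finset.sum_congr rfl (fun j _ => aext_toF p.parts S hcard hle j),
      sum_countP m p.parts hle, p.parts_sum]
  · have h1 : ∀ j : Fin m, (if (toF ℓ m p.parts S).2 j then (1:ℕ) else 0)
        = (if ((j:ℕ)+1 ∈ S) then 1 else 0) := by
      intro j
      simp [toF]
    rw [Finset.sum_congr rfl (fun j _ => h1 j), Finset.sum_boole]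
    simp only [Nat.cast_id]
    rw [← hSr]
    refine Finset.card_bij (fun j _ => (j:ℕ)+1) ?_ ?_ ?_
    · intro j hj
      exact (Finset.mem_filter.mp hj).2
    · intro j₁ _ j₂ _ h
      have h' : (j₁:ℕ)+1 = (j₂:ℕ)+1 := h
      exact Fin.ext (by omega)
    · intro a ha
      have := hS' a ha
      refine ⟨⟨a-1, by omega⟩, Finset.mem_filter.mpr ⟨Finset.mem_univ _, ?_⟩, by simp; omega⟩
      simpa [show a-1+1 = a from by omega] using ha
  · intro j hj
    have hmem : (j:ℕ)+1 ∈ S := by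
      simpa [toF] using hj
    have hcount : 0 < p.parts.count ((j:ℕ)+1) :=
      Multiset.count_pos.mpr (Multiset.mem_toFinset.mp (hS hmem))
    rw [aext_toF p.parts S hcard hle, aext_toF p.parts S hcard hle]
    have := countP_split p.parts (j:ℕ)
    omega

lemma toPS_mem {ℓ m r n : ℕ} {x} (hx : x ∈ Fset ℓ m r n) :
    (toP ℓ m x).sum = n ∧ (∀ c ∈ toP ℓ m x, 0 < c) ∧
    (Multiset.card (toP ℓ m x) ≤ ℓ) ∧ (∀ c ∈ toP ℓ m x, c ≤ m) ∧
    (toS ℓ m x ⊆ (toP ℓ m x).toFinset) ∧ (toS ℓ m x).card = r := by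
  obtain ⟨hmono, hsum, hre, hdesc⟩ := mem_Fset.mp hx
  have hle : ∀ c ∈ toP ℓ m x, c ≤ m := fun c hc => (mem_toP hc).2
  have hpos : ∀ c ∈ toP ℓ m x, 0 < c := fun c hc => (mem_toP hc).1
  refine ⟨?_, hpos, ?_, hle, ?_, ?_⟩
  · rw [← sum_countP m _ hle]
    rw [Finset.sum_congr rfl (fun j _ => countP_toP hmono j), hsum]
  · have h1 : Multiset.countP (fun a => 0+1 ≤ a) (toP ℓ m x)
        = Multiset.card (toP ℓ m x) := by
      rw [Multiset.countP_eq_card]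
      intro a ha
      have := hpos a ha
      omega
    have h2 := countP_toP hmono 0
    have h3 := aext_le m ℓ x.1 0
    omega
  · intro a ha
    unfold toS at ha
    rw [Finset.mem_image] at ha
    obtain ⟨i, hi, hieq⟩ := ha
    have hit : x.2 i = true := (Finset.mem_filter.mp hi).2
    have hd := hdesc i hit
    have h1 := countP_toP hmono (i:ℕ)
    have h2 := countP_toP hmono ((i:ℕ)+1)
    have h3 := countP_split (toP ℓ m x) (i:ℕ)
    rw [Multiset.mem_toFinset, ← hieq, ← Multiset.count_pos]
    omega
  · unfold toS
    rw [Finset.card_image_of_injOn (fun j₁ _ j₂ _ h => Fin.ext (by omega))]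
    rw [← hre]
    rw [Finset.sum_boole]
    push_cast
    rfl

lemma roundtrip2 {ℓ m r n : ℕ} {x} (hx : x ∈ Fset ℓ m r n) :
    toF ℓ m (toP ℓ m x) (toS ℓ m x) = x := by
  obtain ⟨hmono, hsum, hre, hdesc⟩ := mem_Fset.mp hx
  have hmemS : ∀ j : Fin m, ((j:ℕ)+1 ∈ toS ℓ m x) ↔ x.2 j = true := by
    intro j
    unfold toS
    rw [Finset.mem_image]
    constructor
    · rintro ⟨i, hi, hieq⟩
      have : i = j := Fin.ext (by omega)
      subst this
      exact (Finset.mem_filter.mp hi).2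
    · intro h
      exact ⟨j, Finset.mem_filter.mpr ⟨Finset.mem_univ _, h⟩, rfl⟩
  unfold toF
  ext j
  · show min (Multiset.countP (fun a => (j:ℕ)+1 ≤ a) (toP ℓ m x)) ℓ = (x.1 j : ℕ)
    rw [countP_toP hmono (j:ℕ), aext_val]
    exact min_eq_left (Nat.lt_succ_iff.mp (x.1 j).isLt)
  · show decide ((j:ℕ)+1 ∈ toS ℓ m x) = x.2 j
    by_cases hb : x.2 j = true
    · simp [hb, (hmemS j).mpr hb]
    · have : ¬ ((j:ℕ)+1 ∈ toS ℓ m x) := fun h => hb ((hmemS j).mp h)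
      have hb' : x.2 j = false := by
        cases h : x.2 j
        · rfl
        · exact absurd h hb
      simp [this, hb']
      

lemma roundtrip1 {ℓ m r n : ℕ} (p : n.Partition) (hcard : p.parts.card ≤ ℓ)
    (hle : ∀ i ∈ p.parts, i ≤ m) (S : Finset ℕ) (hS : S ⊆ p.parts.toFinset)
    (hSr : S.card = r) :
    toP ℓ m (toF ℓ m p.parts S) = p.parts ∧ toS ℓ m (toF ℓ m p.parts S) = S := by
  have hxF := toF_mem p hcard hle S hS hSr
  obtain ⟨hmono, hsum, hre, hdesc⟩ := mem_Fset.mp hxF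
  have hS' : ∀ a ∈ S, 1 ≤ a ∧ a ≤ m := by
    intro a ha
    have hmem : a ∈ p.parts := Multiset.mem_toFinset.mp (hS ha)
    exact ⟨p.parts_pos hmem, hle a hmem⟩
  constructor
  · rw [Multiset.ext]
    intro c
    cases c with
    | zero =>
      rw [Multiset.count_eq_zero.mpr (fun h => by have := (mem_toP h).1; omega),
        Multiset.count_eq_zero.mpr (fun h => lt_irrefl 0 (p.parts_pos h))]
    | succ k =>
      have h1 := countP_split (toP ℓ m (toF ℓ m p.parts S)) k
      have h2 := countP_split p.parts k
      have h3 := countP_toP hmono k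
      have h4 := countP_toP hmono (k+1)
      rw [aext_toF p.parts S hcard hle] at h3 h4
      omega
  · ext a
    unfold toS
    rw [Finset.mem_image]
    constructor
    · rintro ⟨i, hi, hieq⟩
      have hit : (toF ℓ m p.parts S).2 i = true := (Finset.mem_filter.mp hi).2
      have : (i:ℕ)+1 ∈ S := by simpa [toF] using hit
      rwa [hieq] at this
    · intro ha
      have hb := hS' a ha
      refine ⟨⟨a-1, by omega⟩, Finset.mem_filter.mpr ⟨Finset.mem_univ _, ?_⟩, by simp; omega⟩
      simp only [toF, decide_eq_true_eq]
      simpa [show a-1+1 = a from by omega] using ha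

end PrAux


/-- `prCount ℓ m r n = ∑_{λ} C(v(λ), r)` where the sum is over partitions `λ` of `n`
fitting in the `ℓ × m` rectangle and `v(λ)` is the number of distinct part sizes of `λ`
(the number of corners of its Young diagram). -/
def prCount (ℓ m r n : ℕ) : ℕ :=
  ∑ p : {p : n.Partition // p.parts.card ≤ ℓ ∧ ∀ i ∈ p.parts, i ≤ m},
    Nat.choose p.1.parts.toFinset.card r


lemma prCount_eq_card (ℓ m r n : ℕ) : prCount ℓ m r n = (PrAux.Fset ℓ m r n).card := by
  classical
  rw [prCount]
  rw [Finset.sum_congr rfl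
    (fun (p : {p : n.Partition // p.parts.card ≤ ℓ ∧ ∀ i ∈ p.parts, i ≤ m}) _ =>
      (Finset.card_powersetCard r p.1.parts.toFinset).symm)]
  rw [← Finset.card_sigma]
  refine Finset.card_bij' (fun q _ => PrAux.toF ℓ m q.1.1.parts q.2)
    (fun x hx => ⟨⟨⟨PrAux.toP ℓ m x, fun {i} hi => (PrAux.toPS_mem hx).2.1 i hi,
        (PrAux.toPS_mem hx).1⟩,
      (PrAux.toPS_mem hx).2.2.1, fun i hi => (PrAux.toPS_mem hx).2.2.2.1 i hi⟩,
      PrAux.toS ℓ m x⟩) ?_ ?_ ?_ ?_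
  · intro q hq
    obtain ⟨hsub, hcardS⟩ := Finset.mem_powersetCard.mp (Finset.mem_sigma.mp hq).2
    exact PrAux.toF_mem q.1.1 q.1.2.1 q.1.2.2 q.2 hsub hcardS
  · intro x hx
    refine Finset.mem_sigma.mpr ⟨Finset.mem_univ _, Finset.mem_powersetCard.mpr
      ⟨(PrAux.toPS_mem hx).2.2.2.2.1, (PrAux.toPS_mem hx).2.2.2.2.2⟩⟩
  · intro q hq
    obtain ⟨hsub, hcardS⟩ := Finset.mem_powersetCard.mp (Finset.mem_sigma.mp hq).2
    have hrt := PrAux.roundtrip1 q.1.1 q.1.2.1 q.1.2.2 q.2 hsub hcardS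
    refine Sigma.ext ?_ (heq_of_eq ?_)
    · exact Subtype.ext (Nat.Partition.ext hrt.1)
    · exact hrt.2
  · intro x hx
    exact PrAux.roundtrip2 hx

/-- The symmetry `p_n(ℓ,m,r) = p_{ℓm-n+r}(ℓ,m,r)`. -/
theorem prCount_symmetric (ℓ m r n : ℕ) (hr : r ≤ n) (hn : n ≤ ℓ * m) :
    prCount ℓ m r n = prCount ℓ m r (ℓ * m - n + r) := by
  rw [prCount_eq_card, prCount_eq_card]
  exact PrAux.Fset_card_symm hr hn
end

section
/- For $m > \ell$, let $d_n(\ell,m)$ be the number of partitions of $n$ into exactly $\ell$ distinct parts, each at most $m$. Then the sequence $d_\ell(\ell,m), d_{\ell+1}(\ell,m), \dots, d_{m\ell}(\ell,m)$ is symmetric and unimodal. Equivalently, the map $\nu \mapsto \nu + (\ell, \ell-1, \dots, 1)$ gives a bijection showing $d_{n + \binom{\ell+1}{2}}(\ell,m) = p_n(\ell, m - \ell)$. -/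
/-- `dCount ℓ m n` is the number of partitions of `n` into exactly `ℓ` distinct parts,
each at most `m`. -/
def dCount (ℓ m n : ℕ) : ℕ :=
  Fintype.card {p : n.Partition //
    p.parts.card = ℓ ∧ p.parts.Nodup ∧ ∀ i ∈ p.parts, i ≤ m}

open Finset

set_option linter.unusedVariables false

def DS (ℓ m n : ℕ) : Finset (Finset ℕ) :=
  ((Finset.Icc 1 m).powersetCard ℓ).filter fun S => S.sum id = n

lemma mem_DS {ℓ m n : ℕ} {S : Finset ℕ} :
    S ∈ DS ℓ m n ↔ S ⊆ Finset.Icc 1 m ∧ S.card = ℓ ∧ S.sum id = n := by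
  simp [DS, Finset.mem_powersetCard, and_assoc]



def dEquiv (ℓ m n : ℕ) :
    {p : n.Partition // p.parts.card = ℓ ∧ p.parts.Nodup ∧ ∀ i ∈ p.parts, i ≤ m} ≃
    {S : Finset ℕ // S ∈ DS ℓ m n} where
  toFun p := ⟨⟨p.1.parts, p.2.2.1⟩, by
    rcases p with ⟨p, hc, hnd, hle⟩
    rw [mem_DS]
    refine ⟨?_, hc, ?_⟩
    · intro i hi
      simp only [Finset.mem_mk] at hi
      exact Finset.mem_Icc.2 ⟨p.parts_pos hi, hle i hi⟩
    · show Multiset.sum _ = n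
      simpa using p.parts_sum⟩
  invFun S := ⟨⟨S.1.val, fun {i} hi => ((Finset.mem_Icc.1 ((mem_DS.1 S.2).1 hi)).1 : 1 ≤ i),
      by have := (mem_DS.1 S.2).2.2; rwa [← Finset.sum_val] at this⟩,
    by
      refine ⟨(mem_DS.1 S.2).2.1, S.1.nodup, fun i hi => (Finset.mem_Icc.1 ((mem_DS.1 S.2).1 hi)).2⟩⟩
  left_inv p := by ext : 2 <;> rfl
  right_inv S := by ext : 2 <;> rfl

lemma dCount_eq (ℓ m n : ℕ) : dCount ℓ m n = (DS ℓ m n).card := by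
  rw [dCount, Fintype.card_congr (dEquiv ℓ m n), Fintype.card_coe]

lemma refl_mapsTo {ℓ m n : ℕ} (hn : n ≤ ℓ * (m+1)) :
    ∀ S ∈ DS ℓ m n, S.image (fun i => m + 1 - i) ∈ DS ℓ m (ℓ * (m+1) - n) := by
  intro S hS
  rw [mem_DS] at hS ⊢
  obtain ⟨hsub, hcard, hsum⟩ := hS
  have hmem : ∀ i ∈ S, 1 ≤ i ∧ i ≤ m := fun i hi => Finset.mem_Icc.1 (hsub hi)
  have hinj : Set.InjOn (fun i => m + 1 - i) S := by
    intro a ha b hb hab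
    have := (hmem a ha).2; have := (hmem b hb).2
    simp only at hab; omega
  refine ⟨?_, ?_, ?_⟩
  · intro j hj
    simp only [Finset.mem_image] at hj
    obtain ⟨i, hi, rfl⟩ := hj
    have := hmem i hi
    exact Finset.mem_Icc.2 ⟨by omega, by omega⟩
  · rw [Finset.card_image_of_injOn hinj, hcard]
  · have key : (S.image (fun i => m + 1 - i)).sum id = S.sum (fun i => m + 1 - i) :=
      Finset.sum_image (fun a ha b hb => hinj ha hb)
    have h2 : S.sum (fun i => m + 1 - i) + S.sum id = ℓ * (m + 1) := by
      rw [← Finset.sum_add_distrib]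
      have : ∀ i ∈ S, (m + 1 - i) + id i = m + 1 := by
        intro i hi; have := (hmem i hi).2; simp only [id]; omega
      rw [Finset.sum_congr rfl this, Finset.sum_const, hcard, smul_eq_mul, mul_comm]
    rw [key]; omega

lemma refl_card {ℓ m n : ℕ} (hn : n ≤ ℓ * (m+1)) :
    (DS ℓ m n).card = (DS ℓ m (ℓ * (m+1) - n)).card := by
  apply Finset.card_nbij' (i := fun S => S.image (fun i => m + 1 - i))
    (j := fun S => S.image (fun i => m + 1 - i))
  · exact refl_mapsTo hn
  · intro S hS
    have := refl_mapsTo (Nat.sub_le _ _) S hS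
    rwa [Nat.sub_sub_self hn] at this
  · intro S hS
    rw [Finset.mem_coe, mem_DS] at hS
    ext j
    simp only [Finset.mem_image]
    constructor
    · rintro ⟨a, ⟨i, hi, rfl⟩, rfl⟩
      have := Finset.mem_Icc.1 (hS.1 hi)
      have : m + 1 - (m + 1 - i) = i := by omega
      rwa [this]
    · intro hj
      have := Finset.mem_Icc.1 (hS.1 hj)
      exact ⟨m + 1 - j, ⟨j, hj, rfl⟩, by omega⟩
  · intro S hS
    rw [Finset.mem_coe, mem_DS] at hS
    ext j
    simp only [Finset.mem_image]
    constructor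
    · rintro ⟨a, ⟨i, hi, rfl⟩, rfl⟩
      have := Finset.mem_Icc.1 (hS.1 hi)
      have : m + 1 - (m + 1 - i) = i := by omega
      rwa [this]
    · intro hj
      have := Finset.mem_Icc.1 (hS.1 hj)
      exact ⟨m + 1 - j, ⟨j, hj, rfl⟩, by omega⟩

-- gap lemma for strict mono functions on Fin
lemma gap_aux {k : ℕ} {g : Fin k → ℕ} (hg : StrictMono g) :
    ∀ (d : ℕ) (i j : Fin k), j.val = i.val + d → g i + d ≤ g j := by
  intro d
  induction d with
  | zero =>
    intro i j hij
    have : i = j := Fin.ext (by omega)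
    subst this; omega
  | succ d ih =>
    intro i j hij
    have hj : i.val + d < k := by omega
    have h1 := ih i ⟨i.val + d, hj⟩ rfl
    have h2 : (⟨i.val + d, hj⟩ : Fin k) < j := by
      rw [Fin.lt_def]; simp; omega
    have := hg h2
    omega

lemma gap {k : ℕ} {g : Fin k → ℕ} (hg : StrictMono g) {i j : Fin k} (hij : i ≤ j) :
    g i + (j.val - i.val) ≤ g j := by
  have : j.val = i.val + (j.val - i.val) := by
    have := Fin.le_def.1 hij; omega
  exact gap_aux hg _ i j this

lemma ge_staircase {k : ℕ} {g : Fin k → ℕ} (hg : StrictMono g)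
    (h1 : ∀ i, 1 ≤ g i) (i : Fin k) : i.val + 1 ≤ g i := by
  have hlt : (0 : ℕ) < k := lt_of_le_of_lt (Nat.zero_le _) i.isLt
  have h0 : (⟨0, hlt⟩ : Fin k) ≤ i := by rw [Fin.le_def]; exact Nat.zero_le _
  have hgap := gap hg h0
  have hb := h1 ⟨0, hlt⟩
  have hv : (⟨0, hlt⟩ : Fin k).val = 0 := rfl
  rw [hv] at hgap
  omega

lemma le_staircase {k : ℕ} {g : Fin k → ℕ} (hg : StrictMono g) (b : ℕ)
    (h2 : ∀ i, g i ≤ b + k) (i : Fin k) : g i ≤ b + i.val + 1 := by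
  have hlt : k - 1 < k := by have := i.isLt; omega
  have htop : i ≤ (⟨k - 1, hlt⟩ : Fin k) := by
    rw [Fin.le_def]; have := i.isLt; simp; omega
  have hgap := gap hg htop
  have hb := h2 ⟨k - 1, hlt⟩
  have hv : (⟨k - 1, hlt⟩ : Fin k).val = k - 1 := rfl
  rw [hv] at hgap
  have := i.isLt
  omega

lemma sum_staircase (ℓ : ℕ) : (∑ i : Fin ℓ, ((i : ℕ) + 1)) = (ℓ + 1).choose 2 := by
  have h1 : (∑ i : Fin ℓ, ((i : ℕ) + 1)) = ∑ i ∈ Finset.range ℓ, (i + 1) :=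
    Fin.sum_univ_eq_sum_range _ _
  have h2 : (∑ i ∈ Finset.range ℓ, (i + 1)) = (∑ i ∈ Finset.range ℓ, i) + ℓ := by
    rw [Finset.sum_add_distrib, Finset.sum_const, Finset.card_range, smul_eq_mul, mul_one]
  have h3 := Finset.sum_range_id_mul_two ℓ
  have h4 : (ℓ + 1).choose 2 = (ℓ + 1) * ℓ / 2 := by
    rw [Nat.choose_two_right]; simp
  have h5 : ℓ * (ℓ - 1) + 2 * ℓ = (ℓ + 1) * ℓ := by
    cases ℓ with
    | zero => rfl
    | succ t => ring_nf; simp [Nat.succ_sub_one]; ring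
  rw [h1, h2, h4]
  omega

/-- Mono ≃ Strict : add the staircase. -/
def monoStrictEquiv (ℓ b n : ℕ) :
    {f : Fin ℓ → ℕ // Monotone f ∧ (∀ i, f i ≤ b) ∧ ∑ i, f i = n} ≃
    {g : Fin ℓ → ℕ // StrictMono g ∧ (∀ i, 1 ≤ g i ∧ g i ≤ b + ℓ) ∧
      ∑ i, g i = n + (ℓ + 1).choose 2} where
  toFun := fun ⟨f, hmono, hb, hsum⟩ => ⟨fun i => f i + i.val + 1, by
    refine ⟨?_, ?_, ?_⟩
    · intro i j hij
      have h1 := hmono hij.le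
      have h2 := Fin.lt_def.1 hij
      simp only
      omega
    · intro i
      have h1 := hb i
      have h2 : i.val < ℓ := i.isLt
      constructor
      · simp only; omega
      · simp only; omega
    · have heq : (∑ i : Fin ℓ, (f i + i.val + 1)) =
          (∑ i : Fin ℓ, f i) + (∑ i : Fin ℓ, ((i : ℕ) + 1)) := by
        rw [← Finset.sum_add_distrib]
        apply Finset.sum_congr rfl
        intro i _
        omega
      show (∑ i : Fin ℓ, (f i + i.val + 1)) = n + (ℓ + 1).choose 2
      rw [heq, hsum, sum_staircase]⟩
  invFun := fun ⟨g, hst, hb, hsum⟩ => ⟨fun i => g i - (i.val + 1), by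
    have hge : ∀ i : Fin ℓ, i.val + 1 ≤ g i :=
      ge_staircase hst (fun i => (hb i).1)
    refine ⟨?_, ?_, ?_⟩
    · intro i j hij
      have := gap hst hij
      have := Fin.le_def.1 hij
      have := hge i
      simp only
      omega
    · intro i
      have := le_staircase hst b (fun i => (hb i).2) i
      simp only
      omega
    · have heq : (∑ i : Fin ℓ, (g i - (i.val + 1))) + (∑ i : Fin ℓ, ((i : ℕ) + 1)) =
          ∑ i : Fin ℓ, g i := by
        rw [← Finset.sum_add_distrib]
        apply Finset.sum_congr rfl
        intro i _
        have := hge i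
        omega
      rw [sum_staircase] at heq
      show (∑ i : Fin ℓ, (g i - (i.val + 1))) = n
      omega⟩
  left_inv := fun ⟨f, hmono, hb, hsum⟩ => by
    apply Subtype.ext
    funext i
    simp only
    omega
  right_inv := fun ⟨g, hst, hb, hsum⟩ => by
    apply Subtype.ext
    funext i
    simp only
    have := ge_staircase hst (fun i => (hb i).1) i
    omega

def strictFinsetEquiv (ℓ m N : ℕ) :
    {g : Fin ℓ → ℕ // StrictMono g ∧ (∀ i, 1 ≤ g i ∧ g i ≤ m) ∧ ∑ i, g i = N} ≃
    {S : Finset ℕ // S ∈ DS ℓ m N} where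
  toFun := fun ⟨g, hst, hb, hsum⟩ => ⟨Finset.image g Finset.univ, by
    rw [mem_DS]
    refine ⟨?_, ?_, ?_⟩
    · intro x hx
      rw [Finset.mem_image] at hx
      obtain ⟨i, _, rfl⟩ := hx
      exact Finset.mem_Icc.2 (hb i)
    · rw [Finset.card_image_of_injective _ hst.injective, Finset.card_univ, Fintype.card_fin]
    · rw [Finset.sum_image (fun a _ b _ hab => hst.injective hab)]
      exact hsum⟩
  invFun := fun ⟨S, hS⟩ => ⟨fun i => S.orderEmbOfFin (mem_DS.1 hS).2.1 i, by
    refine ⟨(S.orderEmbOfFin (mem_DS.1 hS).2.1).strictMono, ?_, ?_⟩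
    · intro i
      exact Finset.mem_Icc.1 ((mem_DS.1 hS).1 (Finset.orderEmbOfFin_mem S _ i))
    · have himg : Finset.image (fun i => S.orderEmbOfFin (mem_DS.1 hS).2.1 i) Finset.univ = S := by
        ext x
        simp only [Finset.mem_image, Finset.mem_univ, true_and]
        constructor
        · rintro ⟨i, rfl⟩; exact Finset.orderEmbOfFin_mem S _ i
        · intro hx
          have := (Set.ext_iff.1 (Finset.range_orderEmbOfFin S (mem_DS.1 hS).2.1) x).2 hx
          obtain ⟨i, hi⟩ := this
          exact ⟨i, hi⟩
      have hsum := (mem_DS.1 hS).2.2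
      rw [← himg, Finset.sum_image
        (fun a _ b _ hab => (S.orderEmbOfFin _).strictMono.injective hab)] at hsum
      exact hsum⟩
  left_inv := fun ⟨g, hst, hb, hsum⟩ => by
    apply Subtype.ext
    exact (Finset.orderEmbOfFin_unique _ (fun i => Finset.mem_image_of_mem g
      (Finset.mem_univ i)) hst).symm
  right_inv := fun ⟨S, hS⟩ => by
    apply Subtype.ext
    show Finset.image _ Finset.univ = S
    ext x
    simp only [Finset.mem_image, Finset.mem_univ, true_and]
    constructor
    · rintro ⟨i, rfl⟩; exact Finset.orderEmbOfFin_mem S _ i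
    · intro hx
      have := (Set.ext_iff.1 (Finset.range_orderEmbOfFin S (mem_DS.1 hS).2.1) x).2 hx
      obtain ⟨i, hi⟩ := this
      exact ⟨i, hi⟩

/-- pad a multiset with zeros to length ℓ, sort ascending, view as `Fin ℓ → ℕ`. -/
def padFun (ℓ : ℕ) (p : Multiset ℕ) : Fin ℓ → ℕ :=
  fun i => ((p + Multiset.replicate (ℓ - Multiset.card p) 0).sort (· ≤ ·)).getD i.val 0

lemma padFun_length {ℓ : ℕ} {p : Multiset ℕ} (hc : Multiset.card p ≤ ℓ) :
    ((p + Multiset.replicate (ℓ - Multiset.card p) 0).sort (· ≤ ·)).length = ℓ := by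
  rw [Multiset.length_sort, Multiset.card_add, Multiset.card_replicate]
  omega

lemma padFun_eq_get {ℓ : ℕ} {p : Multiset ℕ} (hc : Multiset.card p ≤ ℓ) (i : Fin ℓ) :
    padFun ℓ p i = ((p + Multiset.replicate (ℓ - Multiset.card p) 0).sort (· ≤ ·)).get
      ⟨i.val, by rw [padFun_length hc]; exact i.isLt⟩ := by
  rw [padFun]; exact List.getD_eq_get _ _ ⟨i.val, by rw [padFun_length hc]; exact i.isLt⟩

lemma padFun_ofFn {ℓ : ℕ} {p : Multiset ℕ} (hc : Multiset.card p ≤ ℓ) :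
    List.ofFn (padFun ℓ p) = (p + Multiset.replicate (ℓ - Multiset.card p) 0).sort (· ≤ ·) := by
  apply List.ext_get
  · rw [List.length_ofFn, padFun_length hc]
  · intro k h1 h2
    rw [List.get_ofFn]
    rw [padFun_eq_get hc]
    exact congrArg _ (Fin.ext rfl)

lemma padFun_mono {ℓ : ℕ} {p : Multiset ℕ} (hc : Multiset.card p ≤ ℓ) :
    Monotone (padFun ℓ p) := by
  rw [← List.sortedLE_ofFn_iff, padFun_ofFn hc]
  exact (Multiset.pairwise_sort _ _).sortedLE

lemma padFun_mem {ℓ : ℕ} {p : Multiset ℕ} (hc : Multiset.card p ≤ ℓ) (i : Fin ℓ) :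
    padFun ℓ p i ∈ p ∨ padFun ℓ p i = 0 := by
  rw [padFun_eq_get hc]
  have hmem := List.get_mem ((p + Multiset.replicate (ℓ - Multiset.card p) 0).sort (· ≤ ·))
    ⟨i.val, by rw [padFun_length hc]; exact i.isLt⟩
  rw [Multiset.mem_sort, Multiset.mem_add] at hmem
  rcases hmem with h | h
  · exact Or.inl h
  · exact Or.inr (Multiset.eq_of_mem_replicate h)

lemma padFun_sum {ℓ : ℕ} {p : Multiset ℕ} (hc : Multiset.card p ≤ ℓ) :
    ∑ i, padFun ℓ p i = p.sum := by
  rw [← List.sum_ofFn, padFun_ofFn hc]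
  have h1 : ((p + Multiset.replicate (ℓ - Multiset.card p) 0).sort (· ≤ ·) :
      Multiset ℕ) = p + Multiset.replicate (ℓ - Multiset.card p) 0 := Multiset.sort_eq _ _
  have h2 := congrArg Multiset.sum h1
  rw [Multiset.sum_coe] at h2
  rw [h2, Multiset.sum_add, Multiset.sum_replicate, smul_zero, add_zero]

/-- Partition (≤ ℓ parts each ≤ b) ≃ monotone functions. -/
def partMonoEquiv (ℓ b n : ℕ) :
    {p : n.Partition // p.parts.card ≤ ℓ ∧ ∀ i ∈ p.parts, i ≤ b} ≃
    {f : Fin ℓ → ℕ // Monotone f ∧ (∀ i, f i ≤ b) ∧ ∑ i, f i = n} where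
  toFun := fun ⟨p, hc, hb⟩ => ⟨padFun ℓ p.parts, by
    refine ⟨padFun_mono hc, ?_, ?_⟩
    · intro i
      rcases padFun_mem hc i with h | h
      · exact hb _ h
      · omega
    · rw [padFun_sum hc, p.parts_sum]⟩
  invFun := fun ⟨f, hmono, hbf, hsum⟩ =>
    ⟨⟨Multiset.filter (fun x => 0 < x) (↑(List.ofFn f) : Multiset ℕ),
      fun {i} hi => Multiset.of_mem_filter hi, by
        have hsplit := Multiset.filter_add_not (fun x => 0 < x) (↑(List.ofFn f) : Multiset ℕ)
        have hzero : (Multiset.filter (fun x => ¬ 0 < x) (↑(List.ofFn f) : Multiset ℕ)).sum = 0 := by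
          apply Multiset.sum_eq_zero
          intro x hx
          have := Multiset.of_mem_filter hx
          omega
        have htot : (↑(List.ofFn f) : Multiset ℕ).sum = n := by
          rw [Multiset.sum_coe, List.sum_ofFn, hsum]
        have := congrArg Multiset.sum hsplit
        rw [Multiset.sum_add, hzero, add_zero, htot] at this
        exact this⟩, by
      constructor
      · show Multiset.card (Multiset.filter (fun x => 0 < x) (↑(List.ofFn f) : Multiset ℕ)) ≤ ℓ
        have h1 : Multiset.card (Multiset.filter (fun x => 0 < x) (↑(List.ofFn f) : Multiset ℕ))
            ≤ Multiset.card (↑(List.ofFn f) : Multiset ℕ) := by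
          rw [← Multiset.countP_eq_card_filter]
          exact Multiset.countP_le_card _ _
        have h2 : Multiset.card (↑(List.ofFn f) : Multiset ℕ) = ℓ := by
          rw [Multiset.coe_card, List.length_ofFn]
        omega
      · intro i hi
        have : i ∈ (↑(List.ofFn f) : Multiset ℕ) := Multiset.mem_of_mem_filter hi
        rw [Multiset.mem_coe, List.mem_ofFn] at this
        obtain ⟨j, rfl⟩ := this
        exact hbf j⟩
  left_inv := fun ⟨p, hc, hb⟩ => by
    apply Subtype.ext
    apply Nat.Partition.ext
    show Multiset.filter _ (↑(List.ofFn (padFun ℓ p.parts)) : Multiset ℕ) = p.parts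
    rw [padFun_ofFn hc, Multiset.sort_eq, Multiset.filter_add]
    have h1 : Multiset.filter (fun x => 0 < x) p.parts = p.parts :=
      Multiset.filter_eq_self.2 (fun a ha => p.parts_pos ha)
    have h2 : Multiset.filter (fun x => 0 < x)
        (Multiset.replicate (ℓ - Multiset.card p.parts) 0) = 0 := by
      rw [Multiset.filter_eq_nil]
      intro a ha
      have := Multiset.eq_of_mem_replicate ha
      omega
    rw [h1, h2, add_zero]
  right_inv := fun ⟨f, hmono, hbf, hsum⟩ => by
    apply Subtype.ext
    funext i
    show padFun ℓ _ i = f i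
    set t : Multiset ℕ := (↑(List.ofFn f) : Multiset ℕ) with ht
    set pp : Multiset ℕ := Multiset.filter (fun x => 0 < x) t with hpp
    have hsplit : pp + Multiset.filter (fun x => ¬ 0 < x) t = t :=
      Multiset.filter_add_not _ _
    have hcard_t : Multiset.card t = ℓ := by rw [ht, Multiset.coe_card, List.length_ofFn]
    have hrep : Multiset.filter (fun x => ¬ 0 < x) t =
        Multiset.replicate (Multiset.card (Multiset.filter (fun x => ¬ 0 < x) t)) 0 := by
      rw [Multiset.eq_replicate]
      exact ⟨rfl, fun b hb => by have := Multiset.of_mem_filter hb; omega⟩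
    have hcards : Multiset.card pp + Multiset.card (Multiset.filter (fun x => ¬ 0 < x) t) = ℓ := by
      rw [← Multiset.card_add, hsplit, hcard_t]
    have hc : Multiset.card pp ≤ ℓ := by omega
    have hμ : pp + Multiset.replicate (ℓ - Multiset.card pp) 0 = t := by
      have : ℓ - Multiset.card pp = Multiset.card (Multiset.filter (fun x => ¬ 0 < x) t) := by
        omega
      rw [this, ← hrep, hsplit]
    have hsorted_ofFn : (List.ofFn f).Pairwise (· ≤ ·) := (List.sortedLE_ofFn_iff.2 hmono).pairwise
    have hsort_eq : (pp + Multiset.replicate (ℓ - Multiset.card pp) 0).sort (· ≤ ·) =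
        List.ofFn f := by
      apply List.Perm.eq_of_pairwise' (Multiset.pairwise_sort _ _) hsorted_ofFn
      rw [← Multiset.coe_eq_coe, Multiset.sort_eq, hμ, ht]
    rw [padFun, hsort_eq]
    have hlt : i.val < (List.ofFn f).length := by rw [List.length_ofFn]; exact i.isLt
    rw [List.getD_eq_getElem _ _ hlt, List.getElem_ofFn]

namespace Uni

abbrev W : Type := Finset ℕ →₀ ℚ

def up (S : Finset ℕ) (i : ℕ) : Finset ℕ := insert (i+1) (S.erase i)
def dn (S : Finset ℕ) (j : ℕ) : Finset ℕ := insert (j-1) (S.erase j)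
def AA (m : ℕ) (S : Finset ℕ) : Finset ℕ := S.filter fun i => i + 1 ∉ S ∧ i < m
def BB (S : Finset ℕ) : Finset ℕ := S.filter fun j => j - 1 ∉ S ∧ 2 ≤ j

lemma mem_AA {m S i} : i ∈ AA m S ↔ i ∈ S ∧ i + 1 ∉ S ∧ i < m := by
  simp [AA, Finset.mem_filter]
lemma mem_BB {S j} : j ∈ BB S ↔ j ∈ S ∧ j - 1 ∉ S ∧ 2 ≤ j := by
  simp [BB, Finset.mem_filter]
lemma mem_up {S i x} : x ∈ up S i ↔ x = i + 1 ∨ (x ∈ S ∧ x ≠ i) := by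
  simp [up, Finset.mem_insert, Finset.mem_erase, and_comm]
lemma mem_dn {S j x} : x ∈ dn S j ↔ x = j - 1 ∨ (x ∈ S ∧ x ≠ j) := by
  simp [dn, Finset.mem_insert, Finset.mem_erase, and_comm]

noncomputable def Xb (m : ℕ) (S : Finset ℕ) : W :=
  ∑ i ∈ AA m S, ((m - i : ℕ) : ℚ) • Finsupp.single (up S i) (1:ℚ)
noncomputable def Yb (S : Finset ℕ) : W :=
  ∑ j ∈ BB S, ((j - 1 : ℕ) : ℚ) • Finsupp.single (dn S j) (1:ℚ)

noncomputable def Xop (m : ℕ) : W →ₗ[ℚ] W :=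
  Finsupp.lsum ℚ fun S => LinearMap.toSpanSingleton ℚ W (Xb m S)
noncomputable def Yop : W →ₗ[ℚ] W :=
  Finsupp.lsum ℚ fun S => LinearMap.toSpanSingleton ℚ W (Yb S)

lemma Xop_single (m : ℕ) (S : Finset ℕ) (c : ℚ) :
    Xop m (Finsupp.single S c) = c • Xb m S := by
  rw [Xop, Finsupp.lsum_single, LinearMap.toSpanSingleton_apply]
lemma Yop_single (S : Finset ℕ) (c : ℚ) :
    Yop (Finsupp.single S c) = c • Yb S := by
  rw [Yop, Finsupp.lsum_single, LinearMap.toSpanSingleton_apply]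

/-! ### canonical description of off-diagonal pairs -/

def Canon (m : ℕ) (S : Finset ℕ) (j i : ℕ) : Prop :=
  i ∈ S ∧ j ∈ S ∧ i + 1 ∉ S ∧ j - 1 ∉ S ∧ 2 ≤ j ∧ i < m ∧
    i + 1 ≠ j - 1 ∧ i ≠ j ∧ i + 1 ≠ j ∧ i ≠ j - 1

lemma canon_left {m : ℕ} {S : Finset ℕ} (hS : S ⊆ Finset.Icc 1 m) {j i : ℕ} :
    (j ∈ BB S ∧ i ∈ (AA m (dn S j)).erase (j-1)) ↔ Canon m S j i := by
  constructor
  · rintro ⟨hj, hi⟩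
    rw [mem_BB] at hj
    obtain ⟨hjS, hjd, hj2⟩ := hj
    rw [Finset.mem_erase, mem_AA] at hi
    obtain ⟨hine, hidn, hi1, him⟩ := hi
    rw [mem_dn] at hidn
    have hiS : i ∈ S ∧ i ≠ j := by
      rcases hidn with h | h
      · exact absurd h hine
      · exact h
    rw [mem_dn] at hi1
    push_neg at hi1
    obtain ⟨hi1a, hi1b⟩ := hi1
    have hi1S : i + 1 ∉ S := by
      by_cases h : i + 1 ∈ S
      · have := hi1b h
        omega
      · exact h
    have hij1 : i + 1 ≠ j := by
      intro h
      exact hine (by omega)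
    exact ⟨hiS.1, hjS, hi1S, hjd, hj2, him, hi1a, hiS.2, hij1, hine⟩
  · rintro ⟨hiS, hjS, hi1S, hjd, hj2, him, hne1, hne2, hne3, hne4⟩
    refine ⟨mem_BB.2 ⟨hjS, hjd, hj2⟩, Finset.mem_erase.2 ⟨hne4, mem_AA.2 ⟨?_, ?_, him⟩⟩⟩
    · exact mem_dn.2 (Or.inr ⟨hiS, hne2⟩)
    · rw [mem_dn]
      push_neg
      exact ⟨hne1, fun h => absurd h hi1S⟩

lemma canon_right {m : ℕ} {S : Finset ℕ} (hS : S ⊆ Finset.Icc 1 m) {j i : ℕ} :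
    (i ∈ AA m S ∧ j ∈ (BB (up S i)).erase (i+1)) ↔ Canon m S j i := by
  constructor
  · rintro ⟨hi, hj⟩
    rw [mem_AA] at hi
    obtain ⟨hiS, hi1S, him⟩ := hi
    rw [Finset.mem_erase, mem_BB] at hj
    obtain ⟨hjne, hjup, hjd, hj2⟩ := hj
    rw [mem_up] at hjup
    have hjS : j ∈ S ∧ j ≠ i := by
      rcases hjup with h | h
      · exact absurd h hjne
      · exact h
    rw [mem_up] at hjd
    push_neg at hjd
    obtain ⟨hjda, hjdb⟩ := hjd
    have hjdS : j - 1 ∉ S := by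
      by_cases h : j - 1 ∈ S
      · have := hjdb h
        omega
      · exact h
    exact ⟨hiS, hjS.1, hi1S, hjdS, hj2, him, fun h => hjda h.symm, fun h => hjS.2 h.symm,
      fun h => hjne h.symm, by intro h; exact hjne (by omega)⟩
  · rintro ⟨hiS, hjS, hi1S, hjd, hj2, him, hne1, hne2, hne3, hne4⟩
    refine ⟨mem_AA.2 ⟨hiS, hi1S, him⟩, Finset.mem_erase.2 ⟨fun h => hne3 h.symm,
      mem_BB.2 ⟨?_, ?_, hj2⟩⟩⟩
    · exact mem_up.2 (Or.inr ⟨hjS, fun h => hne2 h.symm⟩)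
    · rw [mem_up]
      push_neg
      exact ⟨fun h => hne1 h.symm, fun h => absurd h hjd⟩

lemma canon_swap {m : ℕ} {S : Finset ℕ} {j i : ℕ} (h : Canon m S j i) :
    up (dn S j) i = dn (up S i) j := by
  obtain ⟨hiS, hjS, hi1S, hjd, hj2, him, hne1, hne2, hne3, hne4⟩ := h
  ext x
  simp only [mem_up, mem_dn]
  constructor
  · rintro (rfl | ⟨(rfl | ⟨hxS, hxj⟩), hxi⟩)
    · exact Or.inr ⟨Or.inl rfl, fun h => hne3 h⟩
    · exact Or.inl rfl
    · exact Or.inr ⟨Or.inr ⟨hxS, hxi⟩, hxj⟩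
  · rintro (rfl | ⟨(rfl | ⟨hxS, hxi⟩), hxj⟩)
    · exact Or.inr ⟨Or.inl rfl, fun h => hne4 h.symm⟩
    · exact Or.inl rfl
    · exact Or.inr ⟨Or.inr ⟨hxS, hxj⟩, hxi⟩

/-! ### diagonal lemmas -/

lemma diag_mem_A {m : ℕ} {S : Finset ℕ} (hS : S ⊆ Finset.Icc 1 m) {j : ℕ} (hj : j ∈ BB S) :
    j - 1 ∈ AA m (dn S j) := by
  rw [mem_BB] at hj
  obtain ⟨hjS, hjd, hj2⟩ := hj
  have hjm : j ≤ m := (Finset.mem_Icc.1 (hS hjS)).2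
  have h1 : j - 1 + 1 = j := by omega
  refine mem_AA.2 ⟨mem_dn.2 (Or.inl rfl), ?_, by omega⟩
  rw [mem_dn]
  push_neg
  rw [h1]
  exact ⟨by omega, fun _ => rfl⟩

lemma diag_up {S : Finset ℕ} {j : ℕ} (hjS : j ∈ S) (hjd : j - 1 ∉ S) (hj2 : 2 ≤ j) :
    up (dn S j) (j-1) = S := by
  have h1 : j - 1 + 1 = j := by omega
  rw [up, dn, h1, Finset.erase_insert (fun h => hjd (Finset.mem_of_mem_erase h)),
    Finset.insert_erase hjS]

lemma diag_mem_B {m : ℕ} {S : Finset ℕ} (hS : S ⊆ Finset.Icc 1 m) {i : ℕ} (hi : i ∈ AA m S) :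
    i + 1 ∈ BB (up S i) := by
  rw [mem_AA] at hi
  obtain ⟨hiS, hi1S, him⟩ := hi
  have hi1 : 1 ≤ i := (Finset.mem_Icc.1 (hS hiS)).1
  have h1 : i + 1 - 1 = i := by omega
  refine mem_BB.2 ⟨mem_up.2 (Or.inl rfl), ?_, by omega⟩
  rw [mem_up]
  push_neg
  rw [h1]
  exact ⟨by omega, fun _ => rfl⟩

lemma diag_dn {S : Finset ℕ} {i : ℕ} (hiS : i ∈ S) (hi1S : i + 1 ∉ S) :
    dn (up S i) (i+1) = S := by
  have h1 : i + 1 - 1 = i := by omega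
  rw [dn, up, h1, Finset.erase_insert (fun h => hi1S (Finset.mem_of_mem_erase h)),
    Finset.insert_erase hiS]


/-! ### diagonal coefficient sum -/

lemma diag_sum {m : ℕ} {S : Finset ℕ} (hS : S ⊆ Finset.Icc 1 m) :
    (∑ j ∈ BB S, ((j-1:ℕ):ℚ) * ((m-(j-1):ℕ):ℚ))
      - (∑ i ∈ AA m S, ((m-i:ℕ):ℚ) * ((i+1-1:ℕ):ℚ))
    = 2 * ((S.sum id : ℕ) : ℚ) - ((S.card : ℕ) : ℚ) * (m+1) := by
  have hb : ∀ j ∈ S, 1 ≤ j ∧ j ≤ m := fun j hj => Finset.mem_Icc.1 (hS hj)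
  have hF : (∑ j ∈ BB S, ((j-1:ℕ):ℚ) * ((m-(j-1):ℕ):ℚ))
      = ∑ j ∈ S, if j - 1 ∉ S then ((j-1:ℕ):ℚ) * ((m-(j-1):ℕ):ℚ) else 0 := by
    rw [BB, Finset.sum_filter]
    apply Finset.sum_congr rfl
    intro j hj
    have h1 := (hb j hj).1
    by_cases hd : j - 1 ∈ S
    · simp [hd]
    · by_cases h2 : 2 ≤ j
      · simp [hd, h2]
      · have hj1 : j = 1 := by omega
        subst hj1
        simp
  have hG : (∑ i ∈ AA m S, ((m-i:ℕ):ℚ) * ((i+1-1:ℕ):ℚ))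
      = ∑ i ∈ S, if i + 1 ∉ S then ((m-i:ℕ):ℚ) * ((i+1-1:ℕ):ℚ) else 0 := by
    rw [AA, Finset.sum_filter]
    apply Finset.sum_congr rfl
    intro i hi
    have h1 := (hb i hi).2
    by_cases hd : i + 1 ∈ S
    · simp [hd]
    · by_cases h2 : i < m
      · simp [hd, h2]
      · have hi1 : i = m := by omega
        subst hi1
        simp
  have hsplitF : (∑ j ∈ S, ((j-1:ℕ):ℚ) * ((m-(j-1):ℕ):ℚ))
      = (∑ j ∈ S, if j - 1 ∉ S then ((j-1:ℕ):ℚ) * ((m-(j-1):ℕ):ℚ) else 0)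
      + (∑ j ∈ S, if j - 1 ∈ S then ((j-1:ℕ):ℚ) * ((m-(j-1):ℕ):ℚ) else 0) := by
    rw [← Finset.sum_add_distrib]
    apply Finset.sum_congr rfl
    intro j _
    by_cases h : j - 1 ∈ S <;> simp [h]
  have hsplitG : (∑ i ∈ S, ((m-i:ℕ):ℚ) * ((i+1-1:ℕ):ℚ))
      = (∑ i ∈ S, if i + 1 ∉ S then ((m-i:ℕ):ℚ) * ((i+1-1:ℕ):ℚ) else 0)
      + (∑ i ∈ S, if i + 1 ∈ S then ((m-i:ℕ):ℚ) * ((i+1-1:ℕ):ℚ) else 0) := by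
    rw [← Finset.sum_add_distrib]
    apply Finset.sum_congr rfl
    intro i _
    by_cases h : i + 1 ∈ S <;> simp [h]
  have hswap : (∑ j ∈ S, if j - 1 ∈ S then ((j-1:ℕ):ℚ) * ((m-(j-1):ℕ):ℚ) else 0)
      = ∑ i ∈ S, if i + 1 ∈ S then ((m-i:ℕ):ℚ) * ((i+1-1:ℕ):ℚ) else 0 := by
    rw [← Finset.sum_filter, ← Finset.sum_filter]
    apply Finset.sum_nbij' (i := fun j => j - 1) (j := fun i => i + 1)
    · intro j hj
      rw [Finset.mem_filter] at hj ⊢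
      have := (hb j hj.1).1
      have h2 : j - 1 + 1 = j := by omega
      exact ⟨hj.2, by rw [h2]; exact hj.1⟩
    · intro i hi
      rw [Finset.mem_filter] at hi ⊢
      have h2 : i + 1 - 1 = i := by omega
      exact ⟨hi.2, by rw [h2]; exact hi.1⟩
    · intro j hj
      rw [Finset.mem_filter] at hj
      have := (hb j hj.1).1
      omega
    · intro i _
      omega
    · intro j hj
      have h2 : j - 1 + 1 - 1 = j - 1 := by omega
      rw [h2, mul_comm]
  have hcast : (∑ j ∈ S, (((j-1:ℕ):ℚ) * ((m-(j-1):ℕ):ℚ) - ((m-j:ℕ):ℚ) * ((j+1-1:ℕ):ℚ)))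
      = ∑ j ∈ S, (2 * (j:ℚ) - ((m:ℚ)+1)) := by
    apply Finset.sum_congr rfl
    intro j hj
    obtain ⟨h1, h2⟩ := hb j hj
    have c1 : ((j-1:ℕ):ℚ) = (j:ℚ) - 1 := by
      rw [Nat.cast_sub h1]; norm_num
    have c2 : ((m-(j-1):ℕ):ℚ) = (m:ℚ) - ((j:ℚ) - 1) := by
      rw [Nat.cast_sub (by omega), Nat.cast_sub h1]; norm_num
    have c3 : ((m-j:ℕ):ℚ) = (m:ℚ) - (j:ℚ) := by
      rw [Nat.cast_sub h2]
    have c4 : ((j+1-1:ℕ):ℚ) = (j:ℚ) := by norm_num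
    rw [c1, c2, c3, c4]
    ring
  have hfinal : (∑ j ∈ S, (2 * (j:ℚ) - ((m:ℚ)+1)))
      = 2 * ((S.sum id : ℕ) : ℚ) - ((S.card : ℕ) : ℚ) * (m+1) := by
    rw [Finset.sum_sub_distrib, Finset.sum_const, ← Finset.mul_sum]
    have : ((S.sum id : ℕ) : ℚ) = ∑ j ∈ S, (j:ℚ) := by
      rw [Nat.cast_sum]
      rfl
    rw [this, nsmul_eq_mul]
  rw [hF, hG]
  have := hsplitF
  have := hsplitG
  rw [Finset.sum_sub_distrib] at hcast
  linarith [hswap, hcast, hfinal, hsplitF, hsplitG]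

/-! ### the commutator identity on basis vectors -/

lemma comm_single {m : ℕ} {S : Finset ℕ} (hS : S ⊆ Finset.Icc 1 m) :
    Xop m (Yb S) - Yop (Xb m S)
      = (2 * ((S.sum id : ℕ) : ℚ) - ((S.card : ℕ) : ℚ) * (m+1)) • Finsupp.single S (1:ℚ) := by
  have hXY : Xop m (Yb S) =
      (∑ j ∈ BB S, ((j-1:ℕ):ℚ) * ((m-(j-1):ℕ):ℚ)) • Finsupp.single S (1:ℚ)
      + ∑ j ∈ BB S, ∑ i ∈ (AA m (dn S j)).erase (j-1),
          (((j-1:ℕ):ℚ) * ((m-i:ℕ):ℚ)) • Finsupp.single (up (dn S j) i) (1:ℚ) := by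
    rw [Yb, map_sum, Finset.sum_smul, ← Finset.sum_add_distrib]
    apply Finset.sum_congr rfl
    intro j hj
    obtain ⟨hjS, hjd, hj2⟩ := mem_BB.1 hj
    rw [map_smul, Xop_single, one_smul, Xb, ← Finset.add_sum_erase _ _ (diag_mem_A hS hj),
        diag_up hjS hjd hj2, smul_add, smul_smul, Finset.smul_sum]
    congr 1
    apply Finset.sum_congr rfl
    intro i _
    rw [smul_smul]
  have hYX : Yop (Xb m S) =
      (∑ i ∈ AA m S, ((m-i:ℕ):ℚ) * ((i+1-1:ℕ):ℚ)) • Finsupp.single S (1:ℚ)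
      + ∑ i ∈ AA m S, ∑ j ∈ (BB (up S i)).erase (i+1),
          (((m-i:ℕ):ℚ) * ((j-1:ℕ):ℚ)) • Finsupp.single (dn (up S i) j) (1:ℚ) := by
    rw [Xb, map_sum, Finset.sum_smul, ← Finset.sum_add_distrib]
    apply Finset.sum_congr rfl
    intro i hi
    obtain ⟨hiS, hi1S, him⟩ := mem_AA.1 hi
    rw [map_smul, Yop_single, one_smul, Yb, ← Finset.add_sum_erase _ _ (diag_mem_B hS hi),
        diag_dn hiS hi1S, smul_add, smul_smul, Finset.smul_sum]
    congr 1
    apply Finset.sum_congr rfl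
    intro j _
    rw [smul_smul]
  have hoff : (∑ j ∈ BB S, ∑ i ∈ (AA m (dn S j)).erase (j-1),
          (((j-1:ℕ):ℚ) * ((m-i:ℕ):ℚ)) • Finsupp.single (up (dn S j) i) (1:ℚ))
      = ∑ i ∈ AA m S, ∑ j ∈ (BB (up S i)).erase (i+1),
          (((m-i:ℕ):ℚ) * ((j-1:ℕ):ℚ)) • Finsupp.single (dn (up S i) j) (1:ℚ) := by
    rw [Finset.sum_sigma', Finset.sum_sigma']
    apply Finset.sum_nbij' (i := fun p => ⟨p.2, p.1⟩) (j := fun p => ⟨p.2, p.1⟩)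
    · intro p hp
      rw [Finset.mem_sigma] at hp ⊢
      exact (canon_right hS).2 ((canon_left hS).1 ⟨hp.1, hp.2⟩)
    · intro p hp
      rw [Finset.mem_sigma] at hp ⊢
      exact (canon_left hS).2 ((canon_right hS).1 ⟨hp.1, hp.2⟩)
    · intro p _
      rfl
    · intro p _
      rfl
    · intro p hp
      rw [Finset.mem_sigma] at hp
      have hcanon := (canon_left hS).1 ⟨hp.1, hp.2⟩
      rw [mul_comm, canon_swap hcanon]
  rw [hXY, hYX, hoff, add_sub_add_right_eq_sub, ← sub_smul, diag_sum hS]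

/-! ### support lemmas -/

lemma up_mem_DS {ℓ m n : ℕ} {S : Finset ℕ} (hS : S ∈ DS ℓ m n) {i : ℕ} (hi : i ∈ AA m S) :
    up S i ∈ DS ℓ m (n+1) := by
  rw [mem_DS] at hS ⊢
  obtain ⟨hsub, hcard, hsum⟩ := hS
  obtain ⟨hiS, hi1S, him⟩ := mem_AA.1 hi
  have hi1e : i + 1 ∉ S.erase i := fun h => hi1S (Finset.mem_of_mem_erase h)
  have hie : i ∈ S := hiS
  have h1 : 1 ≤ i := (Finset.mem_Icc.1 (hsub hiS)).1
  refine ⟨?_, ?_, ?_⟩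
  · intro x hx
    rcases mem_up.1 hx with rfl | ⟨hxS, _⟩
    · exact Finset.mem_Icc.2 ⟨by omega, by omega⟩
    · exact hsub hxS
  · rw [up, Finset.card_insert_of_notMem hi1e, Finset.card_erase_of_mem hie]
    have : 1 ≤ S.card := Finset.card_pos.2 ⟨i, hie⟩
    omega
  · have he : id i + (S.erase i).sum id = S.sum id := Finset.add_sum_erase S id hie
    rw [id] at he
    rw [up, Finset.sum_insert hi1e]
    show (i + 1) + (S.erase i).sum id = n + 1
    omega

lemma dn_mem_DS {ℓ m n : ℕ} {S : Finset ℕ} (hS : S ∈ DS ℓ m n) {j : ℕ} (hj : j ∈ BB S) :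
    dn S j ∈ DS ℓ m (n-1) := by
  rw [mem_DS] at hS ⊢
  obtain ⟨hsub, hcard, hsum⟩ := hS
  obtain ⟨hjS, hjd, hj2⟩ := mem_BB.1 hj
  have hjde : j - 1 ∉ S.erase j := fun h => hjd (Finset.mem_of_mem_erase h)
  have hjm : j ≤ m := (Finset.mem_Icc.1 (hsub hjS)).2
  refine ⟨?_, ?_, ?_⟩
  · intro x hx
    rcases mem_dn.1 hx with rfl | ⟨hxS, _⟩
    · exact Finset.mem_Icc.2 ⟨by omega, by omega⟩
    · exact hsub hxS
  · rw [dn, Finset.card_insert_of_notMem hjde, Finset.card_erase_of_mem hjS]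
    have : 1 ≤ S.card := Finset.card_pos.2 ⟨j, hjS⟩
    omega
  · have he : id j + (S.erase j).sum id = S.sum id := Finset.add_sum_erase S id hjS
    rw [id] at he
    rw [dn, Finset.sum_insert hjde]
    show (j - 1) + (S.erase j).sum id = n - 1
    omega

lemma Xb_mem {ℓ m n : ℕ} {S : Finset ℕ} (hS : S ∈ DS ℓ m n) :
    Xb m S ∈ Finsupp.supported ℚ ℚ (↑(DS ℓ m (n+1)) : Set (Finset ℕ)) := by
  apply Submodule.sum_mem
  intro i hi
  exact Submodule.smul_mem _ _
    (Finsupp.single_mem_supported ℚ 1 (Finset.mem_coe.2 (up_mem_DS hS hi)))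

lemma Yb_mem {ℓ m n : ℕ} {S : Finset ℕ} (hS : S ∈ DS ℓ m n) :
    Yb S ∈ Finsupp.supported ℚ ℚ (↑(DS ℓ m (n-1)) : Set (Finset ℕ)) := by
  apply Submodule.sum_mem
  intro j hj
  exact Submodule.smul_mem _ _
    (Finsupp.single_mem_supported ℚ 1 (Finset.mem_coe.2 (dn_mem_DS hS hj)))

lemma Xop_mapsTo {ℓ m n : ℕ} :
    ∀ f ∈ Finsupp.supported ℚ ℚ (↑(DS ℓ m n) : Set (Finset ℕ)),
      Xop m f ∈ Finsupp.supported ℚ ℚ (↑(DS ℓ m (n+1)) : Set (Finset ℕ)) := by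
  intro f hf
  have hle : Finsupp.supported ℚ ℚ (↑(DS ℓ m n) : Set (Finset ℕ)) ≤
      Submodule.comap (Xop m) (Finsupp.supported ℚ ℚ (↑(DS ℓ m (n+1)) : Set (Finset ℕ))) := by
    rw [Finsupp.supported_eq_span_single, Submodule.span_le]
    rintro g ⟨a, ha, rfl⟩
    rw [SetLike.mem_coe, Submodule.mem_comap, Xop_single, one_smul]
    exact Xb_mem (Finset.mem_coe.1 ha)
  exact hle hf

lemma Yop_mapsTo {ℓ m n : ℕ} :
    ∀ f ∈ Finsupp.supported ℚ ℚ (↑(DS ℓ m n) : Set (Finset ℕ)),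
      Yop f ∈ Finsupp.supported ℚ ℚ (↑(DS ℓ m (n-1)) : Set (Finset ℕ)) := by
  intro f hf
  have hle : Finsupp.supported ℚ ℚ (↑(DS ℓ m n) : Set (Finset ℕ)) ≤
      Submodule.comap Yop (Finsupp.supported ℚ ℚ (↑(DS ℓ m (n-1)) : Set (Finset ℕ))) := by
    rw [Finsupp.supported_eq_span_single, Submodule.span_le]
    rintro g ⟨a, ha, rfl⟩
    rw [SetLike.mem_coe, Submodule.mem_comap, Yop_single, one_smul]
    exact Yb_mem (Finset.mem_coe.1 ha)
  exact hle hf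

lemma DS_zero_empty {ℓ m : ℕ} {S : Finset ℕ} (hS : S ∈ DS ℓ m 0) : S = ∅ := by
  rw [mem_DS] at hS
  obtain ⟨hsub, _, hsum⟩ := hS
  rw [Finset.eq_empty_iff_forall_notMem]
  intro x hx
  have h1 : 1 ≤ x := (Finset.mem_Icc.1 (hsub hx)).1
  have h2 : x ≤ S.sum id := Finset.single_le_sum (f := id) (fun _ _ => Nat.zero_le _) hx
  omega

lemma Yop_zero_bot {ℓ m : ℕ} :
    ∀ f ∈ Finsupp.supported ℚ ℚ (↑(DS ℓ m 0) : Set (Finset ℕ)), Yop f = 0 := by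
  intro f hf
  have hle : Finsupp.supported ℚ ℚ (↑(DS ℓ m 0) : Set (Finset ℕ)) ≤ LinearMap.ker Yop := by
    rw [Finsupp.supported_eq_span_single, Submodule.span_le]
    rintro g ⟨a, ha, rfl⟩
    rw [SetLike.mem_coe, LinearMap.mem_ker, Yop_single, one_smul]
    have : a = ∅ := DS_zero_empty (Finset.mem_coe.1 ha)
    subst this
    rw [Yb]
    have : BB ∅ = ∅ := by rw [BB]; rfl
    rw [this, Finset.sum_empty]
  exact LinearMap.mem_ker.1 (hle hf)

lemma comm_supported {ℓ m n : ℕ} {f : W}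
    (hf : f ∈ Finsupp.supported ℚ ℚ (↑(DS ℓ m n) : Set (Finset ℕ))) :
    Xop m (Yop f) - Yop (Xop m f) = ((2*n : ℚ) - (ℓ : ℚ)*((m:ℚ)+1)) • f := by
  set c : ℚ := (2*n : ℚ) - (ℓ : ℚ)*((m:ℚ)+1) with hc
  set L : W →ₗ[ℚ] W := (Xop m).comp Yop - Yop.comp (Xop m) - c • LinearMap.id with hL
  have hle : Finsupp.supported ℚ ℚ (↑(DS ℓ m n) : Set (Finset ℕ)) ≤ LinearMap.ker L := by
    rw [Finsupp.supported_eq_span_single, Submodule.span_le]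
    rintro g ⟨a, ha, rfl⟩
    rw [SetLike.mem_coe, LinearMap.mem_ker, hL]
    have haDS := Finset.mem_coe.1 ha
    rw [mem_DS] at haDS
    obtain ⟨hsub, hcard, hsum⟩ := haDS
    simp only [LinearMap.sub_apply, LinearMap.comp_apply, LinearMap.smul_apply,
      LinearMap.id_apply]
    rw [Yop_single, one_smul, Xop_single, one_smul]
    have := comm_single (m := m) (S := a) hsub
    rw [hsum, hcard] at this
    rw [this, hc]
    rw [sub_eq_zero]
  have := LinearMap.mem_ker.1 (hle hf)
  rw [hL] at this
  simp only [LinearMap.sub_apply, LinearMap.comp_apply, LinearMap.smul_apply,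
    LinearMap.id_apply] at this
  rw [sub_eq_zero] at this
  exact this

/-! ### the key induction -/

lemma keyP {ℓ m : ℕ} : ∀ n : ℕ, 2*n < ℓ*(m+1) → ∀ (μ : ℚ), μ ≤ 0 →
    ∀ f ∈ Finsupp.supported ℚ ℚ (↑(DS ℓ m n) : Set (Finset ℕ)),
      Yop (Xop m f) = μ • f → f = 0 := by
  intro n
  induction n using Nat.strong_induction_on with
  | _ n ih =>
    intro hn μ hμ f hf heq
    have hcomm := comm_supported (m := m) hf
    set c : ℚ := (2*n : ℚ) - (ℓ : ℚ)*((m:ℚ)+1) with hcdef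
    have hcneg : c < 0 := by
      have h1 : ((2*n : ℕ) : ℚ) < ((ℓ*(m+1) : ℕ) : ℚ) := by exact_mod_cast hn
      push_cast at h1
      rw [hcdef]
      linarith
    have hXY : Xop m (Yop f) = (μ + c) • f := by
      rw [heq] at hcomm
      rw [sub_eq_iff_eq_add] at hcomm
      rw [hcomm, ← add_smul, add_comm]
    have hμc : μ + c < 0 := by linarith
    by_cases hY : Yop f = 0
    · rw [hY, map_zero] at hXY
      have := hXY.symm
      rcases smul_eq_zero.1 this with h | h
      · exact absurd h (by linarith)
      · exact h
    · exfalso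
      rcases n with _ | k
      · exact hY (Yop_zero_bot f hf)
      · have hYf := Yop_mapsTo (ℓ := ℓ) (m := m) (n := k+1) f hf
        have hk1 : k + 1 - 1 = k := rfl
        rw [hk1] at hYf
        have hYX : Yop (Xop m (Yop f)) = (μ + c) • Yop f := by
          rw [hXY, map_smul]
        exact hY (ih k (by omega) (by omega) (μ + c) hμc.le _ hYf hYX)

/-! ### rank comparison -/

lemma card_le {ℓ m n : ℕ} (hn : 2*n < ℓ*(m+1)) : (DS ℓ m n).card ≤ (DS ℓ m (n+1)).card := by
  classical
  have hmap : ∀ x ∈ Finsupp.supported ℚ ℚ (↑(DS ℓ m n) : Set (Finset ℕ)),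
      Xop m x ∈ Finsupp.supported ℚ ℚ (↑(DS ℓ m (n+1)) : Set (Finset ℕ)) :=
    fun x hx => Xop_mapsTo x hx
  let T : Finsupp.supported ℚ ℚ (↑(DS ℓ m n) : Set (Finset ℕ)) →ₗ[ℚ]
      Finsupp.supported ℚ ℚ (↑(DS ℓ m (n+1)) : Set (Finset ℕ)) := (Xop m).restrict hmap
  have hker : ∀ z : Finsupp.supported ℚ ℚ (↑(DS ℓ m n) : Set (Finset ℕ)), T z = 0 → z = 0 := by
    intro z hz
    have hXz : Xop m (z : W) = 0 := by
      have h1 := Subtype.ext_iff.1 hz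
      rwa [LinearMap.restrict_apply] at h1
    have h0 : Yop (Xop m (z : W)) = (0:ℚ) • (z : W) := by rw [hXz, map_zero, zero_smul]
    have := keyP n hn 0 le_rfl (z : W) z.2 h0
    exact Subtype.ext this
  have hinj : Function.Injective T := by
    rw [← LinearMap.ker_eq_bot]
    rw [Submodule.eq_bot_iff]
    intro z hz
    exact hker z (LinearMap.mem_ker.1 hz)
  have eU := Finsupp.supportedEquivFinsupp (M := ℚ) (R := ℚ) (↑(DS ℓ m n) : Set (Finset ℕ))
  have eV := Finsupp.supportedEquivFinsupp (M := ℚ) (R := ℚ) (↑(DS ℓ m (n+1)) : Set (Finset ℕ))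
  haveI : Module.Finite ℚ ((↥(↑(DS ℓ m (n+1)) : Set (Finset ℕ))) →₀ ℚ) :=
    Module.Finite.equiv (Finsupp.linearEquivFunOnFinite ℚ ℚ _).symm
  haveI : Module.Finite ℚ (Finsupp.supported ℚ ℚ (↑(DS ℓ m (n+1)) : Set (Finset ℕ))) :=
    Module.Finite.equiv eV.symm
  have hrank := LinearMap.finrank_le_finrank_of_injective hinj
  have h1 : Module.finrank ℚ (Finsupp.supported ℚ ℚ (↑(DS ℓ m n) : Set (Finset ℕ)))
      = (DS ℓ m n).card := by
    rw [eU.finrank_eq, Module.finrank_finsupp_self]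
    have : Fintype.card ↥(↑(DS ℓ m n) : Set (Finset ℕ))
        = Fintype.card {x // x ∈ DS ℓ m n} :=
      Fintype.card_congr (Equiv.subtypeEquivRight fun x => Iff.rfl)
    rw [this, Fintype.card_coe]
  haveI fint : Fintype {x // x ∈ DS ℓ m (n+1)} := FinsetCoe.fintype _
  have h2 : Module.finrank ℚ (Finsupp.supported ℚ ℚ (↑(DS ℓ m (n+1)) : Set (Finset ℕ)))
      = (DS ℓ m (n+1)).card := by
    rw [eV.finrank_eq, Module.finrank_finsupp_self]
    have : Fintype.card ↥(↑(DS ℓ m (n+1)) : Set (Finset ℕ))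
        = Fintype.card {x // x ∈ DS ℓ m (n+1)} :=
      Fintype.card_congr (Equiv.subtypeEquivRight fun x => Iff.rfl)
    rw [this, Fintype.card_coe]
  rw [h1, h2] at hrank
  exact hrank

lemma card_incr {ℓ m : ℕ} : ∀ i j : ℕ, i ≤ j → 2*j ≤ ℓ*(m+1) + 1 →
    (DS ℓ m i).card ≤ (DS ℓ m j).card := by
  intro i j hij
  induction j, hij using Nat.le_induction with
  | base => intro _; exact le_rfl
  | succ j hij ih =>
    intro hj
    have h1 : (DS ℓ m i).card ≤ (DS ℓ m j).card := ih (by omega)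
    have h2 : (DS ℓ m j).card ≤ (DS ℓ m (j+1)).card := card_le (by omega)
    omega

end Uni


/-- For `m > ℓ`, the sequence `d_ℓ(ℓ,m), d_{ℓ+1}(ℓ,m), …, d_{mℓ}(ℓ,m)` is symmetric and
unimodal; moreover the bijection `ν ↦ ν + (ℓ, ℓ-1, …, 1)` shows
`d_{n + C(ℓ+1,2)}(ℓ,m) = p_n(ℓ, m-ℓ)`. -/
theorem dCount_symmetric_unimodal (ℓ m : ℕ) (h : ℓ < m) :
    (∀ n, ℓ ≤ n → n ≤ m * ℓ → dCount ℓ m n = dCount ℓ m (m * ℓ + ℓ - n)) ∧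
    (∃ k, (∀ i j, ℓ ≤ i → i ≤ j → j ≤ k → j ≤ m * ℓ → dCount ℓ m i ≤ dCount ℓ m j) ∧
          (∀ i j, k ≤ i → ℓ ≤ i → i ≤ j → j ≤ m * ℓ → dCount ℓ m j ≤ dCount ℓ m i)) ∧
    (∀ n, dCount ℓ m (n + Nat.choose (ℓ + 1) 2) = pCount ℓ (m - ℓ) n) := by
  have hNmul : ℓ * (m+1) = m * ℓ + ℓ := by ring
  refine ⟨?_, ?_, ?_⟩
  · -- symmetry
    intro n hn1 hn2
    rw [dCount_eq, dCount_eq]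
    have hle : n ≤ ℓ * (m+1) := by omega
    have hr := refl_card (ℓ := ℓ) (m := m) (n := n) hle
    have heq : m * ℓ + ℓ - n = ℓ * (m+1) - n := by omega
    rw [heq]
    exact hr
  · -- unimodality
    refine ⟨(ℓ*(m+1)+1)/2, ?_, ?_⟩
    · intro i j hi hij hjk hjm
      rw [dCount_eq, dCount_eq]
      exact Uni.card_incr i j hij (by omega)
    · intro i j hki hli hij hjm
      rw [dCount_eq, dCount_eq]
      have hiN : i ≤ ℓ*(m+1) := by omega
      have hjN : j ≤ ℓ*(m+1) := by omega
      rw [refl_card hiN, refl_card hjN]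
      exact Uni.card_incr _ _ (by omega) (by omega)
  · -- staircase bijection
    intro n
    rw [dCount_eq]
    have hml : (m - ℓ) + ℓ = m := by omega
    have e := ((partMonoEquiv ℓ (m-ℓ) n).trans (monoStrictEquiv ℓ (m-ℓ) n)).trans
      (strictFinsetEquiv ℓ ((m-ℓ)+ℓ) (n + (ℓ+1).choose 2))
    rw [hml] at e
    have hcard := Fintype.card_congr e
    rw [Fintype.card_coe] at hcard
    unfold pCount
    exact hcard.symm
end
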